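/- arXiv:0707.0871 — 7 statements merged into one kernel-verified Lean document; each statement's English description precedes it below -/
import Mathlib

section
/- Let x₀ ∈ ℝ^N with x₀,k ≥ 0 for all k. Then the Euclidean projection of −x₀ onto S — that is, the unique x* ∈ S minimizing ‖x − (−x₀)‖₂ over x ∈ S — is given componentwise by x*_k = [μ − x₀,k]₀^{p^max(k)} for all k ∈ {1,…,N}, for some μ > 0 chosen so that (1/N)·Σ_{k=1}^N x*_k = 1. -/
open Finset

noncomputable section

/-- Squared Euclidean distance between two vectors of `ℝ^N`. -/
def dsq {N : ℕ} (x y : Fin N → ℝ) : ℝ := ∑ k, (x k - y k) ^ 2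

/-- The admissible set `S` with per-component caps `pmax`. -/
def stratSet {N : ℕ} (pmax : Fin N → ℝ) : Set (Fin N → ℝ) :=
  {p | (1 / (N : ℝ)) * ∑ k, p k = 1 ∧ ∀ k, 0 ≤ p k ∧ p k ≤ pmax k}

/-- `x` is a Euclidean projection of `z` onto `S` (a minimizer of the Euclidean distance). -/
def IsProjOn {N : ℕ} (S : Set (Fin N → ℝ)) (z x : Fin N → ℝ) : Prop :=
  x ∈ S ∧ ∀ y ∈ S, dsq x z ≤ dsq y z

/-- The Euclidean projection of `-x₀` onto the simplex `S` is the
componentwise clamp `[μ - x₀ₖ]₀^{pmax k}` for some `μ > 0` chosen so that the power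
constraint holds with equality. -/
theorem statement0 {N : ℕ} (hN : 1 ≤ N) (pmax : Fin N → ℝ)
    (hpmax : ∀ k, 0 ≤ pmax k) (hcap : 1 < (1 / (N : ℝ)) * ∑ k, pmax k)
    (x0 : Fin N → ℝ) (hx0 : ∀ k, 0 ≤ x0 k) :
    ∃ μ : ℝ, 0 < μ ∧
      (1 / (N : ℝ)) * ∑ k, min (pmax k) (max 0 (μ - x0 k)) = 1 ∧
      IsProjOn (stratSet pmax) (fun k => -x0 k)
        (fun k => min (pmax k) (max 0 (μ - x0 k))) ∧
      ∀ y, IsProjOn (stratSet pmax) (fun k => -x0 k) y →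
        y = fun k => min (pmax k) (max 0 (μ - x0 k)) := by
  have hN0 : (0 : ℝ) < N := by exact_mod_cast Nat.lt_of_lt_of_le Nat.zero_lt_one hN
  set f : ℝ → ℝ := fun μ => ∑ k, min (pmax k) (max 0 (μ - x0 k)) with hfdef
  have hcont : Continuous f := by
    apply continuous_finset_sum
    intro k _
    exact continuous_const.min (continuous_const.max (continuous_id.sub continuous_const))
  have hf0 : f 0 = 0 := by
    apply Finset.sum_eq_zero
    intro k _
    rw [max_eq_left (by linarith [hx0 k]), min_eq_right (hpmax k)]
  set M : ℝ := 1 + ∑ k, (pmax k + x0 k) with hMdef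
  have hM0 : (0 : ℝ) ≤ M := by
    have : (0:ℝ) ≤ ∑ k, (pmax k + x0 k) :=
      Finset.sum_nonneg fun k _ => add_nonneg (hpmax k) (hx0 k)
    linarith
  have hfM : f M = ∑ k, pmax k := by
    apply Finset.sum_congr rfl
    intro k _
    have h1 : pmax k + x0 k ≤ ∑ j, (pmax j + x0 j) :=
      Finset.single_le_sum (fun j _ => add_nonneg (hpmax j) (hx0 j)) (mem_univ k)
    rw [max_eq_right (by linarith [hpmax k, hx0 k]), min_eq_left (by linarith)]
  have hsumN : (N : ℝ) < ∑ k, pmax k := by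
    rw [one_div, inv_mul_eq_div, lt_div_iff₀ hN0, one_mul] at hcap
    exact hcap
  have hNmem : (N : ℝ) ∈ Set.Icc (f 0) (f M) := by
    rw [hf0, hfM]; exact ⟨le_of_lt hN0, le_of_lt hsumN⟩
  obtain ⟨μ, hμmem, hμ⟩ := intermediate_value_Icc hM0 hcont.continuousOn hNmem
  set x : Fin N → ℝ := fun k => min (pmax k) (max 0 (μ - x0 k)) with hxdef
  have hfμ : ∑ k, x k = (N : ℝ) := hμ
  have hμpos : 0 < μ := by
    rcases lt_or_eq_of_le hμmem.1 with h | h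
    · exact h
    · exfalso; rw [← h, hf0] at hμ; linarith
  have hxsum : (1 / (N : ℝ)) * ∑ k, x k = 1 := by
    rw [hfμ]; field_simp
  have hxmem : x ∈ stratSet pmax := by
    refine ⟨hxsum, fun k => ⟨le_min (hpmax k) (le_max_left 0 _), min_le_left _ _⟩⟩
  -- key variational inequality
  have key : ∀ y ∈ stratSet pmax,
      dsq x (fun k => -x0 k) + ∑ k, (y k - x k) ^ 2 ≤ dsq y (fun k => -x0 k) := by
    intro y hy
    have hysum : ∑ k, y k = (N : ℝ) := by
      have h := hy.1
      field_simp at h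
      linarith
    have pointwise : ∀ k, 0 ≤ (y k - x k) * (x k + x0 k - μ) := by
      intro k
      obtain ⟨hy0, hyp⟩ := hy.2 k
      rcases le_or_gt μ (x0 k) with h1 | h1
      · have hx_eq : x k = 0 := by
          simp only [hxdef]
          rw [max_eq_left (by linarith), min_eq_right (hpmax k)]
        rw [hx_eq]
        have : 0 ≤ x0 k - μ := by linarith
        nlinarith
      · rcases le_or_gt (pmax k) (μ - x0 k) with h2 | h2
        · have hx_eq : x k = pmax k := by
            simp only [hxdef]
            rw [max_eq_right (by linarith), min_eq_left h2]
          rw [hx_eq]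
          nlinarith
        · have hx_eq : x k = μ - x0 k := by
            simp only [hxdef]
            rw [max_eq_right (by linarith), min_eq_right (le_of_lt h2)]
          rw [hx_eq]
          ring_nf
          nlinarith
    have expand : dsq y (fun k => -x0 k)
        = dsq x (fun k => -x0 k) + ∑ k, (y k - x k) ^ 2
          + 2 * ∑ k, (y k - x k) * (x k + x0 k - μ)
          + 2 * μ * ((∑ k, y k) - ∑ k, x k) := by
      simp only [dsq, Finset.mul_sum, ← Finset.sum_add_distrib, ← Finset.sum_sub_distrib]
      apply Finset.sum_congr rfl
      intro k _
      ring
    rw [expand, hysum, hfμ]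
    have hsnn : 0 ≤ ∑ k, (y k - x k) * (x k + x0 k - μ) :=
      Finset.sum_nonneg fun k _ => pointwise k
    nlinarith
  refine ⟨μ, hμpos, hxsum, ⟨hxmem, fun y hy => ?_⟩, fun y hy => ?_⟩
  · have := key y hy
    have hnn : 0 ≤ ∑ k, (y k - x k) ^ 2 := Finset.sum_nonneg fun k _ => sq_nonneg _
    linarith
  · have h1 := hy.2 x hxmem
    have h2 := key y hy.1
    have hnn : 0 ≤ ∑ k, (y k - x k) ^ 2 := Finset.sum_nonneg fun k _ => sq_nonneg _
    have hzero : ∑ k, (y k - x k) ^ 2 = 0 := le_antisymm (by linarith) hnn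
    funext k
    have := (Finset.sum_eq_zero_iff_of_nonneg (fun k _ => sq_nonneg (y k - x k))).mp hzero k (mem_univ k)
    have : y k - x k = 0 := by nlinarith [this]
    have : y k = x k := by linarith
    exact this
end
end

section
/- Let σ_k² ≥ 0 and |H(k)|² > 0 for k ∈ {1,…,N}, set insr_k = σ_k²/|H(k)|², and let w ∈ ℝ^N with w_k > 0 for all k. Then the projection of −insr onto S with respect to the weighted Euclidean norm ‖x‖_{2,w} = (Σ_{k=1}^N w_k·x_k²)^{1/2} — that is, the unique x* ∈ S minimizing Σ_{k=1}^N w_k·(x_k + insr_k)² over x ∈ S — is given componentwise by x*_k = [μ/w_k − insr_k]₀^{p^max(k)} for all k, for some μ > 0 chosen so that (1/N)·Σ_{k=1}^N x*_k = 1. -/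
open Finset

noncomputable section

/-- The projection of `-insr` onto the simplex `S` with respect to the
`w`-weighted Euclidean norm is the componentwise clamp `[μ/wₖ - insrₖ]₀^{pmax k}` for
some `μ > 0` chosen so that the power constraint holds with equality. -/
theorem statement1 {N : ℕ} (hN : 1 ≤ N) (pmax : Fin N → ℝ)
    (hpmax : ∀ k, 0 ≤ pmax k) (hcap : 1 < (1 / (N : ℝ)) * ∑ k, pmax k)
    (σsq Hsq : Fin N → ℝ) (hσ : ∀ k, 0 ≤ σsq k) (hHsq : ∀ k, 0 < Hsq k)
    (w : Fin N → ℝ) (hw : ∀ k, 0 < w k) :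
    ∃ μ : ℝ, 0 < μ ∧
      (1 / (N : ℝ)) * ∑ k, min (pmax k) (max 0 (μ / w k - σsq k / Hsq k)) = 1 ∧
      (fun k => min (pmax k) (max 0 (μ / w k - σsq k / Hsq k))) ∈ stratSet pmax ∧
      (∀ y ∈ stratSet pmax,
        ∑ k, w k * (min (pmax k) (max 0 (μ / w k - σsq k / Hsq k)) + σsq k / Hsq k) ^ 2 ≤
          ∑ k, w k * (y k + σsq k / Hsq k) ^ 2) ∧
      ∀ y ∈ stratSet pmax,
        (∀ z ∈ stratSet pmax,
          ∑ k, w k * (y k + σsq k / Hsq k) ^ 2 ≤ ∑ k, w k * (z k + σsq k / Hsq k) ^ 2) →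
        y = fun k => min (pmax k) (max 0 (μ / w k - σsq k / Hsq k)) := by
  have hN0 : (0:ℝ) < N := by
    have : (1:ℝ) ≤ N := by exact_mod_cast hN
    linarith
  set insr : Fin N → ℝ := fun k => σsq k / Hsq k with hinsr
  have hinsr0 : ∀ k, 0 ≤ insr k := fun k => div_nonneg (hσ k) (hHsq k).le
  set f : ℝ → ℝ := fun μ => (1 / (N : ℝ)) * ∑ k, min (pmax k) (max 0 (μ / w k - insr k))
    with hf
  have hfc : Continuous f := by
    apply continuous_const.mul
    apply continuous_finset_sum
    intro k _
    exact continuous_const.min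
      (continuous_const.max ((continuous_id.div_const (w k)).sub continuous_const))
  have hf0 : f 0 = 0 := by
    have : ∀ k : Fin N, min (pmax k) (max 0 ((0:ℝ) / w k - insr k)) = 0 := by
      intro k
      have h1 : (0:ℝ) / w k - insr k ≤ 0 := by
        rw [zero_div]; linarith [hinsr0 k]
      rw [max_eq_left h1, min_eq_right (hpmax k)]
    simp only [hf, this, Finset.sum_const_zero, mul_zero]
  set M : ℝ := 1 + ∑ k, w k * (pmax k + insr k) with hM
  have hMsum : (0:ℝ) ≤ ∑ k, w k * (pmax k + insr k) :=
    Finset.sum_nonneg fun k _ =>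
      mul_nonneg (hw k).le (by linarith [hpmax k, hinsr0 k])
  have hM0 : (0:ℝ) ≤ M := by simp only [hM]; linarith
  have hfM : 1 < f M := by
    have hterm : ∀ k : Fin N, min (pmax k) (max 0 (M / w k - insr k)) = pmax k := by
      intro k
      have h1 : w k * (pmax k + insr k) ≤ M := by
        have := Finset.single_le_sum
          (f := fun k => w k * (pmax k + insr k))
          (fun j _ => mul_nonneg (hw j).le (by linarith [hpmax j, hinsr0 j]))
          (Finset.mem_univ k)
        simp only [hM]; linarith
      have h2 : pmax k + insr k ≤ M / w k := by
        rw [le_div_iff₀ (hw k)]; nlinarith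
      have h3 : pmax k ≤ M / w k - insr k := by linarith
      have h4 : (0:ℝ) ≤ M / w k - insr k := le_trans (hpmax k) h3
      rw [max_eq_right h4, min_eq_left h3]
    calc 1 < (1 / (N:ℝ)) * ∑ k, pmax k := hcap
    _ = f M := by simp only [hf, hterm]
  obtain ⟨μ, hμmem, hμeq⟩ : ∃ μ ∈ Set.Icc (0:ℝ) M, f μ = 1 := by
    have := intermediate_value_Icc hM0 hfc.continuousOn
    have h1 : (1:ℝ) ∈ Set.Icc (f 0) (f M) := ⟨by rw [hf0]; norm_num, hfM.le⟩
    exact this h1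
  have hμpos : 0 < μ := by
    rcases lt_or_eq_of_le hμmem.1 with h | h
    · exact h
    · exfalso; rw [← h, hf0] at hμeq; norm_num at hμeq
  set x : Fin N → ℝ := fun k => min (pmax k) (max 0 (μ / w k - insr k)) with hx
  have hxeq : (1 / (N : ℝ)) * ∑ k, x k = 1 := hμeq
  have hxS : x ∈ stratSet pmax :=
    ⟨hxeq, fun k => ⟨le_min (hpmax k) (le_max_left 0 _), min_le_left _ _⟩⟩
  -- variational inequality, pointwise
  have hvar : ∀ y ∈ stratSet pmax, ∀ k,
      μ * (y k - x k) ≤ w k * (x k + insr k) * (y k - x k) := by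
    intro y hy k
    obtain ⟨hy0, hyp⟩ := hy.2 k
    rcases le_or_gt (μ / w k - insr k) 0 with h | h
    · have hxk : x k = 0 := by
        rw [hx]; simp only
        rw [max_eq_left h, min_eq_right (hpmax k)]
      have hμle : μ ≤ w k * insr k := by
        have := (div_le_iff₀ (hw k)).mp (by linarith : μ / w k ≤ insr k)
        nlinarith
      rw [hxk]
      nlinarith
    · rcases le_or_gt (μ / w k - insr k) (pmax k) with h2 | h2
      · have hxk : x k = μ / w k - insr k := by
          rw [hx]; simp only
          rw [max_eq_right h.le, min_eq_right h2]
        have hwk : w k * (x k + insr k) = μ := by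
          rw [hxk, sub_add_cancel, mul_div_cancel₀ _ (hw k).ne']
        rw [hwk]
      · have hxk : x k = pmax k := by
          rw [hx]; simp only
          rw [max_eq_right h.le, min_eq_left h2.le]
        have hge : w k * (pmax k + insr k) < μ := by
          have := (lt_div_iff₀ (hw k)).mp (by linarith : pmax k + insr k < μ / w k)
          nlinarith
        rw [hxk]
        nlinarith
  -- summed variational inequality
  have hkey : ∀ y ∈ stratSet pmax, 0 ≤ ∑ k, w k * (x k + insr k) * (y k - x k) := by
    intro y hy
    have hsum : ∑ k, (y k - x k) = 0 := by
      rw [Finset.sum_sub_distrib]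
      have h1 : ∑ k, y k = (N : ℝ) := by
        have := hy.1
        field_simp at this
        linarith
      have h2 : ∑ k, x k = (N : ℝ) := by
        field_simp at hxeq
        linarith
      rw [h1, h2, sub_self]
    have h3 : ∑ k, μ * (y k - x k) = 0 := by
      rw [← Finset.mul_sum, hsum, mul_zero]
    calc (0:ℝ) = ∑ k, μ * (y k - x k) := h3.symm
    _ ≤ ∑ k, w k * (x k + insr k) * (y k - x k) :=
        Finset.sum_le_sum fun k _ => hvar y hy k
  -- expansion identity
  have hid : ∀ y : Fin N → ℝ,
      ∑ k, w k * (y k + insr k) ^ 2 =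
        ∑ k, w k * (x k + insr k) ^ 2 + (∑ k, w k * (y k - x k) ^ 2 +
          2 * ∑ k, w k * (x k + insr k) * (y k - x k)) := by
    intro y
    rw [Finset.mul_sum, ← Finset.sum_add_distrib, ← Finset.sum_add_distrib]
    exact Finset.sum_congr rfl fun k _ => by ring
  have hopt : ∀ y ∈ stratSet pmax,
      ∑ k, w k * (x k + insr k) ^ 2 ≤ ∑ k, w k * (y k + insr k) ^ 2 := by
    intro y hy
    have h1 := hkey y hy
    have h2 : 0 ≤ ∑ k, w k * (y k - x k) ^ 2 :=
      Finset.sum_nonneg fun k _ => mul_nonneg (hw k).le (sq_nonneg _)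
    rw [hid y]
    linarith
  refine ⟨μ, hμpos, hμeq, hxS, hopt, ?_⟩
  intro y hy hymin
  have h1 : ∑ k, w k * (y k + insr k) ^ 2 ≤ ∑ k, w k * (x k + insr k) ^ 2 :=
    hymin x hxS
  have h2 := hopt y hy
  have heq : ∑ k, w k * (y k + insr k) ^ 2 = ∑ k, w k * (x k + insr k) ^ 2 :=
    le_antisymm h1 h2
  have h3 := hid y
  rw [heq] at h3
  have h4 := hkey y hy
  have h5 : ∑ k, w k * (y k - x k) ^ 2 ≤ 0 := by linarith
  have h6 : ∑ k, w k * (y k - x k) ^ 2 = 0 :=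
    le_antisymm h5 (Finset.sum_nonneg fun k _ => mul_nonneg (hw k).le (sq_nonneg _))
  have h7 : ∀ k ∈ Finset.univ, w k * (y k - x k) ^ 2 = 0 :=
    (Finset.sum_eq_zero_iff_of_nonneg
      (fun k _ => mul_nonneg (hw k).le (sq_nonneg _))).mp h6
  funext k
  have := h7 k (Finset.mem_univ k)
  have h8 : (y k - x k) ^ 2 = 0 := by
    rcases mul_eq_zero.mp this with h | h
    · exact absurd h (hw k).ne'
    · exact h
  have h9 : y k = x k := by nlinarith [sq_nonneg (y k - x k)]
  exact h9
end
end

section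
/- For every user q and every p_{-q} ∈ 𝒫_{-q}, there exists μ_q > 0 such that for every k ∈ {1,…,N}: [WF_q(p_{-q})]_k = [μ_q − Γ_q·(1 + Σ_{r≠q} |H_rq(k)|²·p_r(k))/|H_qq(k)|²]₀^{p_q^max(k)}, and (1/N)·Σ_{k=1}^N [WF_q(p_{-q})]_k = 1. -/
open Finset
open scoped Classical

noncomputable section

/-- The interference-plus-noise-to-signal vector `insr_q(p_{-q})`
(it only depends on the components `p r` for `r ≠ q`). -/
def insr {N Q : ℕ} (H : Fin Q → Fin Q → Fin N → ℝ) (Γ : Fin Q → ℝ)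
    (q : Fin Q) (p : Fin Q → Fin N → ℝ) : Fin N → ℝ :=
  fun k => Γ q * (1 + ∑ r ∈ Finset.univ.erase q, H r q k * p r k) / H q q k

/-- `WF` is a waterfilling operator: whenever the other users' strategies are feasible,
`WF q p` is the Euclidean projection of `-insr_q(p_{-q})` onto user `q`'s strategy set. -/
def IsWF {N Q : ℕ} (H : Fin Q → Fin Q → Fin N → ℝ) (Γ : Fin Q → ℝ)
    (pmax : Fin Q → Fin N → ℝ)
    (WF : Fin Q → (Fin Q → Fin N → ℝ) → Fin N → ℝ) : Prop :=
  ∀ q (p : Fin Q → Fin N → ℝ), (∀ r, r ≠ q → p r ∈ stratSet (pmax r)) →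
    IsProjOn (stratSet (pmax q)) (fun k => -insr H Γ q p k) (WF q p)

/-- The rate `R_q(p)` of user `q`. -/
def rate {N Q : ℕ} (H : Fin Q → Fin Q → Fin N → ℝ) (Γ : Fin Q → ℝ)
    (q : Fin Q) (p : Fin Q → Fin N → ℝ) : ℝ :=
  (1 / (N : ℝ)) * ∑ k, Real.log (1 + H q q k * p q k /
      (Γ q * (1 + ∑ r ∈ Finset.univ.erase q, H r q k * p r k)))

/-- `pstar` is a Nash equilibrium of the rate game `𝒢`. -/
def IsNE {N Q : ℕ} (H : Fin Q → Fin Q → Fin N → ℝ) (Γ : Fin Q → ℝ)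
    (pmax : Fin Q → Fin N → ℝ) (pstar : Fin Q → Fin N → ℝ) : Prop :=
  (∀ q, pstar q ∈ stratSet (pmax q)) ∧
    ∀ q, ∀ x ∈ stratSet (pmax q),
      rate H Γ q (Function.update pstar q x) ≤ rate H Γ q pstar

/-- The set `D_q` of carriers that user `q` may use in some best response. -/
def Dset {N Q : ℕ} (pmax : Fin Q → Fin N → ℝ)
    (WF : Fin Q → (Fin Q → Fin N → ℝ) → Fin N → ℝ) (q : Fin Q) : Set (Fin N) :=
  {k | ∃ p : Fin Q → Fin N → ℝ,
    (∀ r, r ≠ q → p r ∈ stratSet (pmax r)) ∧ WF q p k ≠ 0}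

/-- `max_{k ∈ D_q ∩ D_r} |H_rq(k)|² / |H_qq(k)|²`, with the convention that it is `0`
when `D_q ∩ D_r = ∅` (via `Real.sSup_empty`). -/
def maxRatio {N Q : ℕ} (H : Fin Q → Fin Q → Fin N → ℝ) (pmax : Fin Q → Fin N → ℝ)
    (WF : Fin Q → (Fin Q → Fin N → ℝ) → Fin N → ℝ) (q r : Fin Q) : ℝ :=
  sSup {x : ℝ | ∃ k : Fin N,
    (k ∈ Dset pmax WF q ∧ k ∈ Dset pmax WF r) ∧ x = H r q k / H q q k}

/-- The matrix `H^max`. -/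
def Hmax {N Q : ℕ} (H : Fin Q → Fin Q → Fin N → ℝ) (Γ : Fin Q → ℝ)
    (pmax : Fin Q → Fin N → ℝ)
    (WF : Fin Q → (Fin Q → Fin N → ℝ) → Fin N → ℝ) : Matrix (Fin Q) (Fin Q) ℝ :=
  Matrix.of fun q r => if q = r then 0 else Γ q * maxRatio H pmax WF q r

/-- The matrix `H(k)`. -/
def Hmat {N Q : ℕ} (H : Fin Q → Fin Q → Fin N → ℝ) (Γ : Fin Q → ℝ)
    (pmax : Fin Q → Fin N → ℝ)
    (WF : Fin Q → (Fin Q → Fin N → ℝ) → Fin N → ℝ) (k : Fin N) :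
    Matrix (Fin Q) (Fin Q) ℝ :=
  Matrix.of fun q r =>
    if q ≠ r ∧ k ∈ Dset pmax WF q ∧ k ∈ Dset pmax WF r then
      Γ q * H r q k / H q q k
    else 0

/-- The spectral radius of a real square matrix: the maximum modulus of its complex
eigenvalues (the roots of its characteristic polynomial over `ℂ`). -/
def specRad {n : ℕ} (A : Matrix (Fin n) (Fin n) ℝ) : ℝ :=
  sSup {x : ℝ | ∃ μ : ℂ,
    ((A.map (fun a => (a : ℂ))).charpoly).IsRoot μ ∧ x = ‖μ‖}

/-- The spectral norm `‖A‖₂ = ρ(AᵀA)^{1/2}` of a real square matrix. -/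
def specNorm {n : ℕ} (A : Matrix (Fin n) (Fin n) ℝ) : ℝ :=
  Real.sqrt (specRad (A.transpose * A))

/-- Euclidean distance between strategy profiles, viewed as vectors of `ℝ^{QN}`. -/
def profDist {N Q : ℕ} (p p' : Fin Q → Fin N → ℝ) : ℝ :=
  Real.sqrt (∑ q, ∑ k, (p q k - p' q k) ^ 2)

/-- The effective strategy set `𝒫_q^eff`. -/
def effSet {N Q : ℕ} (pmax : Fin Q → Fin N → ℝ)
    (WF : Fin Q → (Fin Q → Fin N → ℝ) → Fin N → ℝ) (q : Fin Q) : Set (Fin N → ℝ) :=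
  {p | p ∈ stratSet (pmax q) ∧ ∀ k, k ∉ Dset pmax WF q → p k = 0}

/-- The gradient `∇_q R_q(p)` of the rate of user `q` with respect to its own powers. -/
def gradR {N Q : ℕ} (H : Fin Q → Fin Q → Fin N → ℝ) (Γ : Fin Q → ℝ)
    (q : Fin Q) (p : Fin Q → Fin N → ℝ) : Fin N → ℝ :=
  fun k => (1 / (N : ℝ)) * H q q k /
    (Γ q * (1 + ∑ r ∈ Finset.univ.erase q, H r q k * p r k) + H q q k * p q k)

/-- `x` is a projection of `z` onto `S` with respect to the quadratic form of the
(symmetric positive definite) matrix `G`, i.e. a minimizer of `(x-z)ᵀ G (x-z)` over `S`. -/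
def IsGProj {N : ℕ} (G : Matrix (Fin N) (Fin N) ℝ) (S : Set (Fin N → ℝ))
    (z x : Fin N → ℝ) : Prop :=
  x ∈ S ∧ ∀ y ∈ S,
    dotProduct (fun i => x i - z i) (G.mulVec (fun i => x i - z i)) ≤
      dotProduct (fun i => y i - z i) (G.mulVec (fun i => y i - z i))

/-- The multiuser waterfilling solution is a clamped waterfilling formula
with a positive water level, and it saturates the power constraint. -/
theorem statement2 {N Q : ℕ} (hN : 1 ≤ N) (hQ : 2 ≤ Q)
    (H : Fin Q → Fin Q → Fin N → ℝ) (Γ : Fin Q → ℝ) (pmax : Fin Q → Fin N → ℝ)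
    (hH : ∀ r q k, 0 ≤ H r q k) (hHqq : ∀ q k, 0 < H q q k)
    (hΓ : ∀ q, 0 < Γ q) (hpmax : ∀ q k, 0 ≤ pmax q k)
    (hcap : ∀ q, 1 < (1 / (N : ℝ)) * ∑ k, pmax q k)
    (WF : Fin Q → (Fin Q → Fin N → ℝ) → Fin N → ℝ) (hWF : IsWF H Γ pmax WF)
    (q : Fin Q) (p : Fin Q → Fin N → ℝ)
    (hp : ∀ r, r ≠ q → p r ∈ stratSet (pmax r)) :
    ∃ μ : ℝ, 0 < μ ∧
      (∀ k, WF q p k = min (pmax q k) (max 0 (μ - insr H Γ q p k))) ∧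
      (1 / (N : ℝ)) * ∑ k, WF q p k = 1 := by

  obtain ⟨hxS, hmin⟩ := hWF q p hp
  set x : Fin N → ℝ := WF q p with hxdef
  set I : Fin N → ℝ := insr H Γ q p with hIdef
  obtain ⟨hsum1, hbounds⟩ := hxS
  have hN1 : (1:ℝ) ≤ (N:ℝ) := by exact_mod_cast hN
  have hNpos : (0:ℝ) < N := lt_of_lt_of_le one_pos hN1
  have hIpos : ∀ k, 0 < I k := by
    intro k
    have hsnn : 0 ≤ ∑ r ∈ Finset.univ.erase q, H r q k * p r k := by
      apply Finset.sum_nonneg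
      intro r hr
      exact mul_nonneg (hH r q k) ((hp r (Finset.ne_of_mem_erase hr)).2 k).1
    have : I k = Γ q * (1 + ∑ r ∈ Finset.univ.erase q, H r q k * p r k) / H q q k := rfl
    rw [this]
    exact div_pos (mul_pos (hΓ q) (by linarith)) (hHqq q k)
  -- variational exchange inequality
  have key : ∀ j l : Fin N, x j < pmax q j → 0 < x l → x l + I l ≤ x j + I j := by
    intro j l hj hl
    by_cases hjl : j = l
    · subst hjl; exact le_refl _
    apply le_of_forall_pos_le_add
    intro ε hε
    set ε' : ℝ := min ε (min (pmax q j - x j) (x l)) with hε'def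
    have hε'pos : 0 < ε' := lt_min hε (lt_min (by linarith) hl)
    have hε'j : ε' ≤ pmax q j - x j := le_trans (min_le_right _ _) (min_le_left _ _)
    have hε'l : ε' ≤ x l := le_trans (min_le_right _ _) (min_le_right _ _)
    have hε'ε : ε' ≤ ε := min_le_left _ _
    set y : Fin N → ℝ := fun i =>
      x i + ε' * ((if i = j then 1 else 0) - (if i = l then 1 else 0)) with hydef
    have hyS : y ∈ stratSet (pmax q) := by
      constructor
      · have : ∑ i, y i = ∑ i, x i := by
          simp [hydef, Finset.sum_add_distrib, mul_sub, Finset.mul_sum,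
            Finset.sum_sub_distrib, Finset.sum_ite_eq']
        rw [this]; exact hsum1
      · intro i
        by_cases hij : i = j
        · subst hij
          have : y i = x i + ε' := by simp [hydef, hjl]
          rw [this]
          exact ⟨by have := (hbounds i).1; linarith, by linarith⟩
        by_cases hil : i = l
        · subst hil
          have : y i = x i - ε' := by simp [hydef, hij]; ring
          rw [this]
          exact ⟨by linarith, by have := (hbounds i).2; linarith⟩
        · have : y i = x i := by simp [hydef, hij, hil]
          rw [this]; exact hbounds i
    have hle := hmin y hyS
    have hdiff : dsq y (fun k => -insr H Γ q p k) - dsq x (fun k => -insr H Γ q p k)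
        = (2 * ε' * (x j + I j) + ε' ^ 2) + (-(2 * ε' * (x l + I l)) + ε' ^ 2) := by
      unfold dsq
      rw [← Finset.sum_sub_distrib]
      rw [Finset.sum_eq_add j l hjl]
      · have h1 : y j = x j + ε' := by simp [hydef, hjl]
        have h2 : y l = x l - ε' := by simp [hydef, Ne.symm hjl]; ring
        rw [h1, h2]
        have : insr H Γ q p j = I j := rfl
        have : insr H Γ q p l = I l := rfl
        show (x j + ε' - -I j) ^ 2 - (x j - -I j) ^ 2
            + ((x l - ε' - -I l) ^ 2 - (x l - -I l) ^ 2) = _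
        ring
      · intro c _ hc
        have h3 : y c = x c := by simp [hydef, hc.1, hc.2]
        rw [h3]; ring
      · intro h; exact absurd (Finset.mem_univ j) h
      · intro h; exact absurd (Finset.mem_univ l) h
    have h0 : 0 ≤ (2 * ε' * (x j + I j) + ε' ^ 2) + (-(2 * ε' * (x l + I l)) + ε' ^ 2) := by
      rw [← hdiff]; linarith
    nlinarith [sq_nonneg ε', mul_pos hε'pos hε'pos]
  -- total power equals N
  have hsumx : ∑ k, x k = N := by
    have := hsum1
    field_simp at this
    linarith
  -- existence of a carrier with slack
  have hA : ∃ j, x j < pmax q j := by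
    by_contra hcon
    push_neg at hcon
    have hle : ∑ k, pmax q k ≤ ∑ k, x k := Finset.sum_le_sum fun k _ => hcon k
    have h1N : 0 < 1 / (N:ℝ) := by positivity
    have h2 := mul_le_mul_of_nonneg_left hle (le_of_lt h1N)
    have h3 := hcap q
    linarith
  -- existence of an active carrier
  have hB : ∃ l, 0 < x l := by
    by_contra hcon
    push_neg at hcon
    have : ∑ k, x k = 0 := Finset.sum_eq_zero fun k _ => le_antisymm (hcon k) (hbounds k).1
    rw [this] at hsumx
    linarith
  obtain ⟨j0, hj0⟩ := hA
  obtain ⟨l0, hl0⟩ := hB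
  set A : Finset (Fin N) := Finset.univ.filter (fun j => x j < pmax q j) with hAdef
  have hAne : A.Nonempty := ⟨j0, by simp [hAdef, hj0]⟩
  set μ : ℝ := A.inf' hAne (fun j => x j + I j) with hμdef
  have hμ_le : ∀ j, x j < pmax q j → μ ≤ x j + I j := fun j hj =>
    Finset.inf'_le _ (by simp [hAdef, hj])
  have h_le_μ : ∀ l, 0 < x l → x l + I l ≤ μ := by
    intro l hl
    apply Finset.le_inf'
    intro j hjA
    exact key j l (by simpa [hAdef] using hjA) hl
  have hμpos : 0 < μ :=
    lt_of_lt_of_le (by have := hIpos l0; linarith) (h_le_μ l0 hl0)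
  refine ⟨μ, hμpos, ?_, hsum1⟩
  intro k
  have hk0 := (hbounds k).1
  have hkp := (hbounds k).2
  rcases lt_or_eq_of_le hkp with hlt | heq
  · have hμk : μ ≤ x k + I k := hμ_le k hlt
    rcases lt_or_eq_of_le hk0 with hpos | hzero
    · have hkμ : x k + I k ≤ μ := h_le_μ k hpos
      have : μ - I k = x k := by linarith
      rw [this, max_eq_right hk0, min_eq_right hkp]
    · rw [← hzero]
      have h1 : μ - I k ≤ 0 := by linarith [hzero ▸ hμk]
      rw [max_eq_left h1, min_eq_right (by linarith : (0:ℝ) ≤ pmax q k)]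
  · rcases lt_or_eq_of_le hk0 with hpos | hzero
    · have hkμ : x k + I k ≤ μ := h_le_μ k hpos
      have h1 : pmax q k ≤ μ - I k := by rw [← heq]; linarith
      rw [max_eq_right (le_trans (heq ▸ hk0) h1), min_eq_left h1, heq]
    · rw [← hzero, ← heq, ← hzero]
      exact (min_eq_left (le_max_left _ _)).symm
end
end

section
/- A point p* ∈ 𝒫 is a Nash equilibrium of the game 𝒢 if and only if p*_q = WF_q(p*_{-q}) for every q ∈ {1,…,Q}, i.e. if and only if each p*_q equals the Euclidean projection of −insr_q(p*_{-q}) onto 𝒫_q. -/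
open Finset
open scoped Classical

noncomputable section

namespace Statement3Aux

variable {N : ℕ}

lemma sum_eq_card {pm x : Fin N → ℝ} (hx : x ∈ stratSet pm) : ∑ k, x k = N := by
  obtain ⟨h1, _⟩ := hx
  by_cases hN : (N : ℝ) = 0
  · rw [hN] at h1; simp at h1
  · field_simp at h1; linarith

lemma exchange {pm a x : Fin N → ℝ}
    (hproj : IsProjOn (stratSet pm) (fun k => -a k) x)
    {i j : Fin N} (hij : i ≠ j) (hxi : 0 < x i) (hxj : x j < pm j) :
    x i + a i ≤ x j + a j := by
  obtain ⟨hxS, hmin⟩ := hproj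
  obtain ⟨hs, hb⟩ := hxS
  by_contra hlt
  push_neg at hlt
  set d := (x i + a i) - (x j + a j) with hd
  have hd0 : 0 < d := by simp only [hd]; linarith
  set t := min (min (x i) (pm j - x j)) (d / 2) with ht
  have ht0 : 0 < t := lt_min (lt_min hxi (by linarith)) (by linarith)
  have ht1 : t ≤ x i := le_trans (min_le_left _ _) (min_le_left _ _)
  have ht2 : t ≤ pm j - x j := le_trans (min_le_left _ _) (min_le_right _ _)
  have ht3 : t ≤ d / 2 := min_le_right _ _
  set y : Fin N → ℝ := fun k =>
    x k + (if k = j then t else 0) - (if k = i then t else 0) with hy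
  have hyj : y j = x j + t := by simp [hy, hij.symm]
  have hyi : y i = x i - t := by simp [hy, hij]
  have hyS : y ∈ stratSet pm := by
    constructor
    · have hsum : ∑ k, y k = ∑ k, x k := by
        simp only [hy]
        rw [Finset.sum_sub_distrib, Finset.sum_add_distrib,
          Fintype.sum_ite_eq' j (fun _ => t), Fintype.sum_ite_eq' i (fun _ => t)]
        ring
      rw [hsum]; exact hs
    · intro k
      by_cases hkj : k = j
      · subst hkj
        rw [hyj]
        exact ⟨by linarith [(hb k).1], by linarith⟩
      · by_cases hki : k = i
        · subst hki
          rw [hyi]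
          exact ⟨by linarith, by linarith [(hb k).2]⟩
        · have : y k = x k := by simp [hy, hkj, hki]
          rw [this]; exact hb k
  have hle := hmin y hyS
  have key : ∀ k, (y k - -a k) ^ 2 = (x k - -a k) ^ 2 +
      ((if k = j then 2 * (x k + a k) * t + t ^ 2 else 0) +
       (if k = i then -(2 * (x k + a k) * t) + t ^ 2 else 0)) := by
    intro k
    by_cases hkj : k = j
    · by_cases hki : k = i
      · exact absurd (hki.symm.trans hkj) hij
      · subst hkj; simp [hy, hki]; ring
    · by_cases hki : k = i
      · subst hki; simp [hy, hkj]; ring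
      · simp [hy, hkj, hki]
  have hsum2 : dsq y (fun k => -a k) = dsq x (fun k => -a k) +
      ((2 * (x j + a j) * t + t ^ 2) + (-(2 * (x i + a i) * t) + t ^ 2)) := by
    unfold dsq
    rw [Finset.sum_congr rfl (fun k _ => key k), Finset.sum_add_distrib,
      Finset.sum_add_distrib,
      Fintype.sum_ite_eq' j (fun k => 2 * (x k + a k) * t + t ^ 2),
      Fintype.sum_ite_eq' i (fun k => -(2 * (x k + a k) * t) + t ^ 2)]
  rw [hsum2] at hle
  have hdt : d ≤ t := by nlinarith
  linarith

lemma proj_max {pm a : Fin N → ℝ} (ha : ∀ k, 0 < a k) {x y : Fin N → ℝ}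
    (hproj : IsProjOn (stratSet pm) (fun k => -a k) x) (hy : y ∈ stratSet pm)
    (hN : 0 < N) :
    ∑ k, Real.log (a k + y k) ≤ ∑ k, Real.log (a k + x k) := by
  have hxS := hproj.1
  obtain ⟨hs, hb⟩ := hxS
  obtain ⟨hys, hyb⟩ := hy
  have hsx : ∑ k, x k = N := sum_eq_card ⟨hs, hb⟩
  have hsy : ∑ k, y k = N := sum_eq_card ⟨hys, hyb⟩
  -- there is a coordinate with positive power
  have hex : ∃ i, 0 < x i := by
    by_contra hc
    push_neg at hc
    have : ∑ k, x k = 0 :=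
      Finset.sum_eq_zero fun k _ => le_antisymm (hc k) (hb k).1
    rw [hsx] at this
    have : (0:ℝ) < N := by exact_mod_cast hN
    linarith
  set A : Finset (Fin N) := Finset.univ.filter (fun i => 0 < x i) with hA
  have hAne : A.Nonempty := by
    obtain ⟨i, hi⟩ := hex
    exact ⟨i, by simp [hA, hi]⟩
  obtain ⟨i0, hi0A, hmax⟩ := A.exists_max_image (fun i => x i + a i) hAne
  have hi0 : 0 < x i0 := by simpa [hA] using hi0A
  set c := x i0 + a i0 with hc
  have hc0 : 0 < c := by have := ha i0; simp only [hc]; linarith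
  -- below the water level on carriers with room
  have hroom : ∀ k, x k < pm k → c ≤ x k + a k := by
    intro k hk
    by_cases hki : k = i0
    · subst hki; exact le_refl _
    · exact exchange hproj (fun h => hki h.symm) hi0 hk
  -- above the water level on used carriers
  have hused : ∀ k, 0 < x k → x k + a k ≤ c := by
    intro k hk
    exact hmax k (by simp [hA, hk])
  have hax : ∀ k, 0 < a k + x k := fun k => by have := (hb k).1; have := ha k; linarith
  have key : ∀ k, (1 / (a k + x k) - 1 / c) * (y k - x k) ≤ 0 := by
    intro k
    have haxk := hax k
    rcases lt_or_eq_of_le (hb k).1 with hk0 | hk0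
    · -- 0 < x k
      have h1 : x k + a k ≤ c := hused k hk0
      have hfac : 0 ≤ 1 / (a k + x k) - 1 / c := by
        have : 1 / c ≤ 1 / (a k + x k) := by
          apply one_div_le_one_div_of_le haxk (by linarith)
        linarith
      rcases lt_or_eq_of_le (hb k).2 with hklt | hkeq
      · have h2 : c ≤ x k + a k := hroom k hklt
        have : 1 / (a k + x k) - 1 / c = 0 := by
          have : a k + x k = c := by linarith
          rw [this]; ring
        rw [this]; simp
      · have hyk : y k - x k ≤ 0 := by
          have := (hyb k).2; rw [← hkeq] at this; linarith
        exact mul_nonpos_of_nonneg_of_nonpos hfac hyk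
    · -- x k = 0
      rcases lt_or_eq_of_le (hb k).2 with hklt | hkeq
      · have h2 : c ≤ x k + a k := hroom k hklt
        have hfac : 1 / (a k + x k) - 1 / c ≤ 0 := by
          have : 1 / (a k + x k) ≤ 1 / c := by
            apply one_div_le_one_div_of_le hc0 (by linarith)
          linarith
        have hyk : 0 ≤ y k - x k := by
          have := (hyb k).1; linarith
        exact mul_nonpos_of_nonpos_of_nonneg hfac hyk
      · have : y k - x k = 0 := by
          have h1 := (hyb k).1
          have h2 := (hyb k).2
          linarith
        rw [this]; simp
  have hgrad : ∑ k, (y k - x k) / (a k + x k) ≤ 0 := by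
    have h1 : ∑ k, (1 / (a k + x k) - 1 / c) * (y k - x k) ≤ 0 :=
      Finset.sum_nonpos fun k _ => key k
    have h2 : ∑ k, (1 / c) * (y k - x k) = 0 := by
      rw [← Finset.mul_sum, Finset.sum_sub_distrib, hsx, hsy]
      ring
    have h3 : ∑ k, (y k - x k) / (a k + x k)
        = ∑ k, ((1 / (a k + x k) - 1 / c) * (y k - x k) + (1 / c) * (y k - x k)) := by
      apply Finset.sum_congr rfl
      intro k _
      field_simp
      ring
    rw [h3, Finset.sum_add_distrib, h2]
    linarith
  have hlog : ∀ k, Real.log (a k + y k) - Real.log (a k + x k)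
      ≤ (y k - x k) / (a k + x k) := by
    intro k
    have hayk : 0 < a k + y k := by have := (hyb k).1; have := ha k; linarith
    have haxk := hax k
    have h := Real.log_le_sub_one_of_pos (x := (a k + y k) / (a k + x k)) (by positivity)
    rw [Real.log_div (ne_of_gt hayk) (ne_of_gt haxk)] at h
    have : (a k + y k) / (a k + x k) - 1 = (y k - x k) / (a k + x k) := by
      field_simp
      ring
    linarith [h, this ▸ h]
  calc ∑ k, Real.log (a k + y k)
      = ∑ k, Real.log (a k + x k)
        + ∑ k, (Real.log (a k + y k) - Real.log (a k + x k)) := by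
        rw [Finset.sum_sub_distrib]; ring
    _ ≤ ∑ k, Real.log (a k + x k) + ∑ k, (y k - x k) / (a k + x k) := by
        have := Finset.sum_le_sum (fun k (_ : k ∈ Finset.univ) => hlog k)
        linarith
    _ ≤ ∑ k, Real.log (a k + x k) := by linarith

lemma max_unique {pm a : Fin N → ℝ} (ha : ∀ k, 0 < a k) {x w : Fin N → ℝ}
    (hx : x ∈ stratSet pm) (hw : w ∈ stratSet pm)
    (hmx : ∀ y ∈ stratSet pm, ∑ k, Real.log (a k + y k) ≤ ∑ k, Real.log (a k + x k))
    (hmw : ∀ y ∈ stratSet pm, ∑ k, Real.log (a k + y k) ≤ ∑ k, Real.log (a k + w k)) :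
    x = w := by
  by_contra hne
  have heq : ∑ k, Real.log (a k + x k) = ∑ k, Real.log (a k + w k) :=
    le_antisymm (hmw x hx) (hmx w hw)
  obtain ⟨k0, hk0⟩ : ∃ k, x k ≠ w k := by
    by_contra hc; push_neg at hc; exact hne (funext hc)
  set m : Fin N → ℝ := fun k => (x k + w k) / 2 with hm
  have hmS : m ∈ stratSet pm := by
    obtain ⟨hx1, hx2⟩ := hx
    obtain ⟨hw1, hw2⟩ := hw
    constructor
    · have : ∑ k, m k = (∑ k, x k + ∑ k, w k) / 2 := by
        simp only [hm]
        rw [← Finset.sum_add_distrib, ← Finset.sum_div]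
      rw [show (1 / (N:ℝ)) * ∑ k, m k
          = ((1/(N:ℝ)) * ∑ k, x k + (1/(N:ℝ)) * ∑ k, w k) / 2 by rw [this]; ring,
        hx1, hw1]
      norm_num
    · intro k
      exact ⟨by have := (hx2 k).1; have := (hw2 k).1; simp only [hm]; linarith,
        by have := (hx2 k).2; have := (hw2 k).2; simp only [hm]; linarith⟩
  have hcon : ∀ k, (Real.log (a k + x k) + Real.log (a k + w k)) / 2
      ≤ Real.log (a k + m k) := by
    intro k
    have hax : 0 < a k + x k := by have := (hx.2 k).1; have := ha k; linarith
    have haw : 0 < a k + w k := by have := (hw.2 k).1; have := ha k; linarith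
    by_cases hkeq : x k = w k
    · have : a k + m k = a k + x k := by simp only [hm]; rw [hkeq]; ring
      rw [this, hkeq]; linarith
    · have hne2 : a k + x k ≠ a k + w k := by intro h; exact hkeq (by linarith)
      have := strictConcaveOn_log_Ioi.2 (Set.mem_Ioi.2 hax) (Set.mem_Ioi.2 haw)
        hne2 (by norm_num : (0:ℝ) < 1/2) (by norm_num : (0:ℝ) < 1/2) (by norm_num)
      simp only [smul_eq_mul] at this
      have hmk : (1:ℝ)/2 * (a k + x k) + 1/2 * (a k + w k) = a k + m k := by
        simp only [hm]; ring
      rw [hmk] at this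
      linarith
  have hstrict : (Real.log (a k0 + x k0) + Real.log (a k0 + w k0)) / 2
      < Real.log (a k0 + m k0) := by
    have hax : 0 < a k0 + x k0 := by have := (hx.2 k0).1; have := ha k0; linarith
    have haw : 0 < a k0 + w k0 := by have := (hw.2 k0).1; have := ha k0; linarith
    have hne2 : a k0 + x k0 ≠ a k0 + w k0 := by intro h; exact hk0 (by linarith)
    have := strictConcaveOn_log_Ioi.2 (Set.mem_Ioi.2 hax) (Set.mem_Ioi.2 haw)
      hne2 (by norm_num : (0:ℝ) < 1/2) (by norm_num : (0:ℝ) < 1/2) (by norm_num)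
    simp only [smul_eq_mul] at this
    have hmk : (1:ℝ)/2 * (a k0 + x k0) + 1/2 * (a k0 + w k0) = a k0 + m k0 := by
      simp only [hm]; ring
    rw [hmk] at this
    linarith
  have hsum : ∑ k, (Real.log (a k + x k) + Real.log (a k + w k)) / 2
      < ∑ k, Real.log (a k + m k) :=
    Finset.sum_lt_sum (fun k _ => hcon k) ⟨k0, Finset.mem_univ k0, hstrict⟩
  have hleft : ∑ k, (Real.log (a k + x k) + Real.log (a k + w k)) / 2
      = ∑ k, Real.log (a k + x k) := by
    rw [← Finset.sum_div, Finset.sum_add_distrib, ← heq]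
    ring
  have := hmx m hmS
  rw [hleft] at hsum
  linarith

lemma log_aux {d h x : ℝ} (hd : 0 < d) (hh : 0 < h) (hx : 0 ≤ x) :
    Real.log (1 + h * x / d) = Real.log (d / h + x) - Real.log (d / h) := by
  rw [← Real.log_div (by positivity) (by positivity)]
  congr 1
  field_simp

end Statement3Aux

/-- A feasible point is a Nash equilibrium of the game iff it is a
simultaneous fixed point of the waterfilling mappings. -/
theorem statement3 {N Q : ℕ} (hN : 1 ≤ N) (hQ : 2 ≤ Q)
    (H : Fin Q → Fin Q → Fin N → ℝ) (Γ : Fin Q → ℝ) (pmax : Fin Q → Fin N → ℝ)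
    (hH : ∀ r q k, 0 ≤ H r q k) (hHqq : ∀ q k, 0 < H q q k)
    (hΓ : ∀ q, 0 < Γ q) (hpmax : ∀ q k, 0 ≤ pmax q k)
    (hcap : ∀ q, 1 < (1 / (N : ℝ)) * ∑ k, pmax q k)
    (WF : Fin Q → (Fin Q → Fin N → ℝ) → Fin N → ℝ) (hWF : IsWF H Γ pmax WF)
    (pstar : Fin Q → Fin N → ℝ) (hps : ∀ q, pstar q ∈ stratSet (pmax q)) :
    IsNE H Γ pmax pstar ↔ ∀ q, pstar q = WF q pstar := by
  have hN0 : (0:ℝ) < N := by exact_mod_cast hN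
  have hNpos : 0 < N := hN
  have hins : ∀ q k, 0 < insr H Γ q pstar k := by
    intro q k
    have hI : 0 ≤ ∑ r ∈ Finset.univ.erase q, H r q k * pstar r k :=
      Finset.sum_nonneg fun r _ => mul_nonneg (hH r q k) ((hps r).2 k).1
    unfold insr
    apply div_pos
    · exact mul_pos (hΓ q) (by linarith)
    · exact hHqq q k
  have hrate : ∀ q (x : Fin N → ℝ), (∀ k, 0 ≤ x k) →
      rate H Γ q (Function.update pstar q x) =
        (1/(N:ℝ)) * ∑ k, (Real.log (insr H Γ q pstar k + x k)
          - Real.log (insr H Γ q pstar k)) := by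
    intro q x hx0
    unfold rate
    congr 1
    apply Finset.sum_congr rfl
    intro k _
    have hIeq : ∑ r ∈ Finset.univ.erase q, H r q k * (Function.update pstar q x) r k
        = ∑ r ∈ Finset.univ.erase q, H r q k * pstar r k := by
      apply Finset.sum_congr rfl
      intro r hr
      rw [Function.update_of_ne (Finset.ne_of_mem_erase hr)]
    rw [Function.update_self, hIeq]
    have hI : 0 ≤ ∑ r ∈ Finset.univ.erase q, H r q k * pstar r k :=
      Finset.sum_nonneg fun r _ => mul_nonneg (hH r q k) ((hps r).2 k).1
    have hd : 0 < Γ q * (1 + ∑ r ∈ Finset.univ.erase q, H r q k * pstar r k) :=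
      mul_pos (hΓ q) (by linarith)
    rw [Statement3Aux.log_aux hd (hHqq q k) (hx0 k)]
    rfl
  have hrs : ∀ q, rate H Γ q pstar =
      (1/(N:ℝ)) * ∑ k, (Real.log (insr H Γ q pstar k + pstar q k)
        - Real.log (insr H Γ q pstar k)) := by
    intro q
    conv_lhs => rw [← Function.update_eq_self q pstar]
    exact hrate q (pstar q) (fun k => ((hps q).2 k).1)
  constructor
  · intro hNE q
    have hproj := hWF q pstar (fun r _ => hps r)
    have hmx : ∀ y ∈ stratSet (pmax q),
        ∑ k, Real.log (insr H Γ q pstar k + y k)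
          ≤ ∑ k, Real.log (insr H Γ q pstar k + pstar q k) := by
      intro y hy
      have h := hNE.2 q y hy
      rw [hrate q y (fun k => (hy.2 k).1), hrs q] at h
      have h3 := (mul_le_mul_iff_right₀ (by positivity : (0:ℝ) < 1/(N:ℝ))).mp h
      rw [Finset.sum_sub_distrib, Finset.sum_sub_distrib] at h3
      linarith
    have hmw : ∀ y ∈ stratSet (pmax q),
        ∑ k, Real.log (insr H Γ q pstar k + y k)
          ≤ ∑ k, Real.log (insr H Γ q pstar k + WF q pstar k) :=
      fun y hy => Statement3Aux.proj_max (hins q) hproj hy hNpos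
    exact Statement3Aux.max_unique (hins q) (hps q) hproj.1 hmx hmw
  · intro hfix
    refine ⟨hps, ?_⟩
    intro q y hy
    have hproj := hWF q pstar (fun r _ => hps r)
    rw [← hfix q] at hproj
    have hle := Statement3Aux.proj_max (hins q) hproj hy hNpos
    rw [hrate q y (fun k => (hy.2 k).1), hrs q]
    apply mul_le_mul_of_nonneg_left _ (by positivity : (0:ℝ) ≤ 1/(N:ℝ))
    rw [Finset.sum_sub_distrib, Finset.sum_sub_distrib]
    linarith
end
end

section
/- Assume that for every k ∈ {1,…,N} the spectral norm of H(k) satisfies ‖H(k)‖₂ = ρ(H(k)ᵀH(k))^{1/2} < 1. Then the game 𝒢 has exactly one Nash equilibrium p*, and for every starting point p^{(0)} ∈ 𝒫 the simultaneous IWFA sequence converges linearly to p*: there exist C ≥ 0 and β ∈ [0,1) with ‖p^{(n)} − p*‖₂ ≤ C·βⁿ for all n. -/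
open Finset
open scoped Classical

noncomputable section

namespace S7Aux

variable {N : ℕ}

lemma sum_of_mem {pm : Fin N → ℝ} (hN : 1 ≤ N) {x : Fin N → ℝ} (hx : x ∈ stratSet pm) :
    ∑ k, x k = (N : ℝ) := by
  have hN' : (0:ℝ) < N := by exact_mod_cast hN
  have h := hx.1
  field_simp at h
  linarith

lemma seg_mem {pm : Fin N → ℝ} {x y : Fin N → ℝ} (hx : x ∈ stratSet pm)
    (hy : y ∈ stratSet pm) {t : ℝ} (ht0 : 0 ≤ t) (ht1 : t ≤ 1) :
    (fun k => (1 - t) * x k + t * y k) ∈ stratSet pm := by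
  refine ⟨?_, fun k => ?_⟩
  · have hsx := hx.1; have hsy := hy.1
    have : (∑ k, ((1 - t) * x k + t * y k)) = (1-t) * ∑ k, x k + t * ∑ k, y k := by
      rw [Finset.sum_add_distrib, Finset.mul_sum, Finset.mul_sum]
    rw [this]
    nlinarith [hsx, hsy]
  · have h1 := (hx.2 k).1; have h2 := (hx.2 k).2
    have h3 := (hy.2 k).1; have h4 := (hy.2 k).2
    simp only []
    constructor <;> nlinarith

/-- Variational characterization of the projection. -/
lemma isProjOn_iff {pm : Fin N → ℝ} (z x : Fin N → ℝ) :
    IsProjOn (stratSet pm) z x ↔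
      x ∈ stratSet pm ∧ ∀ y ∈ stratSet pm, ∑ k, (y k - x k) * (z k - x k) ≤ 0 := by
  have key : ∀ y : Fin N → ℝ, dsq y z - dsq x z
      = ∑ k, (y k - x k) ^ 2 + 2 * ∑ k, (y k - x k) * (x k - z k) := by
    intro y
    rw [dsq, dsq, ← Finset.sum_sub_distrib, Finset.mul_sum, ← Finset.sum_add_distrib]
    congr 1; funext k; ring
  constructor
  · rintro ⟨hxS, hmin⟩
    refine ⟨hxS, fun y hy => ?_⟩
    by_contra hlt
    push_neg at hlt
    set d : ℝ := ∑ k, (y k - x k) * (x k - z k) with hd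
    have hdneg : d < 0 := by
      have : ∑ k, (y k - x k) * (z k - x k) = -d := by
        rw [hd, ← Finset.sum_neg_distrib]; congr 1; funext k; ring
      linarith [this ▸ hlt]
    set s : ℝ := ∑ k, (y k - x k) ^ 2 with hs
    have hs0 : 0 ≤ s := Finset.sum_nonneg fun k _ => sq_nonneg _
    have hspos : 0 < s := by
      rcases eq_or_lt_of_le hs0 with h | h
      · exfalso
        have hall : ∀ k ∈ Finset.univ, (y k - x k) ^ 2 = 0 := by
          intro k _
          have := (Finset.sum_eq_zero_iff_of_nonneg (fun k _ => sq_nonneg (y k - x k))).1 h.symm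
          exact this k (Finset.mem_univ k)
        have : d = 0 := by
          rw [hd]
          apply Finset.sum_eq_zero
          intro k _
          have := hall k (Finset.mem_univ k)
          have hyx : y k - x k = 0 := by nlinarith [this]
          rw [hyx]; ring
        linarith
      · exact h
    set t : ℝ := min 1 (-d / s) with htdef
    have ht0 : 0 < t := lt_min one_pos (div_pos (by linarith) hspos)
    have ht1 : t ≤ 1 := min_le_left _ _
    have hts : t * s ≤ -d := by
      have : t ≤ -d / s := min_le_right _ _
      calc t * s ≤ (-d / s) * s := by nlinarith
        _ = -d := by field_simp
    have hw : (fun k => (1 - t) * x k + t * y k) ∈ stratSet pm := seg_mem hxS hy ht0.le ht1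
    have hle := hmin _ hw
    have hcalc : dsq (fun k => (1 - t) * x k + t * y k) z - dsq x z = t^2 * s + 2 * t * d := by
      rw [key]
      have e1 : ∑ k, ((1 - t) * x k + t * y k - x k) ^ 2 = t^2 * s := by
        rw [hs, Finset.mul_sum]; congr 1; funext k; ring
      have e2 : ∑ k, ((1 - t) * x k + t * y k - x k) * (x k - z k) = t * d := by
        rw [hd, Finset.mul_sum]; congr 1; funext k; ring
      rw [e1, e2]; ring
    nlinarith [hle, hcalc]
  · rintro ⟨hxS, hvi⟩
    refine ⟨hxS, fun y hy => ?_⟩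
    have h := hvi y hy
    have h2 : 0 ≤ ∑ k, (y k - x k) * (x k - z k) := by
      have : ∑ k, (y k - x k) * (x k - z k) = -∑ k, (y k - x k) * (z k - x k) := by
        rw [← Finset.sum_neg_distrib]; congr 1; funext k; ring
      rw [this]; linarith
    have := key y
    nlinarith [Finset.sum_nonneg (fun k (_ : k ∈ Finset.univ) => sq_nonneg (y k - x k))]

lemma proj_unique {pm : Fin N → ℝ} {z x x' : Fin N → ℝ}
    (h : IsProjOn (stratSet pm) z x) (h' : IsProjOn (stratSet pm) z x') : x = x' := by
  rw [isProjOn_iff] at h h'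
  have h1 := h.2 x' h'.1
  have h2 := h'.2 x h.1
  have hsum : ∑ k, (x' k - x k) * (z k - x k) + ∑ k, (x k - x' k) * (z k - x' k)
      = ∑ k, (x k - x' k)^2 := by
    rw [← Finset.sum_add_distrib]; congr 1; funext k; ring
  have hz : ∑ k, (x k - x' k)^2 ≤ 0 := by linarith
  funext k
  have h0 : (x k - x' k)^2 = 0 := by
    have heq : ∑ k, (x k - x' k)^2 = 0 :=
      le_antisymm hz (Finset.sum_nonneg fun k _ => sq_nonneg _)
    exact (Finset.sum_eq_zero_iff_of_nonneg (fun k _ => sq_nonneg (x k - x' k))).1 heq k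
      (Finset.mem_univ k)
  nlinarith [h0]


lemma vi_iff_pairwise (hN : 1 ≤ N) {pm : Fin N → ℝ} {x : Fin N → ℝ}
    (hx : x ∈ stratSet pm) (a : Fin N → ℝ) :
    (∀ y ∈ stratSet pm, 0 ≤ ∑ k, (y k - x k) * a k) ↔
      (∀ k j, x k < pm k → 0 < x j → a j ≤ a k) := by
  constructor
  · intro hvi k j hk hj
    rcases eq_or_ne k j with rfl | hkj
    · exact le_refl _
    set t : ℝ := min (pm k - x k) (x j) with htdef
    have ht : 0 < t := lt_min (by linarith) hj
    have htk : t ≤ pm k - x k := min_le_left _ _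
    have htj : t ≤ x j := min_le_right _ _
    set y : Fin N → ℝ := fun i => x i + (if i = k then t else 0) - (if i = j then t else 0)
      with hy
    have hyS : y ∈ stratSet pm := by
      constructor
      · have : ∑ i, y i = ∑ i, x i := by
          rw [hy]
          rw [Finset.sum_sub_distrib, Finset.sum_add_distrib,
            Finset.sum_ite_eq' Finset.univ k (fun _ => t),
            Finset.sum_ite_eq' Finset.univ j (fun _ => t)]
          simp
        rw [this]
        exact hx.1
      · intro i
        have h1 := (hx.2 i).1; have h2 := (hx.2 i).2
        have hjk : ¬ (k = j) := hkj
        rcases eq_or_ne i k with rfl | hik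
        · simp only [hy, eq_self_iff_true, if_true, if_neg hjk]
          constructor <;> linarith
        · rcases eq_or_ne i j with rfl | hij
          · simp only [hy, if_neg hik, eq_self_iff_true, if_true]
            constructor <;> linarith
          · simp only [hy, if_neg hik, if_neg hij]
            constructor <;> linarith
    have h := hvi y hyS
    have : ∑ i, (y i - x i) * a i = t * a k - t * a j := by
      rw [hy]
      have : ∀ i, (x i + (if i = k then t else 0) - (if i = j then t else 0) - x i) * a i
          = (if i = k then t * a k else 0) - (if i = j then t * a j else 0) := by
        intro i
        have hjk : ¬ (k = j) := hkj
        rcases eq_or_ne i k with rfl | hik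
        · simp only [eq_self_iff_true, if_true, if_neg hjk]; ring
        · rcases eq_or_ne i j with rfl | hij
          · simp only [if_neg hik, eq_self_iff_true, if_true]; ring
          · simp only [if_neg hik, if_neg hij]; ring
      rw [Finset.sum_congr rfl (fun i _ => this i), Finset.sum_sub_distrib,
        Finset.sum_ite_eq' Finset.univ k (fun _ => t * a k),
        Finset.sum_ite_eq' Finset.univ j (fun _ => t * a j)]
      simp
    rw [this] at h
    nlinarith
  · intro hP y hy
    have hNpos : (0:ℝ) < N := by exact_mod_cast hN
    -- some coordinate of x is positive
    have hex : ∃ j, 0 < x j := by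
      by_contra hno
      push_neg at hno
      have : ∑ k, x k = 0 := Finset.sum_eq_zero fun k _ =>
        le_antisymm (hno k) (hx.2 k).1
      rw [sum_of_mem hN hx] at this
      linarith
    set F := Finset.univ.filter (fun j => 0 < x j) with hF
    have hFne : F.Nonempty := by
      obtain ⟨j, hj⟩ := hex
      exact ⟨j, by simp [hF, hj]⟩
    set μ := F.sup' hFne a with hμ
    have hμ1 : ∀ j ∈ F, a j ≤ μ := fun j hj => Finset.le_sup' a hj
    have hμ2 : ∀ k, x k < pm k → μ ≤ a k := by
      intro k hk
      obtain ⟨j, hjF, hjeq⟩ := Finset.exists_mem_eq_sup' hFne a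
      rw [hμ, hjeq]
      exact hP k j hk (by simpa [hF] using hjF)
    have hsum : ∑ k, (y k - x k) * a k = ∑ k, (y k - x k) * (a k - μ) := by
      rw [← sub_eq_zero, ← Finset.sum_sub_distrib]
      have : ∑ k, ((y k - x k) * a k - (y k - x k) * (a k - μ)) = μ * (∑ k, y k - ∑ k, x k) := by
        rw [← Finset.sum_sub_distrib, Finset.mul_sum]
        congr 1; funext k; ring
      rw [this, sum_of_mem hN hy, sum_of_mem hN hx]
      ring
    rw [hsum]
    apply Finset.sum_nonneg
    intro k _
    rcases lt_trichotomy (y k) (x k) with h | h | h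
    · have hk : 0 < x k := lt_of_le_of_lt (hy.2 k).1 h
      have : a k ≤ μ := hμ1 k (by simp [hF, hk])
      nlinarith
    · rw [h]; ring_nf; simp
    · have hk : x k < pm k := lt_of_lt_of_le h (hy.2 k).2
      have := hμ2 k hk
      nlinarith

lemma log_lb {u : ℝ} (h : -2⁻¹ ≤ u) : u - 2*u^2 ≤ Real.log (1+u) := by
  have h1 : (0:ℝ) < 1 + u := by linarith
  have h2 : Real.log (1+u)⁻¹ ≤ (1+u)⁻¹ - 1 :=
    Real.log_le_sub_one_of_pos (by positivity)
  rw [Real.log_inv] at h2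
  have h3 : u / (1+u) ≤ Real.log (1+u) := by
    have : u / (1+u) = 1 - (1+u)⁻¹ := by field_simp; ring
    linarith [this]
  have h4 : u - 2*u^2 ≤ u / (1+u) := by
    rw [le_div_iff₀ h1]
    nlinarith [sq_nonneg u]
  linarith

/-- The VI with weights `1/(σ k + x k)` characterizes maximizers of `∑ log (1 + y/σ)`. -/
lemma vig_iff_max (hN : 1 ≤ N) {pm σ : Fin N → ℝ} (hσ : ∀ k, 0 < σ k)
    {x : Fin N → ℝ} (hx : x ∈ stratSet pm) :
    (∀ y ∈ stratSet pm, ∑ k, (y k - x k) / (σ k + x k) ≤ 0) ↔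
      (∀ y ∈ stratSet pm,
        ∑ k, Real.log (1 + y k / σ k) ≤ ∑ k, Real.log (1 + x k / σ k)) := by
  have ha : ∀ k, 0 < σ k + x k := fun k => by
    have := (hx.2 k).1; have := hσ k; linarith
  have hlog : ∀ (w : Fin N → ℝ), w ∈ stratSet pm → ∀ k,
      Real.log (1 + w k / σ k) = Real.log (σ k + w k) - Real.log (σ k) := by
    intro w hw k
    have hσk : (σ k) ≠ 0 := (hσ k).ne'
    have h1 : 1 + w k / σ k = (σ k + w k) / σ k := by field_simp
    rw [h1, Real.log_div (by have := (hw.2 k).1; have := hσ k; positivity) (ne_of_gt (hσ k))]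
  constructor
  · intro hvi y hy
    have key : ∀ k, Real.log (1 + y k / σ k) - Real.log (1 + x k / σ k)
        ≤ (y k - x k) / (σ k + x k) := by
      intro k
      have hay : 0 < σ k + y k := by have := (hy.2 k).1; have := hσ k; linarith
      rw [hlog y hy k, hlog x hx k]
      have : Real.log (σ k + y k) - Real.log (σ k + x k)
          = Real.log ((σ k + y k) / (σ k + x k)) := by
        rw [Real.log_div (ne_of_gt hay) (ne_of_gt (ha k))]
      have hle := Real.log_le_sub_one_of_pos (div_pos hay (ha k))
      have heq : (σ k + y k) / (σ k + x k) - 1 = (y k - x k) / (σ k + x k) := by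
        have hne : (σ k + x k) ≠ 0 := (ha k).ne'
        field_simp
        ring
      linarith [this, hle, heq]
    calc ∑ k, Real.log (1 + y k / σ k)
        ≤ ∑ k, (Real.log (1 + x k / σ k) + (y k - x k) / (σ k + x k)) := by
          apply Finset.sum_le_sum; intro k _; linarith [key k]
      _ = ∑ k, Real.log (1 + x k / σ k) + ∑ k, (y k - x k) / (σ k + x k) := by
          rw [Finset.sum_add_distrib]
      _ ≤ ∑ k, Real.log (1 + x k / σ k) := by linarith [hvi y hy]
  · intro hmax y hy
    by_contra hpos
    push_neg at hpos
    set s : ℝ := ∑ k, (y k - x k) / (σ k + x k) with hs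
    set K : ℝ := ∑ k, ((y k - x k) / (σ k + x k))^2 with hK
    set B : ℝ := ∑ k, |(y k - x k) / (σ k + x k)| with hB
    have hK0 : 0 ≤ K := Finset.sum_nonneg fun k _ => sq_nonneg _
    have hB0 : 0 ≤ B := Finset.sum_nonneg fun k _ => abs_nonneg _
    have hBk : ∀ k, |(y k - x k) / (σ k + x k)| ≤ B := by
      intro k
      rw [hB]
      exact Finset.single_le_sum (f := fun k => |(y k - x k) / (σ k + x k)|)
        (fun k _ => abs_nonneg _) (Finset.mem_univ k)
    set t : ℝ := min 1 (min (s / (4*K+4)) (1/(2*B+1))) with ht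
    have ht0 : 0 < t := by
      apply lt_min one_pos
      apply lt_min (div_pos hpos (by linarith)) (div_pos one_pos (by linarith))
    have ht1 : t ≤ 1 := min_le_left _ _
    have htK : t ≤ s / (4*K+4) := le_trans (min_le_right _ _) (min_le_left _ _)
    have htB : t ≤ 1/(2*B+1) := le_trans (min_le_right _ _) (min_le_right _ _)
    set w : Fin N → ℝ := fun k => (1 - t) * x k + t * y k with hw
    have hwS : w ∈ stratSet pm := by
      refine ⟨?_, fun k => ?_⟩
      · have hsx := hx.1; have hsy := hy.1
        have : (∑ k, w k) = (1-t) * ∑ k, x k + t * ∑ k, y k := by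
          rw [hw]; rw [Finset.sum_add_distrib, Finset.mul_sum, Finset.mul_sum]
        rw [this]; nlinarith [hsx, hsy]
      · have h1 := (hx.2 k).1; have h2 := (hx.2 k).2
        have h3 := (hy.2 k).1; have h4 := (hy.2 k).2
        simp only [hw]
        constructor <;> nlinarith
    have hle := hmax w hwS
    -- expand: log(1 + w/σ) - log(1 + x/σ) = log (1 + u k), u k = t*(y k - x k)/(σ k + x k)
    have hukey : ∀ k, Real.log (1 + w k / σ k) - Real.log (1 + x k / σ k)
        = Real.log (1 + t * ((y k - x k) / (σ k + x k))) := by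
      intro k
      have hσk : (σ k) ≠ 0 := (hσ k).ne'
      have hne : (σ k + x k) ≠ 0 := (ha k).ne'
      have hay : 0 < σ k + w k := by have := (hwS.2 k).1; have := hσ k; linarith
      have h1 : 1 + w k / σ k = (σ k + w k)/σ k := by field_simp
      have h2 : 1 + x k / σ k = (σ k + x k)/σ k := by field_simp
      have h3 : (1 : ℝ) + t * ((y k - x k) / (σ k + x k)) = (σ k + w k) / (σ k + x k) := by
        have hswk : σ k + w k = (σ k + x k) + t * (y k - x k) := by simp only [hw]; ring
        rw [hswk, add_div, div_self hne, mul_div_assoc]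
      rw [h1, h2, h3,
        Real.log_div (ne_of_gt hay) (ne_of_gt (hσ k)),
        Real.log_div (ne_of_gt (by have := (hx.2 k).1; have := hσ k; linarith : (0:ℝ) < σ k + x k)) (ne_of_gt (hσ k)),
        Real.log_div (ne_of_gt hay) (ne_of_gt (by have := (hx.2 k).1; have := hσ k; linarith : (0:ℝ) < σ k + x k))]
      ring
    have hub : ∀ k, -2⁻¹ ≤ t * ((y k - x k) / (σ k + x k)) := by
      intro k
      have habs : |t * ((y k - x k) / (σ k + x k))| ≤ t * B := by
        rw [abs_mul, abs_of_pos ht0]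
        exact mul_le_mul_of_nonneg_left (hBk k) ht0.le
      have : t * B ≤ 2⁻¹ := by
        have : t * (2*B+1) ≤ 1 := by
          calc t * (2*B+1) ≤ (1/(2*B+1)) * (2*B+1) := by nlinarith
            _ = 1 := by field_simp
        nlinarith
      have := abs_le.1 (le_trans habs this)
      linarith [this.1]
    have hlb : ∀ k, t * ((y k - x k) / (σ k + x k)) - 2 * (t * ((y k - x k) / (σ k + x k)))^2
        ≤ Real.log (1 + t * ((y k - x k) / (σ k + x k))) := fun k => log_lb (hub k)
    have hsumlb : t * s - 2 * t^2 * K ≤ ∑ k, Real.log (1 + t * ((y k - x k) / (σ k + x k))) := by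
      have : ∑ k, (t * ((y k - x k) / (σ k + x k)) - 2 * (t * ((y k - x k) / (σ k + x k)))^2)
          = t * s - 2 * t^2 * K := by
        rw [hs, hK, Finset.sum_sub_distrib, Finset.mul_sum, Finset.mul_sum]
        congr 1
        exact Finset.sum_congr rfl fun k _ => by ring
      rw [← this]
      exact Finset.sum_le_sum fun k _ => hlb k
    have hsumeq : ∑ k, Real.log (1 + t * ((y k - x k) / (σ k + x k)))
        = ∑ k, Real.log (1 + w k / σ k) - ∑ k, Real.log (1 + x k / σ k) := by
      rw [← Finset.sum_sub_distrib]
      congr 1; funext k; rw [hukey k]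
    have h2 : t * (4*K+4) ≤ s := (le_div_iff₀ (by linarith : (0:ℝ) < 4*K+4)).1 htK
    have h2' : 4*(t*K) + 4*t ≤ s := by
      have he : t*(4*K+4) = 4*(t*K)+4*t := by ring
      linarith [he ▸ h2]
    have h1 : 2 * t * K ≤ s / 2 := by
      have he : 2*t*K = 2*(t*K) := by ring
      linarith [ht0.le, he]
    have h3 : t * (2 * t * K) ≤ t * (s / 2) := mul_le_mul_of_nonneg_left h1 ht0.le
    have h4 : 2 * t^2 * K ≤ t * s / 2 := by
      have e1 : t*(2*t*K) = 2*t^2*K := by ring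
      have e2 : t*(s/2) = t*s/2 := by ring
      linarith [h3, e1 ▸ (e2 ▸ h3)]
    have h5 : (0:ℝ) < t * s / 2 := by
      have := mul_pos ht0 hpos; linarith
    rw [hsumeq] at hsumlb
    linarith


lemma specRad_set_eq {n : ℕ} (A : Matrix (Fin n) (Fin n) ℝ) :
    {x : ℝ | ∃ μ : ℂ, ((A.map (fun a => (a : ℂ))).charpoly).IsRoot μ ∧ x = ‖μ‖}
      = (fun μ : ℂ => ‖μ‖) '' {μ : ℂ | ((A.map (fun a => (a : ℂ))).charpoly).IsRoot μ} := by
  ext x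
  simp only [Set.mem_setOf_eq, Set.mem_image]
  constructor
  · rintro ⟨μ, h1, h2⟩; exact ⟨μ, h1, h2.symm⟩
  · rintro ⟨μ, h1, h2⟩; exact ⟨μ, h1, h2.symm⟩

lemma specRad_bddAbove {n : ℕ} (A : Matrix (Fin n) (Fin n) ℝ) :
    BddAbove {x : ℝ | ∃ μ : ℂ,
      ((A.map (fun a => (a : ℂ))).charpoly).IsRoot μ ∧ x = ‖μ‖} := by
  rw [specRad_set_eq]
  apply Set.Finite.bddAbove
  apply Set.Finite.image
  exact Polynomial.finite_setOf_isRoot ((A.map _).charpoly_monic.ne_zero)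

lemma charpoly_eval {n : ℕ} (M : Matrix (Fin n) (Fin n) ℝ) (t : ℝ) :
    M.charpoly.eval t = (t • (1 : Matrix (Fin n) (Fin n) ℝ) - M).det := by
  rw [Matrix.charpoly, eval_det, Matrix.matPolyEquiv_charmatrix]
  simp only [Polynomial.eval_sub, Polynomial.eval_X, Polynomial.eval_C]
  congr 1
  ext i j
  simp [Matrix.scalar, Matrix.smul_apply, Matrix.one_apply, Matrix.diagonal,
    Pi.algebraMap_apply, Algebra.algebraMap_self_apply]

lemma eig_le_specRad {n : ℕ} (M : Matrix (Fin n) (Fin n) ℝ) {t : ℝ} {u : Fin n → ℝ}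
    (hu : u ≠ 0) (h : M.mulVec u = t • u) : t ≤ specRad M := by
  have hroot : M.charpoly.IsRoot t := by
    have hdet : (t • (1 : Matrix (Fin n) (Fin n) ℝ) - M).det = 0 := by
      rw [← Matrix.exists_mulVec_eq_zero_iff]
      refine ⟨u, hu, ?_⟩
      rw [Matrix.sub_mulVec, Matrix.smul_mulVec, Matrix.one_mulVec, h, sub_self]
    rw [Polynomial.IsRoot, charpoly_eval, hdet]
  have hrootC : ((M.map (fun a => (a : ℂ))).charpoly).IsRoot (t : ℂ) := by
    have : (fun a : ℝ => (a : ℂ)) = ⇑(algebraMap ℝ ℂ) := rfl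
    rw [this, Matrix.charpoly_map M (algebraMap ℝ ℂ)]
    exact Polynomial.IsRoot.map (f := algebraMap ℝ ℂ) hroot
  have hmem : |t| ∈ {x : ℝ | ∃ μ : ℂ,
      ((M.map (fun a => (a : ℂ))).charpoly).IsRoot μ ∧ x = ‖μ‖} :=
    ⟨(t : ℂ), hrootC, (by simp [Complex.norm_real])⟩
  calc t ≤ |t| := le_abs_self t
    _ ≤ specRad M := le_csSup (specRad_bddAbove M) hmem


lemma specRad_nonneg {n : ℕ} (hn : 0 < n) (A : Matrix (Fin n) (Fin n) ℝ) :
    0 ≤ specRad A := by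
  set p := (A.map (fun a => (a : ℂ))).charpoly with hp
  have hdeg : p.degree ≠ 0 := by
    rw [hp, Matrix.charpoly_degree_eq_dim]
    simp only [Fintype.card_fin]
    exact_mod_cast hn.ne'
  obtain ⟨μ, hμ⟩ := IsAlgClosed.exists_root p hdeg
  have hmem : ‖μ‖ ∈ {x : ℝ | ∃ μ : ℂ,
      ((A.map (fun a => (a : ℂ))).charpoly).IsRoot μ ∧ x = ‖μ‖} := ⟨μ, hμ, rfl⟩
  exact le_trans (norm_nonneg μ) (le_csSup (specRad_bddAbove A) hmem)

lemma rayleigh {n : ℕ} (A : Matrix (Fin n) (Fin n) ℝ) (v : Fin n → ℝ) :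
    ∑ q, (A.mulVec v q)^2 ≤ specRad (A.transpose * A) * ∑ q, (v q)^2 := by
  classical
  set M : Matrix (Fin n) (Fin n) ℝ := A.transpose * A with hMdef
  have hM : M.IsHermitian := by
    have := Matrix.isHermitian_conjTranspose_mul_self A
    simpa [Matrix.conjTranspose_eq_transpose_of_trivial] using this
  set U : Matrix (Fin n) (Fin n) ℝ := (hM.eigenvectorUnitary : Matrix (Fin n) (Fin n) ℝ)
    with hU
  set lam : Fin n → ℝ := hM.eigenvalues with hlam
  have hUstar' : U * star U = 1 := (Matrix.mem_unitaryGroup_iff).1 hM.eigenvectorUnitary.2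
  have hUstar : star U * U = 1 := (Matrix.mem_unitaryGroup_iff').1 hM.eigenvectorUnitary.2
  have hstarU : star U = U.transpose := by
    rw [Matrix.star_eq_conjTranspose]
    ext i j
    simp [Matrix.conjTranspose_apply]
  have hspec := hM.spectral_theorem
  have hlamle : ∀ i, lam i ≤ specRad M := by
    intro i
    have hvec := hM.mulVec_eigenvectorBasis i
    apply eig_le_specRad M (u := (WithLp.equiv 2 (Fin n → ℝ)) (hM.eigenvectorBasis i))
    · intro hzero
      have := (hM.eigenvectorBasis).orthonormal.ne_zero i
      apply this
      apply (WithLp.equiv 2 (Fin n → ℝ)).injective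
      simpa using hzero
    · exact hvec
  -- D := diagonal lam
  have hDiag : Matrix.diagonal (RCLike.ofReal ∘ lam) = Matrix.diagonal lam := by
    have h : (RCLike.ofReal ∘ lam : Fin n → ℝ) = lam := by funext i; simp
    rw [h]
  set w : Fin n → ℝ := U.transpose.mulVec v with hw
  have hMv : M.mulVec v = U.mulVec ((Matrix.diagonal lam).mulVec w) := by
    rw [hw, Matrix.mulVec_mulVec, Matrix.mulVec_mulVec, ← hstarU]
    conv_lhs => rw [hspec]
    rw [Unitary.conjStarAlgAut_apply, ← hU, ← hlam, hDiag]
  have key1 : dotProduct v (M.mulVec v) = ∑ i, lam i * (w i)^2 := by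
    rw [hMv, Matrix.dotProduct_mulVec]
    have : Matrix.vecMul v U = U.transpose.mulVec v := by
      rw [← Matrix.vecMul_transpose, Matrix.transpose_transpose]
    rw [this, ← hw]
    simp only [dotProduct, Matrix.mulVec_diagonal]
    exact Finset.sum_congr rfl fun i _ => by ring
  have key2 : ∑ i, (w i)^2 = ∑ i, (v i)^2 := by
    have h1 : dotProduct w w = dotProduct (U.mulVec w) v := by
      rw [hw, Matrix.dotProduct_mulVec]
      have : Matrix.vecMul w U.transpose = U.mulVec w := Matrix.vecMul_transpose U w
      rw [this]
    have h2 : U.mulVec w = v := by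
      rw [hw, Matrix.mulVec_mulVec]
      have : U * U.transpose = 1 := by rw [← hstarU]; exact hUstar'
      rw [this, Matrix.one_mulVec]
    have h3 : dotProduct w w = ∑ i, (w i)^2 := by
      simp only [dotProduct]; exact Finset.sum_congr rfl fun i _ => by ring
    have h4 : dotProduct v v = ∑ i, (v i)^2 := by
      simp only [dotProduct]; exact Finset.sum_congr rfl fun i _ => by ring
    rw [← h3, h1, h2, h4]
  have key0 : ∑ q, (A.mulVec v q)^2 = dotProduct v (M.mulVec v) := by
    rw [hMdef, ← Matrix.mulVec_mulVec, Matrix.dotProduct_mulVec, Matrix.vecMul_transpose]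
    simp only [dotProduct]
    exact Finset.sum_congr rfl fun i _ => by ring
  rw [key0, key1]
  calc ∑ i, lam i * (w i)^2 ≤ ∑ i, specRad M * (w i)^2 :=
        Finset.sum_le_sum fun i _ => mul_le_mul_of_nonneg_right (hlamle i) (sq_nonneg _)
    _ = specRad M * ∑ i, (w i)^2 := by rw [Finset.mul_sum]
    _ = specRad M * ∑ i, (v i)^2 := by rw [key2]


end S7Aux
namespace S7Aux

section Game

variable {N Q : ℕ} {H : Fin Q → Fin Q → Fin N → ℝ} {Γ : Fin Q → ℝ}
  {pmax : Fin Q → Fin N → ℝ}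

lemma insr_pos (hH : ∀ r q k, 0 ≤ H r q k) (hHqq : ∀ q k, 0 < H q q k)
    (hΓ : ∀ q, 0 < Γ q) {q : Fin Q} {p : Fin Q → Fin N → ℝ}
    (hp : ∀ r, r ≠ q → p r ∈ stratSet (pmax r)) (k : Fin N) :
    0 < insr H Γ q p k := by
  unfold insr
  apply div_pos _ (hHqq q k)
  apply mul_pos (hΓ q)
  have h : 0 ≤ ∑ r ∈ Finset.univ.erase q, H r q k * p r k :=
    Finset.sum_nonneg fun r hr =>
      mul_nonneg (hH r q k) ((hp r (Finset.ne_of_mem_erase hr)).2 k).1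
  linarith

lemma insr_update (q : Fin Q) (p : Fin Q → Fin N → ℝ) (y : Fin N → ℝ) :
    insr H Γ q (Function.update p q y) = insr H Γ q p := by
  funext k
  unfold insr
  have h : ∑ r ∈ Finset.univ.erase q, H r q k * (Function.update p q y) r k
      = ∑ r ∈ Finset.univ.erase q, H r q k * p r k := by
    refine Finset.sum_congr rfl fun r hr => ?_
    rw [Function.update_of_ne (Finset.ne_of_mem_erase hr)]
  rw [h]

lemma rate_eq (hHqq : ∀ q k, 0 < H q q k) (hΓ : ∀ q, 0 < Γ q) (hH : ∀ r q k, 0 ≤ H r q k)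
    {q : Fin Q} {p : Fin Q → Fin N → ℝ}
    (hp : ∀ r, r ≠ q → p r ∈ stratSet (pmax r)) :
    rate H Γ q p = (1 / (N : ℝ)) * ∑ k, Real.log (1 + p q k / insr H Γ q p k) := by
  unfold rate
  congr 1
  refine Finset.sum_congr rfl fun k _ => ?_
  congr 1
  unfold insr
  rw [div_div_eq_mul_div, mul_comm]

/-- Characterization of Nash equilibria via the variational inequality. -/
lemma isNE_iff (hN : 1 ≤ N) (hH : ∀ r q k, 0 ≤ H r q k) (hHqq : ∀ q k, 0 < H q q k)
    (hΓ : ∀ q, 0 < Γ q) {P : Fin Q → Fin N → ℝ} :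
    IsNE H Γ pmax P ↔ ((∀ q, P q ∈ stratSet (pmax q)) ∧
      ∀ q, ∀ y ∈ stratSet (pmax q),
        ∑ k, (y k - P q k) / (insr H Γ q P k + P q k) ≤ 0) := by
  constructor
  · rintro ⟨hfeas, hbest⟩
    refine ⟨hfeas, fun q => ?_⟩
    have hσ : ∀ k, 0 < insr H Γ q P k :=
      insr_pos hH hHqq hΓ (fun r _ => hfeas r)
    rw [vig_iff_max hN hσ (hfeas q)]
    intro y hy
    have hb := hbest q y hy
    have hup : ∀ r, r ≠ q → (Function.update P q y) r ∈ stratSet (pmax r) := by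
      intro r hr; rw [Function.update_of_ne hr]; exact hfeas r
    rw [rate_eq hHqq hΓ hH hup, rate_eq hHqq hΓ hH (fun r _ => hfeas r),
      insr_update, Function.update_self] at hb
    have hN' : (0:ℝ) < 1 / (N:ℝ) := by
      have : (0:ℝ) < (N:ℝ) := by exact_mod_cast hN
      positivity
    exact le_of_mul_le_mul_left (by linarith [hb]) hN'
  · rintro ⟨hfeas, hvi⟩
    refine ⟨hfeas, fun q y hy => ?_⟩
    have hσ : ∀ k, 0 < insr H Γ q P k :=
      insr_pos hH hHqq hΓ (fun r _ => hfeas r)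
    have hmax := (vig_iff_max hN hσ (hfeas q)).1 (hvi q) y hy
    have hup : ∀ r, r ≠ q → (Function.update P q y) r ∈ stratSet (pmax r) := by
      intro r hr; rw [Function.update_of_ne hr]; exact hfeas r
    rw [rate_eq hHqq hΓ hH hup, rate_eq hHqq hΓ hH (fun r _ => hfeas r),
      insr_update, Function.update_self]
    have hN' : (0:ℝ) ≤ 1 / (N:ℝ) := by positivity
    exact mul_le_mul_of_nonneg_left hmax hN'

/-- The VI with gradient weights is equivalent to being the Euclidean projection
of `-σ` onto the strategy set. -/
lemma vig_iff_proj (hN : 1 ≤ N) {pm σ : Fin N → ℝ} (hσ : ∀ k, 0 < σ k)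
    {x : Fin N → ℝ} (hx : x ∈ stratSet pm) :
    (∀ y ∈ stratSet pm, ∑ k, (y k - x k) / (σ k + x k) ≤ 0) ↔
      IsProjOn (stratSet pm) (fun k => -σ k) x := by
  have ha : ∀ k, 0 < σ k + x k := fun k => by
    have := (hx.2 k).1; have := hσ k; linarith
  have hinv : ∀ {A B : ℝ}, 0 < A → 0 < B → (A⁻¹ ≤ B⁻¹ ↔ B ≤ A) := by
    intro A B hA hB
    constructor
    · intro h
      nlinarith [mul_le_mul_of_nonneg_left h (mul_pos hA hB).le,
        mul_inv_cancel₀ hA.ne', mul_inv_cancel₀ hB.ne']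
    · intro h
      have h1 : 0 < A⁻¹ := inv_pos.2 hA
      have h2 : 0 < B⁻¹ := inv_pos.2 hB
      nlinarith [mul_inv_cancel₀ hA.ne', mul_inv_cancel₀ hB.ne',
        mul_le_mul_of_nonneg_left h (mul_pos h1 h2).le]
  -- step A : VIg in the `vi_iff_pairwise` form
  have stepA : (∀ y ∈ stratSet pm, ∑ k, (y k - x k) / (σ k + x k) ≤ 0) ↔
      (∀ y ∈ stratSet pm, 0 ≤ ∑ k, (y k - x k) * (-(σ k + x k)⁻¹)) := by
    have he : ∀ y : Fin N → ℝ, ∑ k, (y k - x k) * (-(σ k + x k)⁻¹)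
        = -∑ k, (y k - x k) / (σ k + x k) := by
      intro y
      rw [← Finset.sum_neg_distrib]
      exact Finset.sum_congr rfl fun k _ => by rw [div_eq_mul_inv]; ring
    constructor
    · intro h y hy; rw [he y]; linarith [h y hy]
    · intro h y hy; have := h y hy; rw [he y] at this; linarith
  -- step E : projection VI in the `vi_iff_pairwise` form
  have stepE : (∀ y ∈ stratSet pm, ∑ k, (y k - x k) * ((fun k => -σ k) k - x k) ≤ 0) ↔
      (∀ y ∈ stratSet pm, 0 ≤ ∑ k, (y k - x k) * (σ k + x k)) := by
    have he : ∀ y : Fin N → ℝ, ∑ k, (y k - x k) * ((fun k => -σ k) k - x k)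
        = -∑ k, (y k - x k) * (σ k + x k) := by
      intro y
      rw [← Finset.sum_neg_distrib]
      exact Finset.sum_congr rfl fun k _ => by simp only []; ring
    constructor
    · intro h y hy; have := h y hy; rw [he y] at this; linarith
    · intro h y hy; rw [he y]; linarith [h y hy]
  rw [stepA, isProjOn_iff,
    vi_iff_pairwise hN hx (fun k => -(σ k + x k)⁻¹)]
  constructor
  · intro hP
    refine ⟨hx, ?_⟩
    rw [stepE, vi_iff_pairwise hN hx (fun k => σ k + x k)]
    intro k j hk hj
    have := hP k j hk hj
    have h1 : (σ k + x k)⁻¹ ≤ (σ j + x j)⁻¹ := by linarith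
    exact (hinv (ha k) (ha j)).1 h1
  · rintro ⟨-, hP⟩
    rw [stepE, vi_iff_pairwise hN hx (fun k => σ k + x k)] at hP
    intro k j hk hj
    have := hP k j hk hj
    have h1 : (σ k + x k)⁻¹ ≤ (σ j + x j)⁻¹ := (hinv (ha k) (ha j)).2 this
    linarith

end Game

end S7Aux
namespace S7Aux

section Contraction

variable {N Q : ℕ} {H : Fin Q → Fin Q → Fin N → ℝ} {Γ : Fin Q → ℝ}
  {pmax : Fin Q → Fin N → ℝ} {WF : Fin Q → (Fin Q → Fin N → ℝ) → Fin N → ℝ}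

lemma WFzero (hWF : IsWF H Γ pmax WF) (q : Fin Q) (p : Fin Q → Fin N → ℝ)
    (hp : ∀ r, r ≠ q → p r ∈ stratSet (pmax r)) {k : Fin N}
    (hk : k ∉ Dset pmax WF q) : WF q p k = 0 := by
  by_contra h
  exact hk ⟨p, hp, h⟩

lemma contraction (hH : ∀ r q k, 0 ≤ H r q k) (hHqq : ∀ q k, 0 < H q q k)
    (hΓ : ∀ q, 0 < Γ q) (hWF : IsWF H Γ pmax WF) {b2 : ℝ}
    (hb2 : ∀ k, specRad ((Hmat H Γ pmax WF k).transpose * Hmat H Γ pmax WF k) ≤ b2)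
    {p p' : Fin Q → Fin N → ℝ}
    (hp : ∀ r, p r ∈ stratSet (pmax r)) (hp' : ∀ r, p' r ∈ stratSet (pmax r))
    (hsp : ∀ r k, k ∉ Dset pmax WF r → p r k = 0)
    (hsp' : ∀ r k, k ∉ Dset pmax WF r → p' r k = 0) :
    ∑ q, ∑ k, (WF q p k - WF q p' k)^2 ≤ b2 * ∑ q, ∑ k, (p q k - p' q k)^2 := by
  have huser : ∀ q, ∑ k, (WF q p k - WF q p' k)^2
      ≤ ∑ k, ((Hmat H Γ pmax WF k).mulVec (fun r => p' r k - p r k) q)^2 := by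
    intro q
    have hx := hWF q p (fun r _ => hp r)
    have hx' := hWF q p' (fun r _ => hp' r)
    rw [isProjOn_iff] at hx hx'
    have h1 := hx.2 _ hx'.1
    have h2 := hx'.2 _ hx.1
    have hEkey : ∑ k, (WF q p k - WF q p' k)^2
        ≤ ∑ k, (WF q p k - WF q p' k) * (insr H Γ q p' k - insr H Γ q p k) := by
      have hco : (∑ k, (WF q p' k - WF q p k) * ((fun k => -insr H Γ q p k) k - WF q p k))
          + ∑ k, (WF q p k - WF q p' k) * ((fun k => -insr H Γ q p' k) k - WF q p' k)
          = ∑ k, (WF q p k - WF q p' k)^2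
            - ∑ k, (WF q p k - WF q p' k) * (insr H Γ q p' k - insr H Γ q p k) := by
        rw [← Finset.sum_add_distrib, ← Finset.sum_sub_distrib]
        exact Finset.sum_congr rfl fun k _ => by simp only []; ring
      linarith [h1, h2, hco]
    -- identify each term with the matrix-vector product
    have hterm : ∀ k, (WF q p k - WF q p' k) * (insr H Γ q p' k - insr H Γ q p k)
        ≤ (WF q p k - WF q p' k) * ((Hmat H Γ pmax WF k).mulVec (fun r => p' r k - p r k) q) := by
      intro k
      by_cases hk : k ∈ Dset pmax WF q
      · -- equality on D q
        have hmv : insr H Γ q p' k - insr H Γ q p k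
            = (Hmat H Γ pmax WF k).mulVec (fun r => p' r k - p r k) q := by
          have hrhs : (Hmat H Γ pmax WF k).mulVec (fun r => p' r k - p r k) q
              = ∑ r ∈ Finset.univ.erase q, Γ q * H r q k / H q q k * (p' r k - p r k) := by
            have step1 : (Hmat H Γ pmax WF k).mulVec (fun r => p' r k - p r k) q
                = ∑ r, (if q ≠ r ∧ k ∈ Dset pmax WF q ∧ k ∈ Dset pmax WF r then
                    Γ q * H r q k / H q q k else 0) * (p' r k - p r k) := by
              simp [Matrix.mulVec, dotProduct, Hmat]
            rw [step1, ← Finset.add_sum_erase _ _ (Finset.mem_univ q)]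
            have hq0 : (if q ≠ q ∧ k ∈ Dset pmax WF q ∧ k ∈ Dset pmax WF q then
                Γ q * H q q k / H q q k else 0) * (p' q k - p q k) = 0 := by
              simp
            rw [hq0, zero_add]
            refine Finset.sum_congr rfl fun r hr => ?_
            have hrq : r ≠ q := Finset.ne_of_mem_erase hr
            by_cases hkr : k ∈ Dset pmax WF r
            · rw [if_pos ⟨hrq.symm, hk, hkr⟩]
            · have e1 : p r k = 0 := hsp r k hkr
              have e2 : p' r k = 0 := hsp' r k hkr
              rw [e1, e2]
              simp
          have hlhs : insr H Γ q p' k - insr H Γ q p k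
              = ∑ r ∈ Finset.univ.erase q, Γ q * H r q k / H q q k * (p' r k - p r k) := by
            unfold insr
            rw [div_sub_div_same, div_eq_iff (hHqq q k).ne', Finset.sum_mul]
            have hpt : ∀ r ∈ Finset.univ.erase q,
                Γ q * H r q k / H q q k * (p' r k - p r k) * H q q k
                = Γ q * (H r q k * p' r k) - Γ q * (H r q k * p r k) := by
              intro r _
              have hne : H q q k ≠ 0 := (hHqq q k).ne'
              field_simp
            rw [Finset.sum_congr rfl hpt, Finset.sum_sub_distrib,
              ← Finset.mul_sum, ← Finset.mul_sum]
            ring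
          rw [hlhs, hrhs]
        rw [hmv]
      · have e1 : WF q p k = 0 := WFzero hWF q p (fun r _ => hp r) hk
        have e2 : WF q p' k = 0 := WFzero hWF q p' (fun r _ => hp' r) hk
        rw [e1, e2]
        simp
    have hEkey2 : ∑ k, (WF q p k - WF q p' k)^2
        ≤ ∑ k, (WF q p k - WF q p' k)
            * ((Hmat H Γ pmax WF k).mulVec (fun r => p' r k - p r k) q) :=
      le_trans hEkey (Finset.sum_le_sum fun k _ => hterm k)
    have hCS := Finset.sum_mul_sq_le_sq_mul_sq Finset.univ
      (fun k => WF q p k - WF q p' k)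
      (fun k => (Hmat H Γ pmax WF k).mulVec (fun r => p' r k - p r k) q)
    have hE0 : 0 ≤ ∑ k, (WF q p k - WF q p' k)^2 :=
      Finset.sum_nonneg fun k _ => sq_nonneg _
    have hG0 : 0 ≤ ∑ k, ((Hmat H Γ pmax WF k).mulVec (fun r => p' r k - p r k) q)^2 :=
      Finset.sum_nonneg fun k _ => sq_nonneg _
    nlinarith [hEkey2, hCS, hE0, hG0]
  calc ∑ q, ∑ k, (WF q p k - WF q p' k)^2
      ≤ ∑ q, ∑ k, ((Hmat H Γ pmax WF k).mulVec (fun r => p' r k - p r k) q)^2 :=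
        Finset.sum_le_sum fun q _ => huser q
    _ = ∑ k, ∑ q, ((Hmat H Γ pmax WF k).mulVec (fun r => p' r k - p r k) q)^2 :=
        Finset.sum_comm
    _ ≤ ∑ k, b2 * ∑ r, (p' r k - p r k)^2 := by
        refine Finset.sum_le_sum fun k _ => ?_
        refine le_trans (rayleigh (Hmat H Γ pmax WF k) (fun r => p' r k - p r k)) ?_
        exact mul_le_mul_of_nonneg_right (hb2 k)
          (Finset.sum_nonneg fun r _ => sq_nonneg _)
    _ = b2 * ∑ k, ∑ r, (p' r k - p r k)^2 := by rw [← Finset.mul_sum]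
    _ = b2 * ∑ r, ∑ k, (p' r k - p r k)^2 := by rw [Finset.sum_comm]
    _ = b2 * ∑ q, ∑ k, (p q k - p' q k)^2 := by
        congr 1
        exact Finset.sum_congr rfl fun r _ => Finset.sum_congr rfl fun k _ => by ring

end Contraction

end S7Aux
namespace S7Aux

def S7emb {N Q : ℕ} (p : Fin Q → Fin N → ℝ) : EuclideanSpace ℝ (Fin Q × Fin N) :=
  WithLp.toLp 2 (fun x => p x.1 x.2)

lemma profDist_eq_dist {N Q : ℕ} (p p' : Fin Q → Fin N → ℝ) :
    profDist p p' = dist (S7emb p) (S7emb p') := by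
  rw [EuclideanSpace.dist_eq, profDist]
  congr 1
  rw [Fintype.sum_prod_type]
  refine Finset.sum_congr rfl fun q _ => Finset.sum_congr rfl fun k _ => ?_
  rw [Real.dist_eq, sq_abs]
  rfl

lemma emb_inj {N Q : ℕ} {p p' : Fin Q → Fin N → ℝ} (h : S7emb p = S7emb p') : p = p' :=
  funext fun q => funext fun k => congrArg (fun v => v (q, k)) h

lemma profDist_nonneg {N Q : ℕ} (p p' : Fin Q → Fin N → ℝ) : 0 ≤ profDist p p' :=
  Real.sqrt_nonneg _

end S7Aux
open S7Aux in
theorem statement7 {N Q : ℕ} (hN : 1 ≤ N) (hQ : 2 ≤ Q)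
    (H : Fin Q → Fin Q → Fin N → ℝ) (Γ : Fin Q → ℝ) (pmax : Fin Q → Fin N → ℝ)
    (hH : ∀ r q k, 0 ≤ H r q k) (hHqq : ∀ q k, 0 < H q q k)
    (hΓ : ∀ q, 0 < Γ q) (hpmax : ∀ q k, 0 ≤ pmax q k)
    (hcap : ∀ q, 1 < (1 / (N : ℝ)) * ∑ k, pmax q k)
    (WF : Fin Q → (Fin Q → Fin N → ℝ) → Fin N → ℝ) (hWF : IsWF H Γ pmax WF)
    (hspec : ∀ k, specNorm (Hmat H Γ pmax WF k) < 1) :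
    ∃ pstar : Fin Q → Fin N → ℝ, IsNE H Γ pmax pstar ∧
      (∀ p', IsNE H Γ pmax p' → p' = pstar) ∧
      ∀ pseq : ℕ → Fin Q → Fin N → ℝ,
        (∀ q, pseq 0 q ∈ stratSet (pmax q)) →
        (∀ n q, pseq (n + 1) q = WF q (pseq n)) →
        ∃ C β : ℝ, 0 ≤ C ∧ 0 ≤ β ∧ β < 1 ∧
          ∀ n, profDist (pseq n) pstar ≤ C * β ^ n := by
  classical
  have hNR : (0:ℝ) < N := by exact_mod_cast hN
  have hQ0 : 0 < Q := lt_of_lt_of_le two_pos hQ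
  have hWFmem : ∀ (p : Fin Q → Fin N → ℝ), (∀ r, p r ∈ stratSet (pmax r)) →
      ∀ q, WF q p ∈ stratSet (pmax q) := fun p hp q => (hWF q p (fun r _ => hp r)).1
  have hWFsupp : ∀ (p : Fin Q → Fin N → ℝ), (∀ r, p r ∈ stratSet (pmax r)) →
      ∀ q k, k ∉ Dset pmax WF q → WF q p k = 0 :=
    fun p hp q k hk => WFzero hWF q p (fun r _ => hp r) hk
  have hfinne : (Finset.univ : Finset (Fin N)).Nonempty := ⟨⟨0, hN⟩, Finset.mem_univ _⟩
  set b : ℝ := Finset.univ.sup' hfinne (fun k => specNorm (Hmat H Γ pmax WF k)) with hbdef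
  have hb0 : 0 ≤ b := by
    rw [hbdef]
    exact le_trans (Real.sqrt_nonneg _)
      (Finset.le_sup' (fun k => specNorm (Hmat H Γ pmax WF k))
        (Finset.mem_univ (⟨0, hN⟩ : Fin N)))
  have hb1 : b < 1 := by
    rw [hbdef]
    exact (Finset.sup'_lt_iff hfinne).2 fun k _ => hspec k
  have hb2 : ∀ k, specRad ((Hmat H Γ pmax WF k).transpose * Hmat H Γ pmax WF k) ≤ b^2 := by
    intro k
    have h1 : specNorm (Hmat H Γ pmax WF k) ≤ b := by
      rw [hbdef]
      exact Finset.le_sup' (fun k => specNorm (Hmat H Γ pmax WF k)) (Finset.mem_univ k)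
    have h2 : 0 ≤ specRad ((Hmat H Γ pmax WF k).transpose * Hmat H Γ pmax WF k) :=
      specRad_nonneg hQ0 _
    have h3 : specNorm (Hmat H Γ pmax WF k)^2
        = specRad ((Hmat H Γ pmax WF k).transpose * Hmat H Γ pmax WF k) := by
      unfold specNorm
      exact Real.sq_sqrt h2
    calc specRad ((Hmat H Γ pmax WF k).transpose * Hmat H Γ pmax WF k)
        = specNorm (Hmat H Γ pmax WF k)^2 := h3.symm
      _ ≤ b^2 := pow_le_pow_left₀ (Real.sqrt_nonneg _) h1 2
  have hcontrP : ∀ p p' : Fin Q → Fin N → ℝ,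
      (∀ r, p r ∈ stratSet (pmax r)) → (∀ r, p' r ∈ stratSet (pmax r)) →
      (∀ r k, k ∉ Dset pmax WF r → p r k = 0) →
      (∀ r k, k ∉ Dset pmax WF r → p' r k = 0) →
      profDist (fun q => WF q p) (fun q => WF q p') ≤ b * profDist p p' := by
    intro p p' h1 h2 h3 h4
    have hsq := contraction hH hHqq hΓ hWF hb2 h1 h2 h3 h4
    rw [profDist, profDist]
    have h5 := Real.sqrt_le_sqrt hsq
    rw [Real.sqrt_mul (sq_nonneg b), Real.sqrt_sq hb0] at h5
    exact h5
  -- base point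
  set p00 : Fin Q → Fin N → ℝ := fun q k => ((N:ℝ) / ∑ j, pmax q j) * pmax q k with hp00
  have hp0 : ∀ q, p00 q ∈ stratSet (pmax q) := by
    intro q
    have hsum : (N:ℝ) < ∑ j, pmax q j := by
      have h := mul_lt_mul_of_pos_left (hcap q) hNR
      have he : (N:ℝ) * (1 / (N:ℝ) * ∑ k, pmax q k) = ∑ k, pmax q k := by
        field_simp
      rw [he, mul_one] at h
      exact h
    have hpos : (0:ℝ) < ∑ j, pmax q j := lt_trans hNR hsum
    refine ⟨?_, fun k => ⟨?_, ?_⟩⟩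
    · rw [hp00]
      rw [← Finset.mul_sum]
      field_simp
    · exact mul_nonneg (by positivity) (hpmax q k)
    · have hc1 : (N:ℝ)/(∑ j, pmax q j) ≤ 1 := by
        rw [div_le_one hpos]; linarith
      simp only [hp00]
      nlinarith [hpmax q k]
  -- iterates from the base point
  set pb : ℕ → (Fin Q → Fin N → ℝ) :=
    fun n => Nat.rec (motive := fun _ => (Fin Q → Fin N → ℝ))
      p00 (fun _ prev => fun q => WF q prev) n with hpbdef
  have hpbsucc : ∀ n, pb (n+1) = fun q => WF q (pb n) := fun n => rfl
  have hpbfeas : ∀ n q, pb n q ∈ stratSet (pmax q) := by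
    intro n
    induction n with
    | zero => exact hp0
    | succ n ih =>
      rw [hpbsucc n]
      exact fun q => hWFmem (pb n) ih q
  have hpbsupp : ∀ n q k, k ∉ Dset pmax WF q → pb (n+1) q k = 0 := by
    intro n q k hk
    rw [hpbsucc n]
    exact hWFsupp (pb n) (hpbfeas n) q k hk
  -- geometric decay of successive distances
  set f : ℕ → EuclideanSpace ℝ (Fin Q × Fin N) := fun n => S7emb (pb (n+1)) with hfdef
  set C1 : ℝ := dist (f 0) (f 1) with hC1
  have hgeo : ∀ n, dist (f n) (f (n+1)) ≤ C1 * b^n := by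
    intro n
    induction n with
    | zero =>
      rw [pow_zero, mul_one]
      exact le_of_eq hC1.symm
    | succ n ih =>
      have heq1 : f (n+1) = S7emb (fun q => WF q (pb (n+1))) := rfl
      have heq2 : f (n+2) = S7emb (fun q => WF q (pb (n+2))) := rfl
      calc dist (f (n+1)) (f (n+2))
          = profDist (fun q => WF q (pb (n+1))) (fun q => WF q (pb (n+2))) := by
            rw [heq1, heq2, ← profDist_eq_dist]
        _ ≤ b * profDist (pb (n+1)) (pb (n+2)) :=
            hcontrP _ _ (hpbfeas (n+1)) (hpbfeas (n+2)) (hpbsupp n) (hpbsupp (n+1))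
        _ = b * dist (f n) (f (n+1)) := by rw [profDist_eq_dist]
        _ ≤ b * (C1 * b^n) := mul_le_mul_of_nonneg_left ih hb0
        _ = C1 * b^(n+1) := by ring
  have hcau : CauchySeq f := cauchySeq_of_le_geometric b C1 hb1 hgeo
  obtain ⟨L, hL⟩ := cauchySeq_tendsto_of_complete hcau
  set pstar : Fin Q → Fin N → ℝ := fun q k => L (q, k) with hpstar
  have hLe : S7emb pstar = L := PiLp.ext fun x => congrArg L (Prod.mk.eta)
  have hcoord : ∀ q k, Filter.Tendsto (fun n => pb (n+1) q k) Filter.atTop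
      (nhds (pstar q k)) := by
    intro q k
    have hc : Continuous (fun v : EuclideanSpace ℝ (Fin Q × Fin N) => v (q, k)) :=
      (continuous_apply ((q, k) : Fin Q × Fin N)).comp
        (PiLp.continuous_ofLp 2 (fun _ : Fin Q × Fin N => ℝ))
    exact (hc.tendsto L).comp hL
  have hfeasstar : ∀ q, pstar q ∈ stratSet (pmax q) := by
    intro q
    refine ⟨?_, fun k => ⟨?_, ?_⟩⟩
    · have h1 : Filter.Tendsto (fun n => (1/(N:ℝ)) * ∑ k, pb (n+1) q k) Filter.atTop
          (nhds ((1/(N:ℝ)) * ∑ k, pstar q k)) :=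
        (tendsto_finset_sum _ (fun k _ => hcoord q k)).const_mul _
      have h2 : (fun n => (1/(N:ℝ)) * ∑ k, pb (n+1) q k) = fun _ => (1:ℝ) :=
        funext fun n => (hpbfeas (n+1) q).1
      rw [h2] at h1
      exact (tendsto_nhds_unique h1 tendsto_const_nhds)
    · exact ge_of_tendsto' (hcoord q k) (fun n => ((hpbfeas (n+1) q).2 k).1)
    · exact le_of_tendsto' (hcoord q k) (fun n => ((hpbfeas (n+1) q).2 k).2)
  have hsuppstar : ∀ q k, k ∉ Dset pmax WF q → pstar q k = 0 := by
    intro q k hk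
    have h1 : (fun n => pb (n+1) q k) = fun _ => (0:ℝ) :=
      funext fun n => hpbsupp n q k hk
    have h2 := hcoord q k
    rw [h1] at h2
    exact (tendsto_nhds_unique h2 tendsto_const_nhds)
  -- fixed point
  have hfix : (fun q => WF q pstar) = pstar := by
    have hbnd : ∀ n, dist (f (n+1)) (S7emb (fun q => WF q pstar))
        ≤ b * dist (f n) (S7emb pstar) := by
      intro n
      have heq1 : f (n+1) = S7emb (fun q => WF q (pb (n+1))) := rfl
      calc dist (f (n+1)) (S7emb (fun q => WF q pstar))
          = profDist (fun q => WF q (pb (n+1))) (fun q => WF q pstar) := by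
            rw [heq1, ← profDist_eq_dist]
        _ ≤ b * profDist (pb (n+1)) pstar :=
            hcontrP _ _ (hpbfeas (n+1)) hfeasstar (hpbsupp n) hsuppstar
        _ = b * dist (f n) (S7emb pstar) := by rw [profDist_eq_dist]
    have hd0 : Filter.Tendsto (fun n => dist (f n) (S7emb pstar)) Filter.atTop (nhds 0) := by
      rw [hLe]
      exact tendsto_iff_dist_tendsto_zero.1 hL
    have hup : Filter.Tendsto (fun n => b * dist (f n) (S7emb pstar)) Filter.atTop
        (nhds 0) := by
      have := hd0.const_mul b
      simpa using this
    have hto : Filter.Tendsto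
        (fun n => dist (f (n+1)) (S7emb (fun q => WF q pstar))) Filter.atTop (nhds 0) :=
      squeeze_zero (fun n => dist_nonneg) hbnd hup
    have h2 : Filter.Tendsto (fun n => f (n+1)) Filter.atTop
        (nhds (S7emb (fun q => WF q pstar))) :=
      tendsto_iff_dist_tendsto_zero.2 hto
    have h3 : Filter.Tendsto (fun n => f (n+1)) Filter.atTop (nhds L) :=
      hL.comp (Filter.tendsto_add_atTop_nat 1)
    have h4 : S7emb (fun q => WF q pstar) = L := tendsto_nhds_unique h2 h3
    exact emb_inj (h4.trans hLe.symm)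
  -- pstar is a Nash equilibrium
  have hNE : IsNE H Γ pmax pstar := by
    rw [isNE_iff hN hH hHqq hΓ]
    refine ⟨hfeasstar, fun q => ?_⟩
    have hσ : ∀ k, 0 < insr H Γ q pstar k := insr_pos hH hHqq hΓ (fun r _ => hfeasstar r)
    rw [vig_iff_proj hN hσ (hfeasstar q)]
    have hproj := hWF q pstar (fun r _ => hfeasstar r)
    have heq : WF q pstar = pstar q := congrFun hfix q
    rwa [heq] at hproj
  -- uniqueness
  have huniq : ∀ p', IsNE H Γ pmax p' → p' = pstar := by
    intro p' hNE'
    rw [isNE_iff hN hH hHqq hΓ] at hNE'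
    obtain ⟨hfeas', hvi'⟩ := hNE'
    have hfix' : ∀ q, p' q = WF q p' := by
      intro q
      have hσ : ∀ k, 0 < insr H Γ q p' k := insr_pos hH hHqq hΓ (fun r _ => hfeas' r)
      have h1 : IsProjOn (stratSet (pmax q)) (fun k => -insr H Γ q p' k) (p' q) :=
        (vig_iff_proj hN hσ (hfeas' q)).1 (hvi' q)
      exact proj_unique h1 (hWF q p' (fun r _ => hfeas' r))
    have hsupp' : ∀ q k, k ∉ Dset pmax WF q → p' q k = 0 := by
      intro q k hk
      rw [hfix' q]
      exact hWFsupp p' hfeas' q k hk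
    have hsq := contraction hH hHqq hΓ hWF hb2 hfeas' hfeasstar hsupp' hsuppstar
    have hsq' : ∑ q, ∑ k, (p' q k - pstar q k)^2
        ≤ b^2 * ∑ q, ∑ k, (p' q k - pstar q k)^2 := by
      calc ∑ q, ∑ k, (p' q k - pstar q k)^2
          = ∑ q, ∑ k, (WF q p' k - WF q pstar k)^2 := by
            refine Finset.sum_congr rfl fun q _ => Finset.sum_congr rfl fun k _ => ?_
            rw [← congrFun (hfix' q) k, congrFun (congrFun hfix q) k]
        _ ≤ b^2 * ∑ q, ∑ k, (p' q k - pstar q k)^2 := hsq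
    have hE0 : 0 ≤ ∑ q, ∑ k, (p' q k - pstar q k)^2 :=
      Finset.sum_nonneg fun q _ => Finset.sum_nonneg fun k _ => sq_nonneg _
    have hb2lt : b^2 < 1 := by nlinarith [hb0, hb1]
    have hEzero : ∑ q, ∑ k, (p' q k - pstar q k)^2 = 0 := by nlinarith [hsq', hE0, hb2lt]
    funext q
    funext k
    have h1 : ∑ k, (p' q k - pstar q k)^2 = 0 :=
      (Finset.sum_eq_zero_iff_of_nonneg
        (fun q _ => Finset.sum_nonneg fun k _ => sq_nonneg _)).1 hEzero q (Finset.mem_univ q)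
    have h2 : (p' q k - pstar q k)^2 = 0 :=
      (Finset.sum_eq_zero_iff_of_nonneg (fun k _ => sq_nonneg _)).1 h1 k (Finset.mem_univ k)
    have := sq_eq_zero_iff.1 h2
    linarith
  refine ⟨pstar, hNE, huniq, ?_⟩
  intro pseq h0 hstep
  have hfeas : ∀ n q, pseq n q ∈ stratSet (pmax q) := by
    intro n
    induction n with
    | zero => exact h0
    | succ n ih =>
      intro q
      rw [hstep n q]
      exact hWFmem (pseq n) ih q
  have hsupp : ∀ n q k, k ∉ Dset pmax WF q → pseq (n+1) q k = 0 := by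
    intro n q k hk
    rw [hstep n q]
    exact hWFsupp (pseq n) (hfeas n) q k hk
  have hkey : ∀ n, profDist (pseq (n+2)) pstar ≤ b * profDist (pseq (n+1)) pstar := by
    intro n
    have h1 : pseq (n+2) = fun q => WF q (pseq (n+1)) := funext fun q => hstep (n+1) q
    calc profDist (pseq (n+2)) pstar
        = profDist (fun q => WF q (pseq (n+1))) (fun q => WF q pstar) := by
          rw [← h1, hfix]
      _ ≤ b * profDist (pseq (n+1)) pstar :=
          hcontrP _ _ (hfeas (n+1)) hfeasstar (hsupp n) hsuppstar
  set β : ℝ := max b (1/2) with hβdef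
  have hβ0 : (0:ℝ) ≤ β := le_trans (by norm_num) (le_max_right _ _)
  have hβhalf : (1/2:ℝ) ≤ β := le_max_right _ _
  have hβ1 : β < 1 := max_lt hb1 (by norm_num)
  have hbβ : b ≤ β := le_max_left _ _
  have hdn : ∀ m, profDist (pseq (m+1)) pstar ≤ profDist (pseq 1) pstar * β^m := by
    intro m
    induction m with
    | zero => simp
    | succ m ih =>
      calc profDist (pseq (m+2)) pstar ≤ b * profDist (pseq (m+1)) pstar := hkey m
        _ ≤ β * (profDist (pseq 1) pstar * β^m) :=
            mul_le_mul hbβ ih (profDist_nonneg _ _) hβ0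
        _ = profDist (pseq 1) pstar * β^(m+1) := by ring
  refine ⟨max (profDist (pseq 0) pstar) (2 * profDist (pseq 1) pstar), β,
    le_trans (profDist_nonneg _ _) (le_max_left _ _), hβ0, hβ1, ?_⟩
  intro n
  match n with
  | 0 =>
    rw [pow_zero, mul_one]
    exact le_max_left _ _
  | (m+1) =>
    have h1 := hdn m
    have hd1 : 0 ≤ profDist (pseq 1) pstar := profDist_nonneg _ _
    have hC2 : 2 * profDist (pseq 1) pstar
        ≤ max (profDist (pseq 0) pstar) (2 * profDist (pseq 1) pstar) := le_max_right _ _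
    have hC0 : 0 ≤ max (profDist (pseq 0) pstar) (2 * profDist (pseq 1) pstar) :=
      le_trans (by linarith) hC2
    have hC : profDist (pseq 1) pstar
        ≤ max (profDist (pseq 0) pstar) (2 * profDist (pseq 1) pstar) * β := by
      nlinarith [hβhalf, hC2, hC0, hd1]
    calc profDist (pseq (m+1)) pstar ≤ profDist (pseq 1) pstar * β^m := h1
      _ ≤ (max (profDist (pseq 0) pstar) (2 * profDist (pseq 1) pstar) * β) * β^m :=
          mul_le_mul_of_nonneg_right hC (pow_nonneg hβ0 m)
      _ = max (profDist (pseq 0) pstar) (2 * profDist (pseq 1) pstar) * β^(m+1) := by ring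
end
end

section
/- Let α_q ∈ [0,1) for each q and let w ∈ ℝ^Q with w_q > 0 for all q satisfy ‖H^max‖_{∞,mat}^w = max_q (1/w_q)·Σ_{r=1}^Q [H^max]_{qr}·w_r < 1. Define T : 𝒫^eff → 𝒫^eff blockwise by T_q(p) = α_q·p_q + (1−α_q)·Π_q(−insr_q(p_{-q})), where Π_q denotes the Euclidean projection onto 𝒫_q^eff. Then T is a block-contraction: for all p, p' ∈ 𝒫^eff, max_q ‖T_q(p) − T_q(p')‖₂/w_q ≤ β · max_q ‖p_q − p'_q‖₂/w_q, where β = max_q (α_q + (1−α_q)·(1/w_q)·Σ_{r=1}^Q [H^max]_{qr}·w_r) satisfies β ∈ [0,1). -/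
open Finset
open scoped Classical

noncomputable section

lemma sqrt_add_le' {N : ℕ} (a b : Fin N → ℝ) :
    Real.sqrt (∑ k, (a k + b k) ^ 2) ≤
      Real.sqrt (∑ k, a k ^ 2) + Real.sqrt (∑ k, b k ^ 2) := by
  have hA : (0:ℝ) ≤ ∑ k, a k ^ 2 := Finset.sum_nonneg fun _ _ => sq_nonneg _
  have hB : (0:ℝ) ≤ ∑ k, b k ^ 2 := Finset.sum_nonneg fun _ _ => sq_nonneg _
  have hcs := Real.sum_mul_le_sqrt_mul_sqrt Finset.univ a b
  have h1 : ∑ k, (a k + b k)^2 ≤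
      (Real.sqrt (∑ k, a k ^ 2) + Real.sqrt (∑ k, b k ^2))^2 := by
    have e : ∑ k, (a k + b k)^2
        = ∑ k, a k ^2 + 2*(∑ k, a k * b k) + ∑ k, b k ^2 := by
      rw [Finset.mul_sum, ← Finset.sum_add_distrib, ← Finset.sum_add_distrib]
      exact Finset.sum_congr rfl fun k _ => by ring
    have sA := Real.sq_sqrt hA
    have sB := Real.sq_sqrt hB
    nlinarith [Real.sqrt_nonneg (∑ k, a k ^2), Real.sqrt_nonneg (∑ k, b k ^2)]
  calc Real.sqrt (∑ k, (a k + b k)^2)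
      ≤ Real.sqrt ((Real.sqrt (∑ k, a k^2) + Real.sqrt (∑ k, b k^2))^2) :=
        Real.sqrt_le_sqrt h1
    _ = _ := Real.sqrt_sq (by positivity)

lemma sqrt_smul' {N : ℕ} {c : ℝ} (hc : 0 ≤ c) (v : Fin N → ℝ) :
    Real.sqrt (∑ k, (c * v k)^2) = c * Real.sqrt (∑ k, v k ^2) := by
  have h : ∑ k, (c * v k)^2 = c^2 * ∑ k, v k ^2 := by
    rw [Finset.mul_sum]; exact Finset.sum_congr rfl fun k _ => by ring
  rw [h, Real.sqrt_mul (sq_nonneg c), Real.sqrt_sq hc]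

lemma proj_vi' {N : ℕ} {S : Set (Fin N → ℝ)} (hS : Convex ℝ S)
    {z x : Fin N → ℝ} (hx : IsProjOn S z x) {y : Fin N → ℝ} (hy : y ∈ S) :
    0 ≤ ∑ k, (x k - z k) * (y k - x k) := by
  by_contra hc
  push_neg at hc
  set c : ℝ := ∑ k, (x k - z k) * (y k - x k) with hcdef
  set B : ℝ := ∑ k, (y k - x k) ^ 2 with hBdef
  have hB : 0 ≤ B := Finset.sum_nonneg fun _ _ => sq_nonneg _
  set t : ℝ := min 1 (-c / (B + 1)) with htdef
  have ht0 : 0 < t := lt_min one_pos (div_pos (by linarith) (by linarith))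
  have ht1 : t ≤ 1 := min_le_left _ _
  have hmem : (fun k => (1 - t) * x k + t * y k) ∈ S := by
    have h := hS hx.1 hy (by linarith : (0:ℝ) ≤ 1 - t) ht0.le (by ring)
    have e : (fun k => (1 - t) * x k + t * y k) = (1 - t) • x + t • y := by
      funext k; simp [smul_eq_mul]
    rw [e]; exact h
  have hle := hx.2 _ hmem
  have hexp : dsq (fun k => (1 - t) * x k + t * y k) z
      = dsq x z + 2 * t * c + t ^ 2 * B := by
    simp only [dsq, hcdef, hBdef, Finset.mul_sum, ← Finset.sum_add_distrib]
    exact Finset.sum_congr rfl fun k _ => by ring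
  rw [hexp] at hle
  have key : 0 ≤ 2 * c + t * B := by nlinarith
  have ht2 : t ≤ -c / (B + 1) := min_le_right _ _
  have h2 : t * B ≤ (-c / (B + 1)) * B := mul_le_mul_of_nonneg_right ht2 hB
  have h3 : (-c / (B + 1)) * B ≤ -c := by
    rw [div_mul_eq_mul_div, div_le_iff₀ (by linarith)]
    nlinarith
  linarith

lemma proj_contract' {N : ℕ} {S : Set (Fin N → ℝ)} (hS : Convex ℝ S)
    {z z' x x' : Fin N → ℝ} (hx : IsProjOn S z x) (hx' : IsProjOn S z' x') :
    ∑ k, (x k - x' k) ^ 2 ≤ ∑ k, (z k - z' k) * (x k - x' k) := by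
  have h1 := proj_vi' hS hx hx'.1
  have h2 := proj_vi' hS hx' hx.1
  have e : ∑ k, ((x k - z k) * (x' k - x k) + (x' k - z' k) * (x k - x' k))
      = ∑ k, ((z k - z' k) * (x k - x' k) - (x k - x' k) ^ 2) :=
    Finset.sum_congr rfl fun k _ => by ring
  rw [Finset.sum_add_distrib, Finset.sum_sub_distrib] at e
  linarith

lemma maxRatio_bdd {N Q : ℕ} (H : Fin Q → Fin Q → Fin N → ℝ)
    (pmax : Fin Q → Fin N → ℝ) (WF : Fin Q → (Fin Q → Fin N → ℝ) → Fin N → ℝ)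
    (q r : Fin Q) :
    BddAbove {x : ℝ | ∃ k : Fin N,
      (k ∈ Dset pmax WF q ∧ k ∈ Dset pmax WF r) ∧ x = H r q k / H q q k} := by
  apply Set.Finite.bddAbove
  apply (Set.finite_range (fun k : Fin N => H r q k / H q q k)).subset
  rintro x ⟨k, _, rfl⟩
  exact ⟨k, rfl⟩

lemma le_maxRatio {N Q : ℕ} (H : Fin Q → Fin Q → Fin N → ℝ)
    (pmax : Fin Q → Fin N → ℝ) (WF : Fin Q → (Fin Q → Fin N → ℝ) → Fin N → ℝ)
    {q r : Fin Q} {k : Fin N} (hkq : k ∈ Dset pmax WF q) (hkr : k ∈ Dset pmax WF r) :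
    H r q k / H q q k ≤ maxRatio H pmax WF q r :=
  le_csSup (maxRatio_bdd H pmax WF q r) ⟨k, ⟨hkq, hkr⟩, rfl⟩

lemma maxRatio_nonneg {N Q : ℕ} {H : Fin Q → Fin Q → Fin N → ℝ}
    (pmax : Fin Q → Fin N → ℝ) (WF : Fin Q → (Fin Q → Fin N → ℝ) → Fin N → ℝ)
    (hH : ∀ r q k, 0 ≤ H r q k) (hHqq : ∀ q k, 0 < H q q k) (q r : Fin Q) :
    0 ≤ maxRatio H pmax WF q r := by
  rcases Set.eq_empty_or_nonempty {x : ℝ | ∃ k : Fin N,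
      (k ∈ Dset pmax WF q ∧ k ∈ Dset pmax WF r) ∧ x = H r q k / H q q k} with h | h
  · rw [maxRatio, h, Real.sSup_empty]
  · obtain ⟨x, k, hk, rfl⟩ := h
    exact le_trans (div_nonneg (hH r q k) (hHqq q k).le)
      (le_maxRatio H pmax WF hk.1 hk.2)

lemma effSet_convex {N Q : ℕ} (pmax : Fin Q → Fin N → ℝ)
    (WF : Fin Q → (Fin Q → Fin N → ℝ) → Fin N → ℝ) (q : Fin Q) :
    Convex ℝ (effSet pmax WF q) := by
  rintro p ⟨⟨hsum, hbd⟩, hzero⟩ p' ⟨⟨hsum', hbd'⟩, hzero'⟩ a b ha hb hab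
  have happ : ∀ k, (a • p + b • p') k = a * p k + b * p' k := fun k => by
    simp [smul_eq_mul]
  refine ⟨⟨?_, fun k => ⟨?_, ?_⟩⟩, fun k hk => ?_⟩
  · have e : ∑ k, (a • p + b • p') k = a * ∑ k, p k + b * ∑ k, p' k := by
      simp only [happ, Finset.sum_add_distrib, Finset.mul_sum]
    rw [e]
    linear_combination a * hsum + b * hsum' + hab
  · rw [happ]
    exact add_nonneg (mul_nonneg ha (hbd k).1) (mul_nonneg hb (hbd' k).1)
  · rw [happ]
    have h1 : a * p k ≤ a * pmax q k := mul_le_mul_of_nonneg_left (hbd k).2 ha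
    have h2 : b * p' k ≤ b * pmax q k := mul_le_mul_of_nonneg_left (hbd' k).2 hb
    have h3 : a * pmax q k + b * pmax q k = pmax q k := by
      linear_combination pmax q k * hab
    linarith
  · rw [happ, hzero k hk, hzero' k hk]; ring


/-- If the `w`-weighted maximum matrix norm of `H^max` is less than one,
then the smoothed multiuser waterfilling mapping (with projections onto the effective
strategy sets) is a block-contraction of modulus `β` in the `w`-weighted block-maximum
norm. -/
theorem statement16 {N Q : ℕ} (hN : 1 ≤ N) (hQ : 2 ≤ Q)
    (H : Fin Q → Fin Q → Fin N → ℝ) (Γ : Fin Q → ℝ) (pmax : Fin Q → Fin N → ℝ)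
    (hH : ∀ r q k, 0 ≤ H r q k) (hHqq : ∀ q k, 0 < H q q k)
    (hΓ : ∀ q, 0 < Γ q) (hpmax : ∀ q k, 0 ≤ pmax q k)
    (hcap : ∀ q, 1 < (1 / (N : ℝ)) * ∑ k, pmax q k)
    (WF : Fin Q → (Fin Q → Fin N → ℝ) → Fin N → ℝ) (hWF : IsWF H Γ pmax WF)
    (α : Fin Q → ℝ) (hα : ∀ q, 0 ≤ α q ∧ α q < 1)
    (w : Fin Q → ℝ) (hw : ∀ q, 0 < w q)
    (hnorm : sSup (Set.range fun q =>
      (1 / w q) * ∑ r, Hmax H Γ pmax WF q r * w r) < 1)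
    (Proj : Fin Q → (Fin N → ℝ) → Fin N → ℝ)
    (hProj : ∀ q z, IsProjOn (effSet pmax WF q) z (Proj q z)) :
    ∃ β : ℝ,
      β = sSup (Set.range fun q => α q + (1 - α q) *
        ((1 / w q) * ∑ r, Hmax H Γ pmax WF q r * w r)) ∧
      0 ≤ β ∧ β < 1 ∧
      ∀ p p' : Fin Q → Fin N → ℝ,
        (∀ q, p q ∈ effSet pmax WF q) → (∀ q, p' q ∈ effSet pmax WF q) →
        sSup (Set.range fun q =>
            Real.sqrt (∑ k,
              ((α q * p q k + (1 - α q) * Proj q (fun j => -insr H Γ q p j) k) -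
               (α q * p' q k + (1 - α q) * Proj q (fun j => -insr H Γ q p' j) k)) ^ 2)
            / w q) ≤
          β * sSup (Set.range fun q =>
            Real.sqrt (∑ k, (p q k - p' q k) ^ 2) / w q) := by
  classical
  have hQ0 : 0 < Q := by omega
  haveI : Nonempty (Fin Q) := ⟨⟨0, hQ0⟩⟩
  have hconv : ∀ q, Convex ℝ (effSet pmax WF q) := effSet_convex pmax WF
  set S : Fin Q → ℝ := fun q => (1 / w q) * ∑ r, Hmax H Γ pmax WF q r * w r
    with hSdef
  have hHnn : ∀ q r, 0 ≤ Hmax H Γ pmax WF q r := by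
    intro q r
    by_cases h : q = r
    · simp [Hmax, h]
    · simp only [Hmax, Matrix.of_apply, if_neg h]
      exact mul_nonneg (hΓ q).le (maxRatio_nonneg pmax WF hH hHqq q r)
  have hSnn : ∀ q, 0 ≤ S q := fun q =>
    mul_nonneg (one_div_nonneg.mpr (hw q).le) (Finset.sum_nonneg fun r _ =>
      mul_nonneg (hHnn q r) (hw r).le)
  have hSlt : ∀ q, S q < 1 := fun q =>
    lt_of_le_of_lt (le_csSup ((Set.finite_range _).bddAbove) ⟨q, rfl⟩) hnorm
  have hβfnn : ∀ q, 0 ≤ α q + (1 - α q) * S q := fun q =>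
    add_nonneg (hα q).1 (mul_nonneg (by linarith [(hα q).2]) (hSnn q))
  have hβflt : ∀ q, α q + (1 - α q) * S q < 1 := by
    intro q
    nlinarith [(hα q).1, (hα q).2, hSnn q, hSlt q]
  refine ⟨_, rfl, ?_, ?_, ?_⟩
  · exact le_trans (hβfnn (Classical.arbitrary _))
      (le_csSup ((Set.finite_range _).bddAbove) ⟨Classical.arbitrary _, rfl⟩)
  · have hmem := Set.Nonempty.csSup_mem (Set.range_nonempty
      (fun q => α q + (1 - α q) * S q)) (Set.finite_range _)
    obtain ⟨q, hq⟩ := hmem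
    rw [← hq]
    exact hβflt q
  · intro p p' hp hp'
    set β := sSup (Set.range fun q => α q + (1 - α q) * S q) with hβdef
    have hβf : ∀ q, α q + (1 - α q) * S q ≤ β := fun q =>
      le_csSup ((Set.finite_range _).bddAbove) ⟨q, rfl⟩
    set M := sSup (Set.range fun q =>
      Real.sqrt (∑ k, (p q k - p' q k) ^ 2) / w q) with hMdef
    have hMmem : ∀ q, Real.sqrt (∑ k, (p q k - p' q k) ^ 2) / w q ≤ M := fun q =>
      le_csSup ((Set.finite_range _).bddAbove) ⟨q, rfl⟩
    have hMnn : 0 ≤ M :=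
      le_trans (div_nonneg (Real.sqrt_nonneg _) (hw (Classical.arbitrary _)).le)
        (hMmem (Classical.arbitrary _))
    have hterm : ∀ r, Real.sqrt (∑ k, (p r k - p' r k) ^ 2) ≤ w r * M := by
      intro r
      have h := hMmem r
      rw [div_le_iff₀ (hw r)] at h
      linarith
    apply csSup_le (Set.range_nonempty _)
    rintro v ⟨q, rfl⟩
    beta_reduce
    -- per-user bound
    set x : Fin N → ℝ := Proj q (fun j => -insr H Γ q p j) with hxdef
    set x' : Fin N → ℝ := Proj q (fun j => -insr H Γ q p' j) with hx'def
    have hxP := hProj q (fun j => -insr H Γ q p j)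
    have hx'P := hProj q (fun j => -insr H Γ q p' j)
    have hx0 : ∀ k, k ∉ Dset pmax WF q → x k = 0 := hxP.1.2
    have hx'0 : ∀ k, k ∉ Dset pmax WF q → x' k = 0 := hx'P.1.2
    set U : ℝ := ∑ k, (x k - x' k) ^ 2 with hUdef
    have hUnn : 0 ≤ U := Finset.sum_nonneg fun _ _ => sq_nonneg _
    have hcontr : U ≤ ∑ k, (-insr H Γ q p k - -insr H Γ q p' k) * (x k - x' k) :=
      proj_contract' (hconv q) hxP hx'P
    -- pointwise bound on the interference difference
    have hkbound : ∀ k, (-insr H Γ q p k - -insr H Γ q p' k) * (x k - x' k)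
        ≤ ∑ r ∈ Finset.univ.erase q,
            Hmax H Γ pmax WF q r * (|p r k - p' r k| * |x k - x' k|) := by
      intro k
      have hRHSnn : 0 ≤ ∑ r ∈ Finset.univ.erase q,
          Hmax H Γ pmax WF q r * (|p r k - p' r k| * |x k - x' k|) :=
        Finset.sum_nonneg fun r _ => mul_nonneg (hHnn q r)
          (mul_nonneg (abs_nonneg _) (abs_nonneg _))
      by_cases hu0 : x k - x' k = 0
      · rw [hu0, mul_zero]
        exact Finset.sum_nonneg fun r _ => mul_nonneg (hHnn q r)
          (mul_nonneg (abs_nonneg _) (abs_nonneg _))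
      · have hkq : k ∈ Dset pmax WF q := by
          by_contra hkq
          exact hu0 (by rw [hx0 k hkq, hx'0 k hkq, sub_zero])
        have h0 : H q q k ≠ 0 := ne_of_gt (hHqq q k)
        have hnum : ∑ r ∈ Finset.univ.erase q, Γ q * (H r q k * (p' r k - p r k))
            = Γ q * (1 + ∑ r ∈ Finset.univ.erase q, H r q k * p' r k)
              - Γ q * (1 + ∑ r ∈ Finset.univ.erase q, H r q k * p r k) := by
          rw [mul_add, mul_add, add_sub_add_left_eq_sub, Finset.mul_sum,
            Finset.mul_sum, ← Finset.sum_sub_distrib]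
          exact Finset.sum_congr rfl fun r _ => by ring
        have hd : -insr H Γ q p k - -insr H Γ q p' k
            = (∑ r ∈ Finset.univ.erase q, Γ q * (H r q k * (p' r k - p r k)))
              / H q q k := by
          rw [hnum]
          simp only [insr]
          field_simp
          ring
        have habs : |(-insr H Γ q p k - -insr H Γ q p' k)|
            ≤ ∑ r ∈ Finset.univ.erase q,
                Hmax H Γ pmax WF q r * |p r k - p' r k| := by
          rw [hd, abs_div, abs_of_pos (hHqq q k)]
          calc |∑ r ∈ Finset.univ.erase q, Γ q * (H r q k * (p' r k - p r k))|
                / H q q k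
              ≤ (∑ r ∈ Finset.univ.erase q,
                  |Γ q * (H r q k * (p' r k - p r k))|) / H q q k := by
                exact (div_le_div_iff_of_pos_right (hHqq q k)).mpr
                  (Finset.abs_sum_le_sum_abs _ _)
            _ = ∑ r ∈ Finset.univ.erase q,
                  |Γ q * (H r q k * (p' r k - p r k))| / H q q k :=
                Finset.sum_div _ _ _
            _ ≤ _ := by
                apply Finset.sum_le_sum
                intro r hr
                by_cases hΔ : p r k - p' r k = 0
                · have h1 : p' r k - p r k = 0 := by linarith
                  rw [hΔ, h1]
                  simp
                · have hkr : k ∈ Dset pmax WF r := by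
                    by_contra hkr
                    exact hΔ (by rw [(hp r).2 k hkr, (hp' r).2 k hkr, sub_zero])
                  have hqr : ¬ q = r := fun h =>
                    (Finset.mem_erase.mp hr).1 h.symm
                  have hHm : Γ q * (H r q k / H q q k)
                      ≤ Hmax H Γ pmax WF q r := by
                    simp only [Hmax, Matrix.of_apply, if_neg hqr]
                    exact mul_le_mul_of_nonneg_left
                      (le_maxRatio H pmax WF hkq hkr) (hΓ q).le
                  calc |Γ q * (H r q k * (p' r k - p r k))| / H q q k
                      = Γ q * (H r q k / H q q k) * |p r k - p' r k| := by
                        rw [abs_mul, abs_mul, abs_of_nonneg (hΓ q).le,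
                          abs_of_nonneg (hH r q k), abs_sub_comm]
                        ring
                    _ ≤ _ := mul_le_mul_of_nonneg_right hHm (abs_nonneg _)
        calc (-insr H Γ q p k - -insr H Γ q p' k) * (x k - x' k)
            ≤ |(-insr H Γ q p k - -insr H Γ q p' k)| * |x k - x' k| := by
              rw [← abs_mul]; exact le_abs_self _
          _ ≤ (∑ r ∈ Finset.univ.erase q,
                Hmax H Γ pmax WF q r * |p r k - p' r k|) * |x k - x' k| :=
              mul_le_mul_of_nonneg_right habs (abs_nonneg _)
          _ = _ := by
              rw [Finset.sum_mul]
              exact Finset.sum_congr rfl (fun r _ => by ring)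
    -- sum the pointwise bound and apply Cauchy-Schwarz per interferer
    have hU2 : U ≤ (∑ r ∈ Finset.univ.erase q,
        Hmax H Γ pmax WF q r * Real.sqrt (∑ k, (p r k - p' r k) ^ 2))
        * Real.sqrt U := by
      calc U ≤ ∑ k, (-insr H Γ q p k - -insr H Γ q p' k) * (x k - x' k) := hcontr
        _ ≤ ∑ k, ∑ r ∈ Finset.univ.erase q,
              Hmax H Γ pmax WF q r * (|p r k - p' r k| * |x k - x' k|) :=
            Finset.sum_le_sum fun k _ => hkbound k
        _ = ∑ r ∈ Finset.univ.erase q, Hmax H Γ pmax WF q r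
              * ∑ k, |p r k - p' r k| * |x k - x' k| := by
            rw [Finset.sum_comm]
            exact Finset.sum_congr rfl fun r _ => by rw [Finset.mul_sum]
        _ ≤ ∑ r ∈ Finset.univ.erase q, Hmax H Γ pmax WF q r
              * (Real.sqrt (∑ k, (p r k - p' r k) ^ 2) * Real.sqrt U) := by
            apply Finset.sum_le_sum
            intro r _
            apply mul_le_mul_of_nonneg_left _ (hHnn q r)
            have hcs := Real.sum_mul_le_sqrt_mul_sqrt Finset.univ
              (fun k => |p r k - p' r k|) (fun k => |x k - x' k|)
            simp only [sq_abs] at hcs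
            exact hcs
        _ = _ := by
            rw [Finset.sum_mul]
            exact Finset.sum_congr rfl (fun r _ => by ring)
    have hC : ∑ r ∈ Finset.univ.erase q,
        Hmax H Γ pmax WF q r * Real.sqrt (∑ k, (p r k - p' r k) ^ 2)
        ≤ w q * S q * M := by
      calc ∑ r ∈ Finset.univ.erase q,
            Hmax H Γ pmax WF q r * Real.sqrt (∑ k, (p r k - p' r k) ^ 2)
          ≤ ∑ r ∈ Finset.univ.erase q, Hmax H Γ pmax WF q r * (w r * M) :=
            Finset.sum_le_sum fun r _ =>
              mul_le_mul_of_nonneg_left (hterm r) (hHnn q r)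
        _ ≤ ∑ r, Hmax H Γ pmax WF q r * (w r * M) :=
            Finset.sum_le_sum_of_subset_of_nonneg (Finset.erase_subset _ _)
              fun r _ _ => mul_nonneg (hHnn q r)
                (mul_nonneg (hw r).le hMnn)
        _ = (∑ r, Hmax H Γ pmax WF q r * w r) * M := by
            rw [Finset.sum_mul]
            exact Finset.sum_congr rfl fun r _ => by ring
        _ = w q * S q * M := by
            have hws : w q * S q = ∑ r, Hmax H Γ pmax WF q r * w r := by
              have h := (hw q).ne'
              simp only [hSdef]
              field_simp
            rw [hws]
    have hsqrtU : Real.sqrt U ≤ w q * S q * M := by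
      rcases eq_or_lt_of_le (Real.sqrt_nonneg U) with h | h
      · rw [← h]
        exact mul_nonneg (mul_nonneg (hw q).le (hSnn q)) hMnn
      · have hU2' : U ≤ (w q * S q * M) * Real.sqrt U :=
          le_trans hU2 (mul_le_mul_of_nonneg_right hC (Real.sqrt_nonneg U))
        have hUs : Real.sqrt U * Real.sqrt U = U := Real.mul_self_sqrt hUnn
        nlinarith
    -- assemble
    have hdecomp : ∀ k,
        (α q * p q k + (1 - α q) * x k) - (α q * p' q k + (1 - α q) * x' k)
        = α q * (p q k - p' q k) + (1 - α q) * (x k - x' k) := fun k => by ring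
    have hfin : Real.sqrt (∑ k,
        ((α q * p q k + (1 - α q) * x k)
          - (α q * p' q k + (1 - α q) * x' k)) ^ 2)
        ≤ (α q + (1 - α q) * S q) * w q * M := by
      have e : ∑ k, ((α q * p q k + (1 - α q) * x k)
            - (α q * p' q k + (1 - α q) * x' k)) ^ 2
          = ∑ k, (α q * (p q k - p' q k) + (1 - α q) * (x k - x' k)) ^ 2 :=
        Finset.sum_congr rfl fun k _ => by rw [hdecomp k]
      rw [e]
      calc Real.sqrt (∑ k,
            (α q * (p q k - p' q k) + (1 - α q) * (x k - x' k)) ^ 2)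
          ≤ Real.sqrt (∑ k, (α q * (p q k - p' q k)) ^ 2)
            + Real.sqrt (∑ k, ((1 - α q) * (x k - x' k)) ^ 2) :=
            sqrt_add_le' _ _
        _ = α q * Real.sqrt (∑ k, (p q k - p' q k) ^ 2)
            + (1 - α q) * Real.sqrt U := by
            rw [sqrt_smul' (hα q).1, sqrt_smul' (by linarith [(hα q).2])]
        _ ≤ α q * (w q * M) + (1 - α q) * (w q * S q * M) :=
            add_le_add (mul_le_mul_of_nonneg_left (hterm q) (hα q).1)
              (mul_le_mul_of_nonneg_left hsqrtU (by linarith [(hα q).2]))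
        _ = (α q + (1 - α q) * S q) * w q * M := by ring
    rw [div_le_iff₀ (hw q)]
    calc Real.sqrt (∑ k,
          ((α q * p q k + (1 - α q) * x k)
            - (α q * p' q k + (1 - α q) * x' k)) ^ 2)
        ≤ (α q + (1 - α q) * S q) * w q * M := hfin
      _ ≤ β * w q * M := by
          have := hβf q
          nlinarith [mul_nonneg (hw q).le hMnn]
      _ = β * M * w q := by ring
end
end

section
/- Let α_q ∈ [0,1) for each q, let p* ∈ 𝒫 be a Nash equilibrium of the game 𝒢, and let p^{(n)} be the smoothed simultaneous IWFA sequence started at some p^{(0)} ∈ 𝒫^eff. Then for all n ≥ 0: ‖p^{(n+1)} − p*‖₂ ≤ (max_q α_q + (1 − min_q α_q)·max_{k∈{1,…,N}} ‖H(k)‖₂) · ‖p^{(n)} − p*‖₂, where ‖H(k)‖₂ = ρ(H(k)ᵀH(k))^{1/2} is the spectral norm and the norms on 𝒫 are Euclidean norms on ℝ^{QN}. -/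
open Finset
open scoped Classical

noncomputable section

/- ### Auxiliary lemmas -/
open Matrix in
theorem s17_dummy : True := trivial
open Matrix

private lemma s17_cs {n : ℕ} (a b : Fin n → ℝ) :
    ∑ i, a i * b i ≤ Real.sqrt (∑ i, a i ^ 2) * Real.sqrt (∑ i, b i ^ 2) :=
  Real.sum_mul_le_sqrt_mul_sqrt _ _ _

private lemma s17_segment {N : ℕ} {pm x y : Fin N → ℝ} (hx : x ∈ stratSet pm)
    (hy : y ∈ stratSet pm) {t : ℝ} (ht0 : 0 ≤ t) (ht1 : t ≤ 1) :
    (fun k => x k + t * (y k - x k)) ∈ stratSet pm := by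
  obtain ⟨hx1, hx2⟩ := hx; obtain ⟨hy1, hy2⟩ := hy
  constructor
  · have h : ∑ k, (x k + t * (y k - x k)) = ∑ k, x k + t * (∑ k, y k - ∑ k, x k) := by
      rw [Finset.sum_add_distrib, ← Finset.mul_sum, Finset.sum_sub_distrib]
    rw [h]
    have hh : (1 / (N : ℝ)) * (∑ k, x k + t * (∑ k, y k - ∑ k, x k))
        = (1 - t) * ((1 / (N : ℝ)) * ∑ k, x k) + t * ((1 / (N : ℝ)) * ∑ k, y k) := by ring
    rw [hh, hx1, hy1]; ring
  · intro k
    constructor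
    · have h1 := (hx2 k).1; have h2 := (hy2 k).1
      show 0 ≤ x k + t * (y k - x k)
      nlinarith [mul_nonneg ht0 h2, mul_nonneg (sub_nonneg.mpr ht1) h1]
    · have h1 := (hx2 k).2; have h2 := (hy2 k).2
      show x k + t * (y k - x k) ≤ pm k
      nlinarith [mul_nonneg ht0 (sub_nonneg.mpr h2),
        mul_nonneg (sub_nonneg.mpr ht1) (sub_nonneg.mpr h1)]

private lemma s17_vi {N : ℕ} {pm z x : Fin N → ℝ} (h : IsProjOn (stratSet pm) z x) :
    ∀ y ∈ stratSet pm, ∑ k, (z k - x k) * (y k - x k) ≤ 0 := by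
  intro y hy
  set A := ∑ k, (z k - x k) * (y k - x k) with hA
  set B := ∑ k, (y k - x k) ^ 2 with hB
  have hBnn : 0 ≤ B := Finset.sum_nonneg fun k _ => sq_nonneg _
  have key : ∀ t : ℝ, 0 ≤ t → t ≤ 1 → 2 * t * A ≤ t ^ 2 * B := by
    intro t ht0 ht1
    have hmem := s17_segment h.1 hy ht0 ht1
    have hle := h.2 _ hmem
    have hexp : dsq (fun k => x k + t * (y k - x k)) z
        = dsq x z - 2 * t * A + t ^ 2 * B := by
      rw [dsq, dsq, hA, hB, Finset.mul_sum, Finset.mul_sum, ← Finset.sum_sub_distrib,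
        ← Finset.sum_add_distrib]
      refine Finset.sum_congr rfl fun k _ => by ring
    rw [hexp] at hle
    linarith
  by_contra hc
  push_neg at hc
  have ht : 0 < min 1 (A / (B + 1)) := by
    have : 0 < A / (B + 1) := div_pos hc (by linarith)
    exact lt_min one_pos this
  have h2 := key _ ht.le (min_le_left _ _)
  set t := min 1 (A / (B + 1)) with htd
  have htA : t ≤ A / (B + 1) := min_le_right _ _
  have h5 : t * (B + 1) ≤ A := (le_div_iff₀ (by linarith)).mp htA
  have h6 : t * (t * B) ≤ t * (A - t) := mul_le_mul_of_nonneg_left (by linarith) ht.le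
  nlinarith [mul_pos ht hc]

private lemma s17_vi_proj {N : ℕ} {S : Set (Fin N → ℝ)} {z x : Fin N → ℝ} (hx : x ∈ S)
    (h : ∀ y ∈ S, ∑ k, (z k - x k) * (y k - x k) ≤ 0) : IsProjOn S z x := by
  refine ⟨hx, fun y hy => ?_⟩
  have hexp : dsq y z = dsq x z + ∑ k, (y k - x k) ^ 2
      + 2 * ∑ k, (x k - z k) * (y k - x k) := by
    rw [dsq, dsq, Finset.mul_sum, ← Finset.sum_add_distrib, ← Finset.sum_add_distrib]
    refine Finset.sum_congr rfl fun k _ => by ring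
  have h1 := h y hy
  have h2 : ∑ k, (x k - z k) * (y k - x k) = - ∑ k, (z k - x k) * (y k - x k) := by
    rw [← Finset.sum_neg_distrib]
    refine Finset.sum_congr rfl fun k _ => by ring
  have h3 : 0 ≤ ∑ k, (y k - x k) ^ 2 := Finset.sum_nonneg fun k _ => sq_nonneg _
  rw [hexp, h2]
  linarith

private lemma s17_proj_unique {N : ℕ} {pm z x x' : Fin N → ℝ}
    (h : IsProjOn (stratSet pm) z x) (h' : IsProjOn (stratSet pm) z x') : x = x' := by
  have v1 := s17_vi h x' h'.1
  have v2 := s17_vi h' x h.1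
  have hsum : ∑ k, (x' k - x k) ^ 2 ≤ 0 := by
    have hv := add_le_add v1 v2
    rw [← Finset.sum_add_distrib] at hv
    calc ∑ k, (x' k - x k) ^ 2
        = ∑ k, ((z k - x k) * (x' k - x k) + (z k - x' k) * (x k - x' k)) :=
          Finset.sum_congr rfl fun k _ => by ring
      _ ≤ 0 := by linarith [hv]
  funext k
  have hz : ∑ k, (x' k - x k) ^ 2 = 0 :=
    le_antisymm hsum (Finset.sum_nonneg fun k _ => sq_nonneg _)
  have h4 := (Finset.sum_eq_zero_iff_of_nonneg (fun k _ => sq_nonneg (x' k - x k))).mp hz k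
    (Finset.mem_univ k)
  have h5 := pow_eq_zero_iff (n := 2) (by norm_num) |>.mp h4
  linarith [sub_eq_zero.mp h5]

private lemma s17_eval_charpoly {n : ℕ} {R : Type*} [CommRing R]
    (M : Matrix (Fin n) (Fin n) R) (t : R) :
    M.charpoly.eval t = (Matrix.diagonal (fun _ => t) - M).det := by
  rw [Matrix.charpoly, ← Polynomial.coe_evalRingHom, RingHom.map_det]
  congr 1
  ext i j
  by_cases h : i = j <;>
    simp [Matrix.charmatrix_apply, Matrix.diagonal, h]

private lemma s17_eig_le {n : ℕ} (B : Matrix (Fin n) (Fin n) ℝ) (hB : B.IsHermitian)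
    (i : Fin n) : hB.eigenvalues i ≤ specRad B := by
  set μ := hB.eigenvalues i with hμ
  set v : Fin n → ℝ := ⇑(hB.eigenvectorBasis i) with hv
  have hvne : v ≠ 0 := by
    intro h
    have h1 : ‖hB.eigenvectorBasis i‖ = 1 := hB.eigenvectorBasis.orthonormal.1 i
    have h2 : (hB.eigenvectorBasis i : EuclideanSpace ℝ (Fin n)) = 0 := by
      ext j; exact congrFun h j
    rw [h2, norm_zero] at h1; norm_num at h1
  have hdet : (Matrix.diagonal (fun _ => μ) - B).det = 0 := by
    rw [← Matrix.exists_mulVec_eq_zero_iff]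
    refine ⟨v, hvne, ?_⟩
    have hBv : B.mulVec v = μ • v := hB.mulVec_eigenvectorBasis i
    funext j
    simp [Matrix.sub_mulVec, hBv, Matrix.mulVec_diagonal]
  have hroot : ((B.map (fun a => (a : ℂ))).charpoly).IsRoot (μ : ℂ) := by
    have hmap : (B.map (fun a => (a : ℂ))).charpoly = B.charpoly.map Complex.ofRealHom :=
      Matrix.charpoly_map B Complex.ofRealHom
    rw [hmap, Polynomial.IsRoot, Polynomial.eval_map]
    have h3 : Polynomial.eval₂ Complex.ofRealHom ((Complex.ofRealHom : ℝ →+* ℂ) μ) B.charpoly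
        = Complex.ofRealHom (B.charpoly.eval μ) := Polynomial.eval₂_at_apply _ _
    rw [show ((μ : ℝ) : ℂ) = Complex.ofRealHom μ from rfl, h3, s17_eval_charpoly, hdet,
      map_zero]
  have hbdd : BddAbove {x : ℝ | ∃ μ : ℂ,
      ((B.map (fun a => (a : ℂ))).charpoly).IsRoot μ ∧ x = ‖μ‖} := by
    have hne : (B.map (fun a => (a : ℂ))).charpoly ≠ 0 :=
      (Matrix.charpoly_monic _).ne_zero
    have hfin : Set.Finite {z : ℂ | ((B.map (fun a => (a : ℂ))).charpoly).IsRoot z} :=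
      Polynomial.finite_setOf_isRoot hne
    have himg : {x : ℝ | ∃ μ : ℂ, ((B.map (fun a => (a : ℂ))).charpoly).IsRoot μ
          ∧ x = ‖μ‖}
        = (fun z : ℂ => ‖z‖) '' {z : ℂ | ((B.map (fun a => (a : ℂ))).charpoly).IsRoot z} := by
      ext x; constructor
      · rintro ⟨μ, h1, h2⟩; exact ⟨μ, h1, h2.symm⟩
      · rintro ⟨μ, h1, h2⟩; exact ⟨μ, h1, h2.symm⟩
    rw [himg]
    exact (hfin.image _).bddAbove
  calc μ ≤ |μ| := le_abs_self _
    _ = ‖(μ : ℂ)‖ := by simp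
    _ ≤ specRad B := le_csSup hbdd ⟨(μ : ℂ), hroot, rfl⟩

private lemma s17_rayleigh {n : ℕ} (B : Matrix (Fin n) (Fin n) ℝ) (hB : B.IsHermitian)
    (x : Fin n → ℝ) :
    dotProduct x (B.mulVec x) ≤ specRad B * ∑ i, x i ^ 2 := by
  set U : Matrix (Fin n) (Fin n) ℝ := (hB.eigenvectorUnitary : Matrix (Fin n) (Fin n) ℝ)
    with hU
  have hUT : star U = Uᵀ := by simp [Matrix.star_eq_conjTranspose]
  have hU2 : U * Uᵀ = 1 := by
    have h := (Matrix.mem_unitaryGroup_iff).mp hB.eigenvectorUnitary.2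
    rw [← hUT]; exact h
  set y : Fin n → ℝ := Uᵀ.mulVec x with hy
  have hyx : y = Matrix.vecMul x U := by
    rw [hy, Matrix.mulVec_transpose]
  have hdiag : (RCLike.ofReal ∘ hB.eigenvalues : Fin n → ℝ) = hB.eigenvalues := by
    funext i; simp
  have hspec : B = U * Matrix.diagonal hB.eigenvalues * Uᵀ := by
    have h := hB.spectral_theorem
    rw [Unitary.conjStarAlgAut_apply, hdiag] at h
    rw [← hUT]; exact h
  have h1 : dotProduct x (B.mulVec x)
      = dotProduct y ((Matrix.diagonal hB.eigenvalues).mulVec y) := by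
    calc dotProduct x (B.mulVec x)
        = dotProduct x ((U * (Matrix.diagonal hB.eigenvalues * Uᵀ)).mulVec x) := by
          rw [← Matrix.mul_assoc, ← hspec]
      _ = dotProduct x (U.mulVec ((Matrix.diagonal hB.eigenvalues * Uᵀ).mulVec x)) := by
          rw [← Matrix.mulVec_mulVec]
      _ = dotProduct (Matrix.vecMul x U)
            ((Matrix.diagonal hB.eigenvalues * Uᵀ).mulVec x) := by
          rw [Matrix.dotProduct_mulVec]
      _ = dotProduct y ((Matrix.diagonal hB.eigenvalues).mulVec (Uᵀ.mulVec x)) := by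
          rw [← hyx, ← Matrix.mulVec_mulVec]
      _ = dotProduct y ((Matrix.diagonal hB.eigenvalues).mulVec y) := by rw [← hy]
  have h2 : ∑ i, y i ^ 2 = ∑ i, x i ^ 2 := by
    have h' : dotProduct x x = dotProduct y y := by
      calc dotProduct x x
          = dotProduct x ((U * Uᵀ).mulVec x) := by rw [hU2, Matrix.one_mulVec]
        _ = dotProduct x (U.mulVec (Uᵀ.mulVec x)) := by rw [← Matrix.mulVec_mulVec]
        _ = dotProduct (Matrix.vecMul x U) y := by rw [Matrix.dotProduct_mulVec, hy]
        _ = dotProduct y y := by rw [← hyx]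
    simpa [dotProduct, sq] using h'.symm
  have h3 : dotProduct y ((Matrix.diagonal hB.eigenvalues).mulVec y)
      = ∑ i, hB.eigenvalues i * y i ^ 2 := by
    simp only [dotProduct, Matrix.mulVec_diagonal]
    refine Finset.sum_congr rfl fun i _ => by ring
  rw [h1, h3, ← h2, Finset.mul_sum]
  exact Finset.sum_le_sum fun i _ =>
    mul_le_mul_of_nonneg_right (s17_eig_le B hB i) (sq_nonneg _)

private lemma s17_mulVec_bound {n : ℕ} (A : Matrix (Fin n) (Fin n) ℝ) (x : Fin n → ℝ) :
    ∑ i, (A.mulVec x) i ^ 2 ≤ specNorm A ^ 2 * ∑ i, x i ^ 2 := by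
  have hherm : (Aᵀ * A).IsHermitian := by
    have h := Matrix.isHermitian_conjTranspose_mul_self A
    simpa [Matrix.conjTranspose_eq_transpose_of_trivial] using h
  have h1 : ∑ i, (A.mulVec x) i ^ 2 = dotProduct x ((Aᵀ * A).mulVec x) := by
    calc ∑ i, (A.mulVec x) i ^ 2 = dotProduct (A.mulVec x) (A.mulVec x) := by
          simp [dotProduct, sq]
      _ = dotProduct (Matrix.vecMul (A.mulVec x) A) x := by
          rw [Matrix.dotProduct_mulVec]
      _ = dotProduct (Aᵀ.mulVec (A.mulVec x)) x := by rw [Matrix.mulVec_transpose]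
      _ = dotProduct x (Aᵀ.mulVec (A.mulVec x)) := dotProduct_comm _ _
      _ = dotProduct x ((Aᵀ * A).mulVec x) := by rw [← Matrix.mulVec_mulVec]
  have h2 := s17_rayleigh (Aᵀ * A) hherm x
  have h3 : specRad (Aᵀ * A) ≤ specNorm A ^ 2 := by
    rcases le_or_gt 0 (specRad (Aᵀ * A)) with h | h
    · rw [specNorm, Real.sq_sqrt h]
    · have h4 : specNorm A = 0 := by
        rw [specNorm, Real.sqrt_eq_zero_of_nonpos h.le]
      rw [h4]; nlinarith
  calc ∑ i, (A.mulVec x) i ^ 2 = dotProduct x ((Aᵀ * A).mulVec x) := h1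
    _ ≤ specRad (Aᵀ * A) * ∑ i, x i ^ 2 := h2
    _ ≤ specNorm A ^ 2 * ∑ i, x i ^ 2 :=
        mul_le_mul_of_nonneg_right h3 (Finset.sum_nonneg fun i _ => sq_nonneg _)

private lemma s17_ne_proj {N Q : ℕ} (hN : 1 ≤ N) {H : Fin Q → Fin Q → Fin N → ℝ} {Γ : Fin Q → ℝ}
    {pmax pstar : Fin Q → Fin N → ℝ}
    (hH : ∀ r q k, 0 ≤ H r q k) (hHqq : ∀ q k, 0 < H q q k) (hΓ : ∀ q, 0 < Γ q)
    (hNE : IsNE H Γ pmax pstar) (q : Fin Q) :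
    IsProjOn (stratSet (pmax q)) (fun k => -insr H Γ q pstar k) (pstar q) := by
  set x : Fin N → ℝ := pstar q with hxd
  set σ : Fin N → ℝ := insr H Γ q pstar with hσd
  have hxS : x ∈ stratSet (pmax q) := hNE.1 q
  have hIk : ∀ k, 0 ≤ ∑ r ∈ Finset.univ.erase q, H r q k * pstar r k := by
    intro k
    exact Finset.sum_nonneg fun r _ => mul_nonneg (hH r q k) ((hNE.1 r).2 k).1
  have hσpos : ∀ k, 0 < σ k := by
    intro k
    exact div_pos (mul_pos (hΓ q) (by linarith [hIk k])) (hHqq q k)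
  -- rewrite of rate along own-strategy changes
  have hrate : ∀ y : Fin N → ℝ, (∀ k, 0 ≤ y k) → rate H Γ q (Function.update pstar q y)
      = (1 / (N : ℝ)) * ∑ k, Real.log ((σ k + y k) / σ k) := by
    intro y _
    rw [rate]
    congr 1
    refine Finset.sum_congr rfl fun k _ => ?_
    have h1 : (Function.update pstar q y) q = y := Function.update_self _ _ _
    have h2 : ∑ r ∈ Finset.univ.erase q, H r q k * (Function.update pstar q y) r k
        = ∑ r ∈ Finset.univ.erase q, H r q k * pstar r k := by
      refine Finset.sum_congr rfl fun r hr => ?_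
      rw [Function.update_of_ne (Finset.mem_erase.mp hr).1]
    rw [h1, h2]
    congr 1
    have hd : Γ q * (1 + ∑ r ∈ Finset.univ.erase q, H r q k * pstar r k) = σ k * H q q k := by
      rw [hσd]
      show _ = Γ q * (1 + ∑ r ∈ Finset.univ.erase q, H r q k * pstar r k) / H q q k * H q q k
      rw [div_mul_cancel₀ _ (hHqq q k).ne']
    rw [hd]
    have hσk := hσpos k
    have hHk := hHqq q k
    field_simp
  -- exchange inequality
  have hexch : ∀ j l : Fin N, x j < pmax q j → 0 < x l → σ l + x l ≤ σ j + x j := by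
    intro j l hj hl
    rcases eq_or_ne j l with rfl | hjl
    · exact le_rfl
    have hxj0 : 0 ≤ x j := (hxS.2 j).1
    have hxlmax : x l ≤ pmax q l := (hxS.2 l).2
    have hσj := hσpos j
    have hσl := hσpos l
    have hkey : ∀ ε : ℝ, 0 < ε → ε ≤ pmax q j - x j → ε < x l →
        (σ l + x l) - (σ j + x j) ≤ ε := by
      intro ε hε hεj hεl
      set y : Fin N → ℝ :=
        fun k => x k + ε * ((if k = j then 1 else 0) - (if k = l then 1 else 0)) with hyd
      have hyj : y j = x j + ε := by simp [hyd, hjl]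
      have hyl : y l = x l - ε := by
        show x l + ε * ((if l = j then 1 else 0) - if l = l then 1 else 0) = x l - ε
        rw [if_neg (Ne.symm hjl), if_pos rfl]
        ring
      have hyk : ∀ k, k ≠ j → k ≠ l → y k = x k := by
        intro k h1 h2
        simp [hyd, h1, h2]
      have hy0 : ∀ k, 0 ≤ y k := by
        intro k
        rcases eq_or_ne k j with rfl | h1
        · rw [hyj]; linarith
        rcases eq_or_ne k l with rfl | h2
        · rw [hyl]; linarith
        · rw [hyk k h1 h2]; exact (hxS.2 k).1
      have hyS : y ∈ stratSet (pmax q) := by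
        constructor
        · have hsy : ∑ k, y k = ∑ k, x k := by
            rw [hyd]
            rw [Finset.sum_add_distrib, ← Finset.mul_sum, Finset.sum_sub_distrib]
            simp
          rw [hsy]; exact hxS.1
        · intro k
          refine ⟨hy0 k, ?_⟩
          rcases eq_or_ne k j with rfl | h1
          · rw [hyj]; linarith
          rcases eq_or_ne k l with rfl | h2
          · rw [hyl]; linarith
          · rw [hyk k h1 h2]; exact (hxS.2 k).2
      have hNEq := hNE.2 q y hyS
      have hx0 : ∀ k, 0 ≤ x k := fun k => (hxS.2 k).1
      have hrx : rate H Γ q pstar = (1 / (N : ℝ)) * ∑ k, Real.log ((σ k + x k) / σ k) := by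
        conv_lhs => rw [show pstar = Function.update pstar q x by
          rw [hxd, Function.update_eq_self]]
        exact hrate x hx0
      rw [hrate y hy0, hrx] at hNEq
      have hNpos : (0 : ℝ) < 1 / (N : ℝ) := by
        have : (0 : ℝ) < (N : ℝ) := by exact_mod_cast Nat.pos_of_ne_zero (by omega)
        positivity
      have hsumle : ∑ k, Real.log ((σ k + y k) / σ k) ≤ ∑ k, Real.log ((σ k + x k) / σ k) :=
        le_of_mul_le_mul_left (by linarith [hNEq]) hNpos
      have hsplit : ∀ (w : Fin N → ℝ),
          ∑ k, (Real.log ((σ k + w k) / σ k)) - ∑ k, (Real.log ((σ k + x k) / σ k))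
          = ∑ k, (Real.log ((σ k + w k) / σ k) - Real.log ((σ k + x k) / σ k)) := by
        intro w; rw [Finset.sum_sub_distrib]
      have hFzero : ∀ k, k ∉ ({j, l} : Finset (Fin N)) →
          Real.log ((σ k + y k) / σ k) - Real.log ((σ k + x k) / σ k) = 0 := by
        intro k hk
        simp only [Finset.mem_insert, Finset.mem_singleton] at hk
        push_neg at hk
        rw [hyk k hk.1 hk.2, sub_self]
      have hpair : ∑ k, (Real.log ((σ k + y k) / σ k) - Real.log ((σ k + x k) / σ k))
          = (Real.log ((σ j + y j) / σ j) - Real.log ((σ j + x j) / σ j))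
            + (Real.log ((σ l + y l) / σ l) - Real.log ((σ l + x l) / σ l)) := by
        have h12 : ∑ k ∈ ({j, l} : Finset (Fin N)),
            (Real.log ((σ k + y k) / σ k) - Real.log ((σ k + x k) / σ k))
            = ∑ k, (Real.log ((σ k + y k) / σ k) - Real.log ((σ k + x k) / σ k)) :=
          Finset.sum_subset (Finset.subset_univ _) fun k _ hk => hFzero k hk
        rw [← h12, Finset.sum_pair hjl]
      have hFle : Real.log ((σ j + y j) / σ j) + Real.log ((σ l + y l) / σ l)
          ≤ Real.log ((σ j + x j) / σ j) + Real.log ((σ l + x l) / σ l) := by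
        have := hsplit y ▸ (sub_nonpos.mpr hsumle)
        rw [hpair] at this
        linarith
      rw [hyj, hyl] at hFle
      -- convert to products
      have hA : 0 < σ j + x j := by linarith
      have hB : 0 < σ l + x l := by linarith
      have hAε : 0 < σ j + (x j + ε) := by linarith
      have hBε : 0 < σ l + (x l - ε) := by linarith
      have hprod : (σ j + (x j + ε)) / σ j * ((σ l + (x l - ε)) / σ l)
          ≤ (σ j + x j) / σ j * ((σ l + x l) / σ l) := by
        have h1 : Real.log ((σ j + (x j + ε)) / σ j * ((σ l + (x l - ε)) / σ l))
            ≤ Real.log ((σ j + x j) / σ j * ((σ l + x l) / σ l)) := by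
          rw [Real.log_mul (by positivity) (by positivity),
            Real.log_mul (by positivity) (by positivity)]
          exact hFle
        have h2 : (0:ℝ) < (σ j + (x j + ε)) / σ j * ((σ l + (x l - ε)) / σ l) := by positivity
        exact (Real.log_le_log_iff h2 (by positivity)).mp h1
      have hprod2 : (σ j + (x j + ε)) * (σ l + (x l - ε)) ≤ (σ j + x j) * (σ l + x l) := by
        have hσσ : (0:ℝ) < σ j * σ l := by positivity
        rw [div_mul_div_comm, div_mul_div_comm, div_le_div_iff₀ (by positivity) (by positivity)]
          at hprod
        nlinarith [hprod]
      nlinarith [hprod2]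
    by_contra hc
    push_neg at hc
    set δ := (σ l + x l) - (σ j + x j) with hδd
    have hδpos : 0 < δ := by simp only [hδd]; linarith
    set ε := min (pmax q j - x j) (min (x l / 2) (δ / 2)) with hεd
    have hε1 : 0 < ε := by
      apply lt_min (by linarith)
      exact lt_min (by linarith) (by linarith)
    have hε2 : ε ≤ pmax q j - x j := min_le_left _ _
    have hε3 : ε < x l := lt_of_le_of_lt ((min_le_right _ _).trans (min_le_left _ _)) (by linarith)
    have := hkey ε hε1 hε2 hε3
    have hεδ : ε ≤ δ / 2 := (min_le_right _ _).trans (min_le_right _ _)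
    linarith
  -- conclude via variational inequality
  refine s17_vi_proj hxS ?_
  intro y hy
  have hNne : ((N : ℝ)) ≠ 0 := by
    exact_mod_cast Nat.pos_of_ne_zero (by omega) |>.ne'
  have hsum0 : ∑ k, (y k - x k) = 0 := by
    have h1 : (1 / (N : ℝ)) * ∑ k, y k = (1 / (N : ℝ)) * ∑ k, x k := by
      rw [hy.1, hxS.1]
    have h2 : ∑ k, y k = ∑ k, x k :=
      mul_left_cancel₀ (by simp [hNne]) h1
    rw [Finset.sum_sub_distrib, h2, sub_self]
  have hgoal : ∀ k, (-σ k - x k) * (y k - x k) = -((σ k + x k) * (y k - x k)) := by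
    intro k; ring
  have hmain : 0 ≤ ∑ k, (σ k + x k) * (y k - x k) := by
    set P : Finset (Fin N) := Finset.univ.filter (fun k => x k < y k) with hPd
    rcases Finset.eq_empty_or_nonempty P with hP | hP
    · have hyx : ∀ k, y k = x k := by
        have hle : ∀ k, y k ≤ x k := by
          intro k
          by_contra hk
          push_neg at hk
          have : k ∈ P := by rw [hPd]; simp [hk]
          simp [hP] at this
        have hz : ∑ k, (x k - y k) = 0 := by
          rw [Finset.sum_sub_distrib] at hsum0 ⊢
          linarith
        intro k
        have := (Finset.sum_eq_zero_iff_of_nonneg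
          (fun k _ => by linarith [hle k] : ∀ k ∈ Finset.univ, 0 ≤ x k - y k)).mp hz k
          (Finset.mem_univ k)
        linarith
      have : ∑ k, (σ k + x k) * (y k - x k) = 0 :=
        Finset.sum_eq_zero fun k _ => by rw [hyx k]; ring
      rw [this]
    · obtain ⟨j, hjP, hjmin⟩ := P.exists_min_image (fun k => σ k + x k) hP
      have hjP' : x j < y j := by
        rw [hPd] at hjP; simpa using hjP
      have hjinc : x j < pmax q j := lt_of_lt_of_le hjP' (hy.2 j).2
      have hlam : ∑ k, (σ k + x k) * (y k - x k)
          = ∑ k, ((σ k + x k) - (σ j + x j)) * (y k - x k) := by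
        have : ∑ k, ((σ k + x k) - (σ j + x j)) * (y k - x k)
            = ∑ k, (σ k + x k) * (y k - x k) - (σ j + x j) * ∑ k, (y k - x k) := by
          rw [Finset.mul_sum, ← Finset.sum_sub_distrib]
          refine Finset.sum_congr rfl fun k _ => by ring
        rw [this, hsum0, mul_zero, sub_zero]
      rw [hlam]
      refine Finset.sum_nonneg fun k _ => ?_
      rcases lt_trichotomy (x k) (y k) with hlt | heq | hgt
      · have hkP : k ∈ P := by rw [hPd]; simp [hlt]
        have := hjmin k hkP
        nlinarith
      · rw [heq]; simp
      · have hdec : 0 < x k := lt_of_le_of_lt (hy.2 k).1 hgt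
        have := hexch j k hjinc hdec
        nlinarith
  calc ∑ k, (-σ k - x k) * (y k - x k)
      = - ∑ k, (σ k + x k) * (y k - x k) := by
        rw [← Finset.sum_neg_distrib]
        exact Finset.sum_congr rfl fun k _ => hgoal k
    _ ≤ 0 := by linarith

set_option maxHeartbeats 2000000 in
private theorem s17_main {N Q : ℕ} (hN : 1 ≤ N) (hQ : 2 ≤ Q)
    (H : Fin Q → Fin Q → Fin N → ℝ) (Γ : Fin Q → ℝ) (pmax : Fin Q → Fin N → ℝ)
    (hH : ∀ r q k, 0 ≤ H r q k) (hHqq : ∀ q k, 0 < H q q k)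
    (hΓ : ∀ q, 0 < Γ q) (hpmax : ∀ q k, 0 ≤ pmax q k)
    (hcap : ∀ q, 1 < (1 / (N : ℝ)) * ∑ k, pmax q k)
    (WF : Fin Q → (Fin Q → Fin N → ℝ) → Fin N → ℝ) (hWF : IsWF H Γ pmax WF)
    (α : Fin Q → ℝ) (hα : ∀ q, 0 ≤ α q ∧ α q < 1)
    (pstar : Fin Q → Fin N → ℝ) (hNE : IsNE H Γ pmax pstar)
    (pseq : ℕ → Fin Q → Fin N → ℝ)
    (h0 : ∀ q, pseq 0 q ∈ effSet pmax WF q)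
    (hrec : ∀ n q, pseq (n + 1) q =
      fun k => α q * pseq n q k + (1 - α q) * WF q (pseq n) k) :
    ∀ n, profDist (pseq (n + 1)) pstar ≤
      (sSup (Set.range α) + (1 - sInf (Set.range α)) *
        sSup (Set.range fun k => specNorm (Hmat H Γ pmax WF k))) *
      profDist (pseq n) pstar := by
  intro n
  have hQpos : 0 < Q := by omega
  have hNpos : 0 < N := by omega
  set q0 : Fin Q := ⟨0, hQpos⟩ with hq0
  set k0 : Fin N := ⟨0, hNpos⟩ with hk0
  -- the NE is a fixed point of the waterfilling operator
  have hfix : ∀ q, pstar q = WF q pstar := fun q =>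
    s17_proj_unique (s17_ne_proj hN hH hHqq hΓ hNE q) (hWF q pstar (fun r _ => hNE.1 r))
  -- waterfilling outputs vanish outside the effective carrier sets
  have hWFsupp : ∀ (q : Fin Q) (p : Fin Q → Fin N → ℝ),
      (∀ r, r ≠ q → p r ∈ stratSet (pmax r)) →
      ∀ k, k ∉ Dset pmax WF q → WF q p k = 0 := by
    intro q p hp k hk
    by_contra hne
    exact hk ⟨p, hp, hne⟩
  have hstar_supp : ∀ q k, k ∉ Dset pmax WF q → pstar q k = 0 := by
    intro q k hk
    rw [hfix q]
    exact hWFsupp q pstar (fun r _ => hNE.1 r) k hk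
  -- the iterates remain feasible and supported on the effective carrier sets
  have hseq : ∀ m q, pseq m q ∈ stratSet (pmax q) ∧
      ∀ k, k ∉ Dset pmax WF q → pseq m q k = 0 := by
    intro m
    induction m with
    | zero => exact fun q => ⟨(h0 q).1, (h0 q).2⟩
    | succ m ih =>
      intro q
      have hαq := hα q
      have hWFm := hWF q (pseq m) (fun r _ => (ih r).1)
      have hWFS := hWFm.1
      constructor
      · rw [hrec m q]
        constructor
        · have hs : ∑ k, (α q * pseq m q k + (1 - α q) * WF q (pseq m) k)
              = α q * ∑ k, pseq m q k + (1 - α q) * ∑ k, WF q (pseq m) k := by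
            rw [Finset.sum_add_distrib, Finset.mul_sum, Finset.mul_sum]
          show (1 / (N : ℝ)) * ∑ k, (α q * pseq m q k + (1 - α q) * WF q (pseq m) k) = 1
          rw [hs]
          have h1 := (ih q).1.1
          have h2 := hWFS.1
          have hh : (1 / (N : ℝ)) * (α q * ∑ k, pseq m q k
                + (1 - α q) * ∑ k, WF q (pseq m) k)
              = α q * ((1 / (N : ℝ)) * ∑ k, pseq m q k)
                + (1 - α q) * ((1 / (N : ℝ)) * ∑ k, WF q (pseq m) k) := by ring
          rw [hh, h1, h2]; ring
        · intro k
          have h1 := ((ih q).1.2 k)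
          have h2 := (hWFS.2 k)
          constructor
          · show 0 ≤ α q * pseq m q k + (1 - α q) * WF q (pseq m) k
            nlinarith [h1.1, h2.1, hαq.1, hαq.2]
          · show α q * pseq m q k + (1 - α q) * WF q (pseq m) k ≤ pmax q k
            nlinarith [h1.2, h2.2, hαq.1, hαq.2]
      · intro k hk
        rw [hrec m q]
        show α q * pseq m q k + (1 - α q) * WF q (pseq m) k = 0
        rw [(ih q).2 k hk, hWFsupp q (pseq m) (fun r _ => (ih r).1) k hk]
        ring
  -- abbreviations
  set e : Fin Q → Fin N → ℝ := fun q k => pseq n q k - pstar q k with hed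
  set u : Fin Q → Fin N → ℝ := fun q k => WF q (pseq n) k - pstar q k with hud
  set g : Fin Q → Fin N → ℝ := fun q k =>
    if k ∈ Dset pmax WF q then insr H Γ q pstar k - insr H Γ q (pseq n) k else 0 with hgd
  set a := sSup (Set.range α) with ha
  set b := 1 - sInf (Set.range α) with hb
  set M := sSup (Set.range fun k => specNorm (Hmat H Γ pmax WF k)) with hM
  set D := profDist (pseq n) pstar with hD
  have he0 : ∀ r k, k ∉ Dset pmax WF r → e r k = 0 := by
    intro r k hk
    show pseq n r k - pstar r k = 0
    rw [(hseq n r).2 k hk, hstar_supp r k hk, sub_self]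
  have hu0 : ∀ q k, k ∉ Dset pmax WF q → u q k = 0 := by
    intro q k hk
    show WF q (pseq n) k - pstar q k = 0
    rw [hWFsupp q (pseq n) (fun r _ => (hseq n r).1) k hk, hstar_supp q k hk, sub_self]
  have hDnn : 0 ≤ D := Real.sqrt_nonneg _
  have hD2 : D ^ 2 = ∑ q, ∑ k, e q k ^ 2 := by
    rw [hD, profDist, Real.sq_sqrt]
    exact Finset.sum_nonneg fun q _ => Finset.sum_nonneg fun k _ => sq_nonneg _
  have ha_ge : ∀ q, α q ≤ a := fun q => le_csSup (Set.finite_range α).bddAbove ⟨q, rfl⟩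
  have ha_nn : 0 ≤ a := le_trans (hα q0).1 (ha_ge q0)
  have hb_ge : ∀ q, 1 - α q ≤ b := by
    intro q
    have := csInf_le (Set.finite_range α).bddBelow (Set.mem_range_self q)
    rw [hb]; linarith
  have hb_nn : 0 ≤ b := by
    have h1 := csInf_le (Set.finite_range α).bddBelow (Set.mem_range_self q0)
    have h2 := (hα q0).2
    rw [hb]; linarith
  have hM_ge : ∀ k, specNorm (Hmat H Γ pmax WF k) ≤ M := fun k =>
    le_csSup (Set.finite_range _).bddAbove ⟨k, rfl⟩
  have hM_nn : 0 ≤ M := le_trans (Real.sqrt_nonneg _) (hM_ge k0)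
  -- Step A : contraction of the waterfilling map through firm nonexpansiveness
  have hA : ∀ q, ∑ k, u q k ^ 2 ≤ ∑ k, g q k ^ 2 := by
    intro q
    have hx := hWF q (pseq n) (fun r _ => (hseq n r).1)
    have hx' := hWF q pstar (fun r _ => hNE.1 r)
    have v1 := s17_vi hx (WF q pstar) hx'.1
    have v2 := s17_vi hx' (WF q (pseq n)) hx.1
    have huk : ∀ k, u q k = WF q (pseq n) k - WF q pstar k := by
      intro k
      show WF q (pseq n) k - pstar q k = _
      rw [hfix q]
    have hsum1 : ∑ k, u q k ^ 2
        ≤ ∑ k, u q k * (insr H Γ q pstar k - insr H Γ q (pseq n) k) := by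
      have hv := add_le_add v1 v2
      rw [← Finset.sum_add_distrib] at hv
      have hrw : ∀ k, ((fun k => -insr H Γ q (pseq n) k) k - WF q (pseq n) k)
            * (WF q pstar k - WF q (pseq n) k)
          + ((fun k => -insr H Γ q pstar k) k - WF q pstar k)
            * (WF q (pseq n) k - WF q pstar k)
          = u q k ^ 2 - u q k * (insr H Γ q pstar k - insr H Γ q (pseq n) k) := by
        intro k
        rw [huk k]
        ring
      rw [Finset.sum_congr rfl fun k _ => hrw k, Finset.sum_sub_distrib] at hv
      linarith
    have hsum2 : ∑ k, u q k * (insr H Γ q pstar k - insr H Γ q (pseq n) k)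
        = ∑ k, u q k * g q k := by
      refine Finset.sum_congr rfl fun k _ => ?_
      by_cases hk : k ∈ Dset pmax WF q
      · have : g q k = insr H Γ q pstar k - insr H Γ q (pseq n) k := by
          rw [hgd]; exact if_pos hk
        rw [this]
      · rw [hu0 q k hk, zero_mul, zero_mul]
    have hcs : ∑ k, u q k * g q k
        ≤ Real.sqrt (∑ k, u q k ^ 2) * Real.sqrt (∑ k, g q k ^ 2) :=
      s17_cs _ _
    set W := Real.sqrt (∑ k, u q k ^ 2) with hW
    set G := Real.sqrt (∑ k, g q k ^ 2) with hG
    have hWnn : 0 ≤ W := Real.sqrt_nonneg _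
    have hGnn : 0 ≤ G := Real.sqrt_nonneg _
    have hW2 : W ^ 2 = ∑ k, u q k ^ 2 :=
      Real.sq_sqrt (Finset.sum_nonneg fun k _ => sq_nonneg _)
    have hG2 : G ^ 2 = ∑ k, g q k ^ 2 :=
      Real.sq_sqrt (Finset.sum_nonneg fun k _ => sq_nonneg _)
    have hWG : W ^ 2 ≤ W * G := by
      rw [hW2]
      calc ∑ k, u q k ^ 2
          ≤ ∑ k, u q k * (insr H Γ q pstar k - insr H Γ q (pseq n) k) := hsum1
        _ = ∑ k, u q k * g q k := hsum2
        _ ≤ W * G := hcs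
    rw [← hW2, ← hG2]
    rcases eq_or_lt_of_le hWnn with h0' | h0'
    · rw [← h0']; nlinarith [sq_nonneg G]
    · have hWleG : W ≤ G := by nlinarith
      nlinarith
  -- entrywise bound by the matrices H(k)
  have hHmatNN : ∀ k (q' r : Fin Q), 0 ≤ Hmat H Γ pmax WF k q' r := by
    intro k q' r
    show 0 ≤ (if q' ≠ r ∧ k ∈ Dset pmax WF q' ∧ k ∈ Dset pmax WF r then
      Γ q' * H r q' k / H q' q' k else 0)
    split
    · exact div_nonneg (mul_nonneg (hΓ q').le (hH r q' k)) (hHqq q' k).le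
    · exact le_rfl
  have hkbound : ∀ k, ∑ q', g q' k ^ 2
      ≤ M ^ 2 * ∑ r, e r k ^ 2 := by
    intro k
    set v : Fin Q → ℝ := fun r => |e r k| with hvd
    have hvm : ∀ q', |g q' k| ≤ (Hmat H Γ pmax WF k).mulVec v q' := by
      intro q'
      have hmv : (Hmat H Γ pmax WF k).mulVec v q' = ∑ r, Hmat H Γ pmax WF k q' r * v r := by
        simp [Matrix.mulVec, dotProduct]
      by_cases hq : k ∈ Dset pmax WF q'
      · have hgq : g q' k = insr H Γ q' pstar k - insr H Γ q' (pseq n) k := by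
          rw [hgd]; exact if_pos hq
        have hnum : Γ q' * (1 + ∑ r ∈ Finset.univ.erase q', H r q' k * pstar r k)
            - Γ q' * (1 + ∑ r ∈ Finset.univ.erase q', H r q' k * pseq n r k)
            = ∑ r ∈ Finset.univ.erase q', Γ q' * (H r q' k * (pstar r k - pseq n r k)) := by
          have hs : ∑ r ∈ Finset.univ.erase q', H r q' k * (pstar r k - pseq n r k)
              = (∑ r ∈ Finset.univ.erase q', H r q' k * pstar r k)
                - ∑ r ∈ Finset.univ.erase q', H r q' k * pseq n r k := by
            rw [← Finset.sum_sub_distrib]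
            exact Finset.sum_congr rfl fun r _ => by ring
          rw [← Finset.mul_sum, hs]
          ring
        have hins : insr H Γ q' pstar k - insr H Γ q' (pseq n) k
            = ∑ r ∈ Finset.univ.erase q',
                Γ q' * (H r q' k * (pstar r k - pseq n r k)) / H q' q' k := by
          simp only [insr]
          rw [div_sub_div_same, hnum, Finset.sum_div]
        rw [hgq, hins]
        refine (Finset.abs_sum_le_sum_abs _ _).trans ?_
        have hterm : ∀ r ∈ Finset.univ.erase q',
            |Γ q' * (H r q' k * (pstar r k - pseq n r k)) / H q' q' k|
            = Hmat H Γ pmax WF k q' r * v r := by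
          intro r hr
          obtain ⟨hrq, -⟩ := Finset.mem_erase.mp hr
          by_cases hkr : k ∈ Dset pmax WF r
          · have hmat : Hmat H Γ pmax WF k q' r = Γ q' * H r q' k / H q' q' k := by
              show (if q' ≠ r ∧ k ∈ Dset pmax WF q' ∧ k ∈ Dset pmax WF r then
                Γ q' * H r q' k / H q' q' k else 0) = _
              rw [if_pos ⟨Ne.symm hrq, hq, hkr⟩]
            have hve : v r = |pstar r k - pseq n r k| := by
              rw [hvd]
              show |e r k| = _
              rw [hed]
              show |pseq n r k - pstar r k| = _
              rw [abs_sub_comm]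
            rw [hmat, hve, abs_div, abs_mul, abs_mul, abs_of_pos (hΓ q'),
              abs_of_nonneg (hH r q' k), abs_of_pos (hHqq q' k)]
            ring
          · have hps : pstar r k = 0 := hstar_supp r k hkr
            have hpq : pseq n r k = 0 := (hseq n r).2 k hkr
            have hv0 : v r = 0 := by
              rw [hvd]
              show |e r k| = 0
              rw [he0 r k hkr, abs_zero]
            rw [hps, hpq, hv0]
            simp
        rw [Finset.sum_congr rfl hterm, hmv]
        refine Finset.sum_le_sum_of_subset_of_nonneg (Finset.subset_univ _) ?_
        intro r _ _
        exact mul_nonneg (hHmatNN k q' r) (abs_nonneg _)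
      · have hgq : g q' k = 0 := by rw [hgd]; exact if_neg hq
        rw [hgq, abs_zero, hmv]
        exact Finset.sum_nonneg fun r _ => mul_nonneg (hHmatNN k q' r) (abs_nonneg _)
    have h1 : ∑ q', g q' k ^ 2 ≤ ∑ q', ((Hmat H Γ pmax WF k).mulVec v q') ^ 2 := by
      refine Finset.sum_le_sum fun q' _ => ?_
      have habs := hvm q'
      have hnn : 0 ≤ (Hmat H Γ pmax WF k).mulVec v q' := (abs_nonneg _).trans habs
      calc g q' k ^ 2 = |g q' k| ^ 2 := (sq_abs _).symm
        _ ≤ ((Hmat H Γ pmax WF k).mulVec v q') ^ 2 := by nlinarith [abs_nonneg (g q' k)]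
    have h2 := s17_mulVec_bound (Hmat H Γ pmax WF k) v
    have h3 : ∑ r, v r ^ 2 = ∑ r, e r k ^ 2 := by
      refine Finset.sum_congr rfl fun r _ => ?_
      rw [hvd]
      exact sq_abs _
    have h4 : specNorm (Hmat H Γ pmax WF k) ^ 2 ≤ M ^ 2 := by
      have h41 := hM_ge k
      have h42 : 0 ≤ specNorm (Hmat H Γ pmax WF k) := Real.sqrt_nonneg _
      nlinarith
    have h5 : 0 ≤ ∑ r, e r k ^ 2 := Finset.sum_nonneg fun r _ => sq_nonneg _
    calc ∑ q', g q' k ^ 2 ≤ ∑ q', ((Hmat H Γ pmax WF k).mulVec v q') ^ 2 := h1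
      _ ≤ specNorm (Hmat H Γ pmax WF k) ^ 2 * ∑ r, v r ^ 2 := h2
      _ = specNorm (Hmat H Γ pmax WF k) ^ 2 * ∑ r, e r k ^ 2 := by rw [h3]
      _ ≤ M ^ 2 * ∑ r, e r k ^ 2 := mul_le_mul_of_nonneg_right h4 h5
  -- total bound on the waterfilling errors
  have hU : ∑ q, ∑ k, u q k ^ 2 ≤ M ^ 2 * D ^ 2 := by
    calc ∑ q, ∑ k, u q k ^ 2 ≤ ∑ q, ∑ k, g q k ^ 2 := Finset.sum_le_sum fun q _ => hA q
      _ = ∑ k, ∑ q, g q k ^ 2 := Finset.sum_comm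
      _ ≤ ∑ k, M ^ 2 * ∑ r, e r k ^ 2 := Finset.sum_le_sum fun k _ => hkbound k
      _ = M ^ 2 * ∑ k, ∑ r, e r k ^ 2 := by rw [Finset.mul_sum]
      _ = M ^ 2 * ∑ r, ∑ k, e r k ^ 2 := by rw [Finset.sum_comm]
      _ = M ^ 2 * D ^ 2 := by rw [hD2]
  -- Step D : assembling the one-step bound
  set E : Fin Q → ℝ := fun q => Real.sqrt (∑ k, e q k ^ 2) with hEd
  set W : Fin Q → ℝ := fun q => Real.sqrt (∑ k, u q k ^ 2) with hWd
  have hEnn : ∀ q, 0 ≤ E q := fun q => Real.sqrt_nonneg _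
  have hWnn : ∀ q, 0 ≤ W q := fun q => Real.sqrt_nonneg _
  have hE2 : ∀ q, E q ^ 2 = ∑ k, e q k ^ 2 := fun q =>
    Real.sq_sqrt (Finset.sum_nonneg fun k _ => sq_nonneg _)
  have hW2 : ∀ q, W q ^ 2 = ∑ k, u q k ^ 2 := fun q =>
    Real.sq_sqrt (Finset.sum_nonneg fun k _ => sq_nonneg _)
  have hstep : ∀ q k, pseq (n + 1) q k - pstar q k = α q * e q k + (1 - α q) * u q k := by
    intro q k
    rw [hrec n q]
    show α q * pseq n q k + (1 - α q) * WF q (pseq n) k - pstar q k = _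
    show _ = α q * (pseq n q k - pstar q k) + (1 - α q) * (WF q (pseq n) k - pstar q k)
    ring
  have hperq : ∀ q, ∑ k, (α q * e q k + (1 - α q) * u q k) ^ 2
      ≤ (a * E q + b * W q) ^ 2 := by
    intro q
    have hexp : ∑ k, (α q * e q k + (1 - α q) * u q k) ^ 2
        = α q ^ 2 * ∑ k, e q k ^ 2 + 2 * (α q * (1 - α q)) * ∑ k, e q k * u q k
          + (1 - α q) ^ 2 * ∑ k, u q k ^ 2 := by
      rw [Finset.mul_sum, Finset.mul_sum, Finset.mul_sum, ← Finset.sum_add_distrib,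
        ← Finset.sum_add_distrib]
      exact Finset.sum_congr rfl fun k _ => by ring
    have hcs := s17_cs (fun k => e q k) (fun k => u q k)
    have hα1 := (hα q).1
    have hα2 := (hα q).2
    have hEW : ∑ k, e q k * u q k ≤ E q * W q := hcs
    have h1 : ∑ k, (α q * e q k + (1 - α q) * u q k) ^ 2
        ≤ (α q * E q + (1 - α q) * W q) ^ 2 := by
      have hrhs : (α q * E q + (1 - α q) * W q) ^ 2
          = α q ^ 2 * ∑ k, e q k ^ 2 + 2 * (α q * (1 - α q)) * (E q * W q)
            + (1 - α q) ^ 2 * ∑ k, u q k ^ 2 := by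
        rw [← hE2 q, ← hW2 q]; ring
      have hmid : 2 * (α q * (1 - α q)) * ∑ k, e q k * u q k
          ≤ 2 * (α q * (1 - α q)) * (E q * W q) := by
        have hnn : 0 ≤ 2 * (α q * (1 - α q)) := by nlinarith
        exact mul_le_mul_of_nonneg_left hEW hnn
      rw [hexp, hrhs]
      linarith
    have h2 : α q * E q + (1 - α q) * W q ≤ a * E q + b * W q :=
      add_le_add (mul_le_mul_of_nonneg_right (ha_ge q) (hEnn q))
        (mul_le_mul_of_nonneg_right (hb_ge q) (hWnn q))
    have h3 : 0 ≤ α q * E q + (1 - α q) * W q := by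
      have hα1 := (hα q).1
      have hα2 := (hα q).2
      nlinarith [hEnn q, hWnn q]
    exact h1.trans (pow_le_pow_left₀ h3 h2 2)
  have hsumE2 : ∑ q, E q ^ 2 = D ^ 2 := by
    rw [hD2]
    exact Finset.sum_congr rfl fun q _ => hE2 q
  have hsumW2 : ∑ q, W q ^ 2 = ∑ q, ∑ k, u q k ^ 2 :=
    Finset.sum_congr rfl fun q _ => hW2 q
  set SU := Real.sqrt (∑ q, ∑ k, u q k ^ 2) with hSU
  have hSUnn : 0 ≤ SU := Real.sqrt_nonneg _
  have hSU2 : SU ^ 2 = ∑ q, ∑ k, u q k ^ 2 :=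
    Real.sq_sqrt (Finset.sum_nonneg fun q _ => Finset.sum_nonneg fun k _ => sq_nonneg _)
  have hSUle : SU ≤ M * D := by
    have h1 : SU ≤ Real.sqrt (M ^ 2 * D ^ 2) := Real.sqrt_le_sqrt hU
    have h2 : Real.sqrt (M ^ 2 * D ^ 2) = M * D := by
      rw [show M ^ 2 * D ^ 2 = (M * D) ^ 2 by ring]
      exact Real.sqrt_sq (mul_nonneg hM_nn hDnn)
    linarith
  have hcsq := s17_cs E W
  have hEWsum : ∑ q, E q * W q ≤ D * SU := by
    have h1 : Real.sqrt (∑ q, E q ^ 2) = D := by rw [hsumE2]; exact Real.sqrt_sq hDnn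
    have h2 : Real.sqrt (∑ q, W q ^ 2) = SU := by rw [hsumW2]
    calc ∑ q, E q * W q ≤ Real.sqrt (∑ q, E q ^ 2) * Real.sqrt (∑ q, W q ^ 2) := hcsq
      _ = D * SU := by rw [h1, h2]
  have htotal : ∑ q, ∑ k, (pseq (n + 1) q k - pstar q k) ^ 2 ≤ ((a + b * M) * D) ^ 2 := by
    have h1 : ∑ q, ∑ k, (pseq (n + 1) q k - pstar q k) ^ 2
        = ∑ q, ∑ k, (α q * e q k + (1 - α q) * u q k) ^ 2 := by
      refine Finset.sum_congr rfl fun q _ => Finset.sum_congr rfl fun k _ => ?_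
      rw [hstep q k]
    have h2 : ∑ q, ∑ k, (α q * e q k + (1 - α q) * u q k) ^ 2
        ≤ ∑ q, (a * E q + b * W q) ^ 2 := Finset.sum_le_sum fun q _ => hperq q
    have h3 : ∑ q, (a * E q + b * W q) ^ 2
        = a ^ 2 * ∑ q, E q ^ 2 + 2 * (a * b) * ∑ q, E q * W q + b ^ 2 * ∑ q, W q ^ 2 := by
      rw [Finset.mul_sum, Finset.mul_sum, Finset.mul_sum, ← Finset.sum_add_distrib,
        ← Finset.sum_add_distrib]
      exact Finset.sum_congr rfl fun q _ => by ring
    have h4 : a ^ 2 * ∑ q, E q ^ 2 + 2 * (a * b) * ∑ q, E q * W q + b ^ 2 * ∑ q, W q ^ 2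
        ≤ a ^ 2 * D ^ 2 + 2 * (a * b) * (D * (M * D)) + b ^ 2 * (M ^ 2 * D ^ 2) := by
      have hab : 0 ≤ a * b := mul_nonneg ha_nn hb_nn
      have t1 : 2 * (a * b) * ∑ q, E q * W q ≤ 2 * (a * b) * (D * (M * D)) := by
        have : ∑ q, E q * W q ≤ D * (M * D) := by
          calc ∑ q, E q * W q ≤ D * SU := hEWsum
            _ ≤ D * (M * D) := mul_le_mul_of_nonneg_left hSUle hDnn
        nlinarith
      have t2 : b ^ 2 * ∑ q, W q ^ 2 ≤ b ^ 2 * (M ^ 2 * D ^ 2) := by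
        rw [hsumW2]
        exact mul_le_mul_of_nonneg_left hU (sq_nonneg _)
      rw [hsumE2]
      linarith
    calc ∑ q, ∑ k, (pseq (n + 1) q k - pstar q k) ^ 2
        = ∑ q, ∑ k, (α q * e q k + (1 - α q) * u q k) ^ 2 := h1
      _ ≤ ∑ q, (a * E q + b * W q) ^ 2 := h2
      _ = a ^ 2 * ∑ q, E q ^ 2 + 2 * (a * b) * ∑ q, E q * W q + b ^ 2 * ∑ q, W q ^ 2 := h3
      _ ≤ a ^ 2 * D ^ 2 + 2 * (a * b) * (D * (M * D)) + b ^ 2 * (M ^ 2 * D ^ 2) := h4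
      _ = ((a + b * M) * D) ^ 2 := by ring
  have habM : 0 ≤ (a + b * M) * D :=
    mul_nonneg (add_nonneg ha_nn (mul_nonneg hb_nn hM_nn)) hDnn
  calc profDist (pseq (n + 1)) pstar
      = Real.sqrt (∑ q, ∑ k, (pseq (n + 1) q k - pstar q k) ^ 2) := rfl
    _ ≤ Real.sqrt (((a + b * M) * D) ^ 2) := Real.sqrt_le_sqrt htotal
    _ = (a + b * M) * D := Real.sqrt_sq habM

/-- One-step error bound for the smoothed simultaneous IWFA started in
the effective strategy space, in terms of the memory factors and the largest spectral
norm of the matrices `H(k)`. -/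
theorem statement17 {N Q : ℕ} (hN : 1 ≤ N) (hQ : 2 ≤ Q)
    (H : Fin Q → Fin Q → Fin N → ℝ) (Γ : Fin Q → ℝ) (pmax : Fin Q → Fin N → ℝ)
    (hH : ∀ r q k, 0 ≤ H r q k) (hHqq : ∀ q k, 0 < H q q k)
    (hΓ : ∀ q, 0 < Γ q) (hpmax : ∀ q k, 0 ≤ pmax q k)
    (hcap : ∀ q, 1 < (1 / (N : ℝ)) * ∑ k, pmax q k)
    (WF : Fin Q → (Fin Q → Fin N → ℝ) → Fin N → ℝ) (hWF : IsWF H Γ pmax WF)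
    (α : Fin Q → ℝ) (hα : ∀ q, 0 ≤ α q ∧ α q < 1)
    (pstar : Fin Q → Fin N → ℝ) (hNE : IsNE H Γ pmax pstar)
    (pseq : ℕ → Fin Q → Fin N → ℝ)
    (h0 : ∀ q, pseq 0 q ∈ effSet pmax WF q)
    (hrec : ∀ n q, pseq (n + 1) q =
      fun k => α q * pseq n q k + (1 - α q) * WF q (pseq n) k) :
    ∀ n, profDist (pseq (n + 1)) pstar ≤
      (sSup (Set.range α) + (1 - sInf (Set.range α)) *
        sSup (Set.range fun k => specNorm (Hmat H Γ pmax WF k))) *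
      profDist (pseq n) pstar :=
  s17_main hN hQ H Γ pmax hH hHqq hΓ hpmax hcap WF hWF α hα pstar hNE pseq h0 hrec
end
end
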